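/- arXiv:2509.12066 — 4 statements merged into one kernel-verified Lean document; each statement's English description precedes it below -/
import Mathlib

section
/- Let X be a random vector in ℝ^d with X ∈ RV_β(ℝ^d, {b(t)}, μ), and let σ be the angular probability measure on the unit sphere S associated with μ (with respect to a fixed norm ‖·‖), with Θ ∼ σ. Then for every continuous, nonnegative, 1-homogeneous function h : ℝ^d → ℝ₊, one has b(t)·P[h(X) > t] → c_μ·E[h(Θ)^β] as t → ∞, where c_μ := μ({x : ‖x‖ > 1}). -/
open MeasureTheory Filter Topology
open scoped Pointwise

noncomputable section

/-- A set in `ℝ^d` is bounded away from the origin. -/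
def BddAwayZero {d : ℕ} (A : Set (Fin d → ℝ)) : Prop :=
  ∃ ε > 0, ∀ x ∈ A, ε ≤ ‖x‖

/-- A function `l` is slowly varying at infinity. -/
def SlowlyVarying (l : ℝ → ℝ) : Prop :=
  ∀ x > 0, Tendsto (fun t => l (t * x) / l t) atTop (nhds 1)

/-- `X ∈ RV(ℝ^d, {b(t)}, μ)`: the random vector `X` is multivariate regularly varying with
normalization `b` and exponent measure `μ`. -/
def IsMRV {Ω : Type*} [MeasurableSpace Ω] (P : Measure Ω) {d : ℕ}
    (X : Ω → Fin d → ℝ) (b : ℝ → ℝ) (μ : Measure (Fin d → ℝ)) : Prop :=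
  Tendsto b atTop atTop ∧ μ ≠ 0 ∧ μ {0} = 0 ∧
    (∀ A : Set (Fin d → ℝ), MeasurableSet A → BddAwayZero A → μ A ≠ ⊤) ∧
    ∀ A : Set (Fin d → ℝ), MeasurableSet A → BddAwayZero A → μ (frontier A) = 0 →
      Tendsto (fun t : ℝ => b t * (P {ω | X ω ∈ t • A}).toReal) atTop (nhds (μ A).toReal)

/-- `X ∈ RV_β(ℝ^d, {b(t)}, μ)`: multivariate regular variation with tail index `β > 0`,
i.e. `b(t) = ℓ(t)·t^β` with `ℓ` slowly varying. -/
def IsMRVIdx {Ω : Type*} [MeasurableSpace Ω] (P : Measure Ω) {d : ℕ}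
    (X : Ω → Fin d → ℝ) (β : ℝ) (b : ℝ → ℝ) (μ : Measure (Fin d → ℝ)) : Prop :=
  IsMRV P X b μ ∧ 0 < β ∧ ∃ l : ℝ → ℝ, SlowlyVarying l ∧ ∀ t > 0, b t = l t * t ^ β

/-- `σ` is the angular (spectral) probability measure of `X`: it is a probability measure on
the unit sphere, and the conditional law of `X/‖X‖` given `‖X‖ > t` converges weakly to `σ`
as `t → ∞`. -/
def IsAngular {Ω : Type*} [MeasurableSpace Ω] (P : Measure Ω) {d : ℕ}
    (X : Ω → Fin d → ℝ) (σ : Measure (Fin d → ℝ)) : Prop :=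
  IsProbabilityMeasure σ ∧ (∀ᵐ θ ∂σ, ‖θ‖ = 1) ∧
    ∀ f : (Fin d → ℝ) → ℝ, Continuous f → (∃ C, ∀ x, |f x| ≤ C) →
      Tendsto (fun t : ℝ =>
          (∫ ω in {ω | t < ‖X ω‖}, f (‖X ω‖⁻¹ • X ω) ∂P) / (P {ω | t < ‖X ω‖}).toReal)
        atTop (nhds (∫ θ, f θ ∂σ))

/-- Regular variation of the normalization. -/
lemma b_ratio {β : ℝ} {b : ℝ → ℝ} (hβ : 0 < β) (hbtop : Tendsto b atTop atTop)
    (hl : ∃ l : ℝ → ℝ, SlowlyVarying l ∧ ∀ t > 0, b t = l t * t ^ β)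
    {s : ℝ} (hs : 0 < s) :
    Tendsto (fun t => b (t * s) / b t) atTop (nhds (s ^ β)) := by
  obtain ⟨l, hsl, hbl⟩ := hl
  have h1 : Tendsto (fun t => l (t * s) / l t) atTop (nhds 1) := hsl s hs
  have h2 : Tendsto (fun t => (l (t * s) / l t) * s ^ β) atTop (nhds (s ^ β)) := by
    simpa using h1.mul_const (s ^ β)
  refine h2.congr' ?_
  have hbpos : ∀ᶠ t in atTop, 0 < b t := hbtop.eventually_gt_atTop 0
  have hts : Tendsto (fun t : ℝ => t * s) atTop atTop := tendsto_id.atTop_mul_const hs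
  have hbspos : ∀ᶠ t in atTop, 0 < b (t * s) := hts.eventually (hbtop.eventually_gt_atTop 0)
  filter_upwards [hbpos, hbspos, eventually_gt_atTop 0] with t hb hbs ht
  have hts0 : 0 < t * s := mul_pos ht hs
  have htβ : (0:ℝ) < t ^ β := Real.rpow_pos_of_pos ht β
  have hl0 : l t ≠ 0 := by
    intro h0
    rw [hbl t ht, h0, zero_mul] at hb; exact lt_irrefl 0 hb
  rw [hbl t ht, hbl (t * s) hts0, Real.mul_rpow ht.le hs.le]
  field_simp

/-- Two-scale comparison: the exponent measure scales with power `-β`. -/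
lemma two_scale {Ω : Type*} [MeasurableSpace Ω] {P : Measure Ω} {d : ℕ}
    {X : Ω → Fin d → ℝ} {β : ℝ} {b : ℝ → ℝ} {μ : Measure (Fin d → ℝ)}
    (hX : IsMRVIdx P X β b μ) {A B : Set (Fin d → ℝ)} {s : ℝ} (hs : 0 < s)
    (hB : B = s • A)
    (hAm : MeasurableSet A) (hAb : BddAwayZero A) (hAf : μ (frontier A) = 0)
    (hBm : MeasurableSet B) (hBb : BddAwayZero B) (hBf : μ (frontier B) = 0) :
    (μ B).toReal = s ^ (-β) * (μ A).toReal := by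
  obtain ⟨⟨hbtop, hμ0, hμz, hfin, hconv⟩, hβ, hl⟩ := hX
  have T1 : Tendsto (fun t : ℝ => b t * (P {ω | X ω ∈ t • B}).toReal) atTop
      (nhds (μ B).toReal) := hconv B hBm hBb hBf
  have hts : Tendsto (fun t : ℝ => t * s) atTop atTop := tendsto_id.atTop_mul_const hs
  have T2' : Tendsto (fun t : ℝ => b (t * s) * (P {ω | X ω ∈ (t * s) • A}).toReal) atTop
      (nhds (μ A).toReal) := (hconv A hAm hAb hAf).comp hts
  have hBA : ∀ t : ℝ, t • B = (t * s) • A := by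
    intro t; rw [hB, smul_smul]
  have T2'' : Tendsto (fun t : ℝ => b (t * s) * (P {ω | X ω ∈ t • B}).toReal) atTop
      (nhds (μ A).toReal) := by
    refine T2'.congr fun t => ?_
    rw [hBA t]
  have Tr : Tendsto (fun t : ℝ => b t / b (t * s)) atTop (nhds ((s ^ β)⁻¹)) := by
    have := (b_ratio hβ hbtop hl hs).inv₀ (ne_of_gt (Real.rpow_pos_of_pos hs β))
    refine this.congr fun t => ?_
    rw [inv_div]
  have T2 : Tendsto (fun t : ℝ => (b t / b (t * s)) * (b (t * s) * (P {ω | X ω ∈ t • B}).toReal))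
      atTop (nhds ((s ^ β)⁻¹ * (μ A).toReal)) := Tr.mul T2''
  have heq : ∀ᶠ t in atTop,
      (b t / b (t * s)) * (b (t * s) * (P {ω | X ω ∈ t • B}).toReal)
        = b t * (P {ω | X ω ∈ t • B}).toReal := by
    have hbspos : ∀ᶠ t in atTop, 0 < b (t * s) := hts.eventually (hbtop.eventually_gt_atTop 0)
    filter_upwards [hbspos] with t hbs
    field_simp
  have := tendsto_nhds_unique (T2.congr' heq) T1
  rw [Real.rpow_neg hs.le, this]


/-- In any interval `(a,c)` with `0 ≤ a` there is a point of a co-countable subset of `(0,∞)`. -/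
lemma good_dense {S : Set ℝ} (hSc : (Set.Ioi 0 \ S).Countable) {a c : ℝ}
    (ha : 0 ≤ a) (hac : a < c) : ∃ x ∈ S, a < x ∧ x < c := by
  have hd : Dense ((Set.Ioi 0 \ S) : Set ℝ)ᶜ := hSc.dense_compl ℝ
  have hne : (Set.Ioo a c).Nonempty := Set.nonempty_Ioo.2 hac
  obtain ⟨x, hx⟩ := dense_iff_inter_open.mp hd (Set.Ioo a c) isOpen_Ioo hne
  have hx0 : x ∈ Set.Ioi (0:ℝ) := lt_of_le_of_lt ha hx.1.1
  have hxS : x ∈ S := by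
    by_contra hns
    exact hx.2 ⟨hx0, hns⟩
  exact ⟨x, hxS, hx.1.1, hx.1.2⟩

lemma seq_approx_above {S : Set ℝ} (hSc : (Set.Ioi 0 \ S).Countable) {u : ℝ} (hu : 0 < u) :
    ∃ x : ℕ → ℝ, (∀ n, x n ∈ S) ∧ (∀ n, u < x n) ∧ Tendsto x atTop (nhds u) := by
  have h : ∀ n : ℕ, ∃ y ∈ S, u < y ∧ y < u + 1 / (n + 1) := by
    intro n
    refine good_dense hSc hu.le ?_
    have : (0:ℝ) < 1 / ((n:ℝ) + 1) := by positivity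
    linarith
  choose x hxS hx1 hx2 using h
  refine ⟨x, hxS, hx1, ?_⟩
  have hup : Tendsto (fun n : ℕ => u + 1 / ((n:ℝ) + 1)) atTop (nhds u) := by
    have : Tendsto (fun n : ℕ => 1 / ((n:ℝ) + 1)) atTop (nhds 0) :=
      tendsto_one_div_add_atTop_nhds_zero_nat
    simpa using tendsto_const_nhds.add this
  exact tendsto_of_tendsto_of_tendsto_of_le_of_le tendsto_const_nhds hup
    (fun n => (hx1 n).le) (fun n => (hx2 n).le)

lemma seq_approx_below {S : Set ℝ} (hSc : (Set.Ioi 0 \ S).Countable) {u : ℝ} (hu : 0 < u) :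
    ∃ x : ℕ → ℝ, (∀ n, x n ∈ S) ∧ (∀ n, 0 < x n ∧ x n < u) ∧ Tendsto x atTop (nhds u) := by
  have hd2 : ∀ n : ℕ, u / ((n:ℝ) + 2) < u := by
    intro n
    refine div_lt_self hu ?_
    have := Nat.cast_nonneg (α := ℝ) n
    linarith
  have h : ∀ n : ℕ, ∃ y ∈ S, u - u / (n + 2) < y ∧ y < u := by
    intro n
    refine good_dense hSc (by linarith [hd2 n]) (by linarith [hd2 n, (by positivity : (0:ℝ) < u / ((n:ℝ)+2))])
  choose x hxS hx1 hx2 using h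
  refine ⟨x, hxS, fun n => ⟨by linarith [hx1 n, hd2 n], hx2 n⟩, ?_⟩
  have hlo : Tendsto (fun n : ℕ => u - u / ((n:ℝ) + 2)) atTop (nhds u) := by
    have h2 : Tendsto (fun n : ℕ => ((n:ℝ) + 2)) atTop atTop :=
      tendsto_atTop_add_const_right atTop 2 tendsto_natCast_atTop_atTop
    have : Tendsto (fun n : ℕ => u / ((n:ℝ) + 2)) atTop (nhds 0) :=
      Tendsto.div_atTop tendsto_const_nhds h2
    simpa using tendsto_const_nhds.sub this
  exact tendsto_of_tendsto_of_tendsto_of_le_of_le hlo tendsto_const_nhds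
    (fun n => (hx1 n).le) (fun n => (hx2 n).le)

/-- Interpolation: an antitone function satisfying a power relation on a co-countable set
satisfies it everywhere. -/
lemma interp_power {β : ℝ} {F : ℝ → ℝ} (hF : AntitoneOn F (Set.Ioi 0)) {S : Set ℝ}
    (hS : S ⊆ Set.Ioi 0) (hSc : (Set.Ioi 0 \ S).Countable)
    (hrel : ∀ r ∈ S, ∀ v ∈ S, F v = (v / r) ^ (-β) * F r)
    {r : ℝ} (hr : r ∈ S) {u : ℝ} (hu : 0 < u) : F u = (u / r) ^ (-β) * F r := by
  have hr0 : 0 < r := hS hr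
  obtain ⟨x, hxS, hx1, hx2⟩ := seq_approx_above hSc hu
  obtain ⟨y, hyS, hy1, hy2⟩ := seq_approx_below hSc hu
  have hcont : ∀ z : ℕ → ℝ, Tendsto z atTop (nhds u) →
      Tendsto (fun n => (z n / r) ^ (-β) * F r) atTop (nhds ((u / r) ^ (-β) * F r)) := by
    intro z hz
    have h1 : Tendsto (fun n => z n / r) atTop (nhds (u / r)) := hz.div_const r
    have h2 : Tendsto (fun n => (z n / r) ^ (-β)) atTop (nhds ((u / r) ^ (-β))) :=
      h1.rpow_const (Or.inl (ne_of_gt (div_pos hu hr0)))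
    exact h2.mul_const (F r)
  have hub : F u ≤ (u / r) ^ (-β) * F r := by
    refine ge_of_tendsto (hcont y hy2) (Filter.Eventually.of_forall fun n => ?_)
    rw [← hrel r hr (y n) (hyS n)]
    exact hF (hS (hyS n)) hu (hy1 n).2.le
  have hlb : (u / r) ^ (-β) * F r ≤ F u := by
    refine le_of_tendsto (hcont x hx2) (Filter.Eventually.of_forall fun n => ?_)
    rw [← hrel r hr (x n) (hxS n)]
    exact hF hu (hS (hxS n)) (hx1 n).le
  linarith

/-- Power-law for the tail of a scaled family of sets. -/
lemma family_power {Ω : Type*} [MeasurableSpace Ω] {P : Measure Ω} {d : ℕ}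
    {X : Ω → Fin d → ℝ} {β : ℝ} {b : ℝ → ℝ} {μ : Measure (Fin d → ℝ)}
    (hX : IsMRVIdx P X β b μ) (S : ℝ → Set (Fin d → ℝ))
    (hscale : ∀ r > 0, S r = r • S 1)
    (hmeas : ∀ r > 0, MeasurableSet (S r))
    (hbdd : ∀ r > 0, BddAwayZero (S r))
    (hanti : ∀ ⦃r v : ℝ⦄, 0 < r → r ≤ v → S v ⊆ S r)
    {G : Set ℝ} (hG : G ⊆ Set.Ioi 0) (hGc : (Set.Ioi 0 \ G).Countable)
    (hfr : ∀ r ∈ G, μ (frontier (S r)) = 0) :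
    ∀ u > 0, (μ (S u)).toReal = (μ (S 1)).toReal * u ^ (-β) := by
  have hfin : ∀ r > 0, μ (S r) ≠ ⊤ := fun r hr => hX.1.2.2.2.1 _ (hmeas r hr) (hbdd r hr)
  set F : ℝ → ℝ := fun r => (μ (S r)).toReal with hF
  have hFanti : AntitoneOn F (Set.Ioi 0) := by
    intro r hr v hv hrv
    exact ENNReal.toReal_mono (hfin r hr) (measure_mono (hanti hr hrv))
  have hrel : ∀ r ∈ G, ∀ v ∈ G, F v = (v / r) ^ (-β) * F r := by
    intro r hr v hv
    have hr0 : (0:ℝ) < r := hG hr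
    have hv0 : (0:ℝ) < v := hG hv
    refine two_scale hX (div_pos hv0 hr0) ?_ (hmeas r hr0) (hbdd r hr0) (hfr r hr)
      (hmeas v hv0) (hbdd v hv0) (hfr v hv)
    rw [hscale v hv0, hscale r hr0, smul_smul]
    congr 1
    field_simp
  obtain ⟨g, hgG, -, -⟩ := good_dense hGc (le_refl 0) one_pos
  have hg0 : (0:ℝ) < g := hG hgG
  intro u hu
  have h1 : F 1 = (1 / g) ^ (-β) * F g := interp_power hFanti hG hGc hrel hgG one_pos
  have hu' : F u = (u / g) ^ (-β) * F g := interp_power hFanti hG hGc hrel hgG hu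
  have hsplit : (u / g : ℝ) ^ (-β) = u ^ (-β) * (1 / g) ^ (-β) := by
    rw [div_eq_mul_one_div, Real.mul_rpow hu.le (by positivity)]
  show F u = F 1 * u ^ (-β)
  rw [hu', hsplit, h1]
  ring

/-- A set squeezed between all the strict layers of the family is null. -/
lemma squeeze_null {d : ℕ} {μ : Measure (Fin d → ℝ)} {β K : ℝ}
    (S : ℝ → Set (Fin d → ℝ))
    (hmeas : ∀ r > 0, MeasurableSet (S r))
    (hfin : ∀ r > 0, μ (S r) ≠ ⊤)
    (hanti : ∀ ⦃r v : ℝ⦄, 0 < r → r ≤ v → S v ⊆ S r)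
    (htail : ∀ u > 0, (μ (S u)).toReal = K * u ^ (-β))
    {Z : Set (Fin d → ℝ)} {r : ℝ} (hr : 0 < r)
    (hZ : ∀ r' r'' : ℝ, 0 < r' → r' < r → r < r'' → Z ⊆ S r' \ S r'') : μ Z = 0 := by
  set a : ℕ → ℝ := fun n => r - r / (n + 2) with ha
  set c : ℕ → ℝ := fun n => r + r / (n + 2) with hc
  have hd2 : ∀ n : ℕ, 0 < r / ((n:ℝ) + 2) ∧ r / ((n:ℝ) + 2) < r := by
    intro n
    constructor
    · positivity
    · refine div_lt_self hr ?_
      have := Nat.cast_nonneg (α := ℝ) n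
      linarith
  have han : ∀ n, 0 < a n ∧ a n < r := fun n => ⟨by simp only [ha]; linarith [hd2 n],
    by simp only [ha]; linarith [hd2 n]⟩
  have hcn : ∀ n, r < c n := fun n => by simp only [hc]; linarith [hd2 n]
  have hsub : ∀ n, Z ⊆ S (a n) \ S (c n) := fun n => hZ _ _ (han n).1 (han n).2 (hcn n)
  have hμZfin : μ Z ≠ ⊤ :=
    ne_top_of_le_ne_top (hfin (a 0) (han 0).1)
      (measure_mono ((hsub 0).trans Set.diff_subset))
  have hZle : ∀ n, (μ Z).toReal ≤ K * (a n) ^ (-β) - K * (c n) ^ (-β) := by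
    intro n
    have h1 : (μ Z).toReal ≤ (μ (S (a n) \ S (c n))).toReal := by
      refine ENNReal.toReal_mono ?_ (measure_mono (hsub n))
      exact ne_top_of_le_ne_top (hfin (a n) (han n).1) (measure_mono Set.diff_subset)
    have hss : S (c n) ⊆ S (a n) := hanti (han n).1 (le_of_lt ((han n).2.trans (hcn n)))
    have h2 : μ (S (a n) \ S (c n)) = μ (S (a n)) - μ (S (c n)) :=
      measure_diff hss (hmeas (c n) (lt_trans hr (hcn n))).nullMeasurableSet
        (hfin (c n) (lt_trans hr (hcn n)))
    have h3 : (μ (S (a n) \ S (c n))).toReal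
        = (μ (S (a n))).toReal - (μ (S (c n))).toReal := by
      rw [h2, ENNReal.toReal_sub_of_le (measure_mono hss) (hfin (a n) (han n).1)]
    rw [h3, htail (a n) (han n).1, htail (c n) (lt_trans hr (hcn n))] at h1
    exact h1
  have hta : Tendsto a atTop (nhds r) := by
    have h2 : Tendsto (fun n : ℕ => ((n:ℝ) + 2)) atTop atTop :=
      tendsto_atTop_add_const_right atTop 2 tendsto_natCast_atTop_atTop
    have : Tendsto (fun n : ℕ => r / ((n:ℝ) + 2)) atTop (nhds 0) :=
      Tendsto.div_atTop tendsto_const_nhds h2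
    simpa [ha] using tendsto_const_nhds.sub this
  have htc : Tendsto c atTop (nhds r) := by
    have h2 : Tendsto (fun n : ℕ => ((n:ℝ) + 2)) atTop atTop :=
      tendsto_atTop_add_const_right atTop 2 tendsto_natCast_atTop_atTop
    have : Tendsto (fun n : ℕ => r / ((n:ℝ) + 2)) atTop (nhds 0) :=
      Tendsto.div_atTop tendsto_const_nhds h2
    simpa [hc] using tendsto_const_nhds.add this
  have hlim : Tendsto (fun n => K * (a n) ^ (-β) - K * (c n) ^ (-β)) atTop (nhds 0) := by
    have h1 : Tendsto (fun n => K * (a n) ^ (-β)) atTop (nhds (K * r ^ (-β))) :=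
      ((hta.rpow_const (Or.inl (ne_of_gt hr))).const_mul K)
    have h2 : Tendsto (fun n => K * (c n) ^ (-β)) atTop (nhds (K * r ^ (-β))) :=
      ((htc.rpow_const (Or.inl (ne_of_gt hr))).const_mul K)
    simpa using h1.sub h2
  have hfinal : (μ Z).toReal ≤ 0 := ge_of_tendsto hlim (Filter.Eventually.of_forall hZle)
  have : (μ Z).toReal = 0 := le_antisymm hfinal ENNReal.toReal_nonneg
  rcases (ENNReal.toReal_eq_zero_iff _).mp this with h | h
  · exact h
  · exact absurd h hμZfin

/-- Countably many strictly positive level values of a measurable function carry positive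
`μ`-measure away from the origin. -/
lemma countable_level {d : ℕ} (μ : Measure (Fin d → ℝ))
    (hfin : ∀ A : Set (Fin d → ℝ), MeasurableSet A → BddAwayZero A → μ A ≠ ⊤)
    (g : (Fin d → ℝ) → ℝ) (hg : Measurable g) :
    {r : ℝ | ∃ n : ℕ, 0 < μ {x | g x = r ∧ 1 / (n + 1) < ‖x‖}}.Countable := by
  have : {r : ℝ | ∃ n : ℕ, 0 < μ {x | g x = r ∧ 1 / (n + 1) < ‖x‖}}
      = ⋃ n : ℕ, {r : ℝ | 0 < μ {x | g x = r ∧ 1 / (n + 1) < ‖x‖}} := by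
    ext r; simp [Set.mem_iUnion]
  rw [this]
  refine Set.countable_iUnion fun n => ?_
  set As : ℝ → Set (Fin d → ℝ) := fun r => {x | g x = r ∧ 1 / (n + 1) < ‖x‖} with hAs
  have hmeas : ∀ r, MeasurableSet (As r) := by
    intro r
    exact (hg (measurableSet_singleton r)).inter
      (measurableSet_lt measurable_const measurable_norm)
  have hdisj : Pairwise (Function.onFun Disjoint As) := by
    intro r r' hrr'
    refine Set.disjoint_left.2 fun x hx hx' => ?_
    exact hrr' (hx.1.symm.trans hx'.1)
  have hUn : μ (⋃ r, As r) ≠ ⊤ := by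
    refine ne_top_of_le_ne_top (hfin {x | 1 / ((n:ℝ) + 1) < ‖x‖} ?_ ?_) (measure_mono ?_)
    · exact measurableSet_lt measurable_const measurable_norm
    · exact ⟨1 / ((n:ℝ) + 1), by positivity, fun x hx => le_of_lt hx⟩
    · exact Set.iUnion_subset fun r x hx => hx.2
  exact Measure.countable_meas_pos_of_disjoint_of_meas_iUnion_ne_top μ hmeas hdisj hUn

lemma level_null {d : ℕ} {μ : Measure (Fin d → ℝ)} {g : (Fin d → ℝ) → ℝ} {r : ℝ}
    (hr : ¬ ∃ n : ℕ, 0 < μ {x | g x = r ∧ 1 / (n + 1) < ‖x‖})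
    {ε : ℝ} (hε : 0 < ε) : μ {x | g x = r ∧ ε ≤ ‖x‖} = 0 := by
  push_neg at hr
  obtain ⟨n, hn⟩ := exists_nat_one_div_lt hε
  have hsub : {x : Fin d → ℝ | g x = r ∧ ε ≤ ‖x‖} ⊆ {x | g x = r ∧ 1 / (n + 1) < ‖x‖} :=
    fun x hx => ⟨hx.1, lt_of_lt_of_le hn hx.2⟩
  exact le_antisymm (le_trans (measure_mono hsub) (hr n)) (zero_le)

section Scaling

variable {d : ℕ} {r : ℝ}

lemma smul_norm_set (hr : 0 < r) : r • {x : Fin d → ℝ | 1 < ‖x‖} = {x | r < ‖x‖} := by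
  ext x
  rw [Set.mem_smul_set_iff_inv_smul_mem₀ (ne_of_gt hr)]
  simp only [Set.mem_setOf_eq, norm_smul, norm_inv, Real.norm_eq_abs, abs_of_pos hr]
  rw [inv_mul_eq_div, one_lt_div hr]

lemma smul_h_set {h : (Fin d → ℝ) → ℝ} (hhom : ∀ c : ℝ, 0 < c → ∀ x, h (c • x) = c * h x)
    (hr : 0 < r) : r • {x : Fin d → ℝ | 1 < h x} = {x | r < h x} := by
  ext x
  rw [Set.mem_smul_set_iff_inv_smul_mem₀ (ne_of_gt hr)]
  simp only [Set.mem_setOf_eq, hhom r⁻¹ (inv_pos.2 hr) x]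
  rw [inv_mul_eq_div, one_lt_div hr]

lemma smul_cone_set {h : (Fin d → ℝ) → ℝ} (hhom : ∀ c : ℝ, 0 < c → ∀ x, h (c • x) = c * h x)
    {u : ℝ} (hr : 0 < r) :
    r • {x : Fin d → ℝ | 1 < ‖x‖ ∧ u * ‖x‖ < h x} = {x | r < ‖x‖ ∧ u * ‖x‖ < h x} := by
  ext x
  rw [Set.mem_smul_set_iff_inv_smul_mem₀ (ne_of_gt hr)]
  simp only [Set.mem_setOf_eq, norm_smul, norm_inv, Real.norm_eq_abs, abs_of_pos hr,
    hhom r⁻¹ (inv_pos.2 hr) x]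
  constructor
  · rintro ⟨h1, h2⟩
    rw [inv_mul_eq_div, one_lt_div hr] at h1
    refine ⟨h1, ?_⟩
    have := (mul_lt_mul_iff_right₀ (inv_pos.2 hr)).1 (by linarith [h2] : r⁻¹ * (u * ‖x‖) < r⁻¹ * h x)
    · exact this
  · rintro ⟨h1, h2⟩
    constructor
    · rw [inv_mul_eq_div, one_lt_div hr]; exact h1
    · calc u * (r⁻¹ * ‖x‖) = r⁻¹ * (u * ‖x‖) := by ring
        _ < r⁻¹ * h x := by exact (mul_lt_mul_iff_right₀ (inv_pos.2 hr)).2 h2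

end Scaling

/-- Tail behaviour of the exponent measure in the norm variable. -/
lemma norm_tail {Ω : Type*} [MeasurableSpace Ω] {P : Measure Ω} {d : ℕ}
    {X : Ω → Fin d → ℝ} {β : ℝ} {b : ℝ → ℝ} {μ : Measure (Fin d → ℝ)}
    (hX : IsMRVIdx P X β b μ) :
    0 < (μ {x : Fin d → ℝ | 1 < ‖x‖}).toReal ∧
    (∀ r > 0, (μ {x : Fin d → ℝ | r < ‖x‖}).toReal
      = (μ {x : Fin d → ℝ | 1 < ‖x‖}).toReal * r ^ (-β)) ∧
    (∀ r > 0, μ {x : Fin d → ℝ | ‖x‖ = r} = 0) ∧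
    Tendsto (fun t : ℝ => b t * (P {ω | t < ‖X ω‖}).toReal) atTop
      (nhds (μ {x : Fin d → ℝ | 1 < ‖x‖}).toReal) := by
  obtain ⟨⟨hbtop, hμ0, hμz, hfin, hconv⟩, hβ, hl⟩ := hX
  set SN : ℝ → Set (Fin d → ℝ) := fun r => {x | r < ‖x‖} with hSN
  have hmeas : ∀ r > (0:ℝ), MeasurableSet (SN r) :=
    fun r _ => measurableSet_lt measurable_const measurable_norm
  have hbdd : ∀ r > (0:ℝ), BddAwayZero (SN r) :=
    fun r hr => ⟨r, hr, fun x hx => le_of_lt hx⟩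
  have hanti : ∀ ⦃r v : ℝ⦄, 0 < r → r ≤ v → SN v ⊆ SN r :=
    fun r v _ hrv x hx => lt_of_le_of_lt hrv hx
  have hscale : ∀ r > (0:ℝ), SN r = r • SN 1 := fun r hr => (smul_norm_set hr).symm
  have hopen : ∀ r : ℝ, IsOpen (SN r) := fun r => isOpen_lt continuous_const continuous_norm
  have hfrsub : ∀ r : ℝ, frontier (SN r) ⊆ {x | ‖x‖ = r} := by
    intro r x hx
    rw [(hopen r).frontier_eq] at hx
    have h1 : x ∈ closure (SN r) := hx.1
    have h2 : r ≤ ‖x‖ :=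
      closure_minimal (fun y hy => le_of_lt hy)
        (isClosed_le continuous_const continuous_norm) h1
    exact le_antisymm (not_lt.1 hx.2) h2
  set B := {r : ℝ | ∃ n : ℕ, 0 < μ {x | ‖x‖ = r ∧ 1 / (n + 1) < ‖x‖}} with hB
  have hBc : B.Countable := countable_level μ hfin (fun x => ‖x‖) measurable_norm
  set G := Set.Ioi (0:ℝ) \ B with hG
  have hGsub : G ⊆ Set.Ioi 0 := Set.diff_subset
  have hGc : (Set.Ioi 0 \ G).Countable := by
    refine hBc.mono fun r hr => ?_
    rcases hr with ⟨h1, h2⟩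
    by_contra hrB
    exact h2 ⟨h1, hrB⟩
  have hfr : ∀ r ∈ G, μ (frontier (SN r)) = 0 := by
    rintro r ⟨hr0, hrB⟩
    refine measure_mono_null (hfrsub r) ?_
    have : {x : Fin d → ℝ | ‖x‖ = r} = {x | ‖x‖ = r ∧ r ≤ ‖x‖} := by
      ext x; exact ⟨fun hx => ⟨hx, le_of_eq hx.symm⟩, fun hx => hx.1⟩
    rw [this]
    exact level_null hrB hr0
  have hXfull : IsMRVIdx P X β b μ := ⟨⟨hbtop, hμ0, hμz, hfin, hconv⟩, hβ, hl⟩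
  have htail := family_power hXfull SN hscale hmeas hbdd hanti hGsub hGc hfr
  have hfin' : ∀ r > (0:ℝ), μ (SN r) ≠ ⊤ := fun r hr => hfin _ (hmeas r hr) (hbdd r hr)
  have hlevel : ∀ r > (0:ℝ), μ {x : Fin d → ℝ | ‖x‖ = r} = 0 := by
    intro r hr
    refine squeeze_null SN hmeas hfin' hanti htail hr ?_
    intro r' r'' hr' hr'r hrr''
    intro x hx
    refine ⟨lt_of_lt_of_le hr'r (le_of_eq hx.symm), fun hx'' => ?_⟩
    rw [Set.mem_setOf_eq] at hx hx''
    rw [hx] at hx''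
    exact absurd hx'' (not_lt.2 (le_of_lt hrr''))
  have hfr_all : ∀ r > (0:ℝ), μ (frontier (SN r)) = 0 :=
    fun r hr => measure_mono_null (hfrsub r) (hlevel r hr)
  have hc0pos : 0 < (μ (SN 1)).toReal := by
    rcases (lt_or_eq_of_le (ENNReal.toReal_nonneg (a := μ (SN 1)))) with h | h
    · exact h
    have hz : ∀ r > (0:ℝ), μ (SN r) = 0 := by
      intro r hr
      have h1 := htail r hr
      rw [← h, zero_mul] at h1
      rcases (ENNReal.toReal_eq_zero_iff _).mp h1 with h2 | h2
      · exact h2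
      · exact absurd h2 (hfin' r hr)
    have hcompl : ({(0 : Fin d → ℝ)}ᶜ : Set (Fin d → ℝ)) = ⋃ n : ℕ, SN (1 / (n + 1)) := by
      ext x
      simp only [Set.mem_compl_iff, Set.mem_singleton_iff, Set.mem_iUnion, hSN,
        Set.mem_setOf_eq]
      constructor
      · intro hx
        have : 0 < ‖x‖ := norm_pos_iff.2 hx
        exact exists_nat_one_div_lt this
      · rintro ⟨n, hn⟩
        intro h0
        rw [h0, norm_zero] at hn
        have : (0:ℝ) < 1 / ((n:ℝ) + 1) := by positivity
        linarith
    have hcompl0 : μ ({(0 : Fin d → ℝ)}ᶜ) = 0 := by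
      rw [hcompl]
      exact measure_iUnion_null fun n => hz _ (by positivity)
    have huniv : μ Set.univ = 0 := by
      have h1 : μ Set.univ ≤ μ {(0 : Fin d → ℝ)} + μ ({(0 : Fin d → ℝ)}ᶜ) := by
        rw [← Set.union_compl_self {(0 : Fin d → ℝ)}]
        exact measure_union_le _ _
      rw [hμz, hcompl0] at h1
      simpa using h1
    exact absurd (Measure.measure_univ_eq_zero.mp huniv) hμ0
  refine ⟨hc0pos, htail, hlevel, ?_⟩
  have hT := hconv (SN 1) (hmeas 1 one_pos) (hbdd 1 one_pos) (hfr_all 1 one_pos)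
  refine hT.congr' ?_
  filter_upwards [eventually_gt_atTop (0:ℝ)] with t ht
  have hset : {ω | X ω ∈ t • SN 1} = {ω | t < ‖X ω‖} := by
    ext ω
    rw [Set.mem_setOf_eq, Set.mem_setOf_eq, ← hscale t ht]
    rfl
  rw [hset]

/-- Tail behaviour in the `h` variable: convergence to `μ {h > 1}`. -/
lemma h_tail {Ω : Type*} [MeasurableSpace Ω] {P : Measure Ω} {d : ℕ}
    {X : Ω → Fin d → ℝ} {β : ℝ} {b : ℝ → ℝ} {μ : Measure (Fin d → ℝ)}
    (hX : IsMRVIdx P X β b μ) {h : (Fin d → ℝ) → ℝ} (hcont : Continuous h)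
    (hhom : ∀ c : ℝ, 0 < c → ∀ x, h (c • x) = c * h x)
    {C : ℝ} (hC : 0 < C) (hCb : ∀ x, h x ≤ C * ‖x‖) :
    Tendsto (fun t : ℝ => b t * (P {ω | t < h (X ω)}).toReal) atTop
      (nhds (μ {x : Fin d → ℝ | 1 < h x}).toReal) := by
  obtain ⟨⟨hbtop, hμ0, hμz, hfin, hconv⟩, hβ, hl⟩ := hX
  set SH : ℝ → Set (Fin d → ℝ) := fun r => {x | r < h x} with hSH
  have hmeas : ∀ r > (0:ℝ), MeasurableSet (SH r) :=
    fun r _ => measurableSet_lt measurable_const hcont.measurable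
  have hbdd : ∀ r > (0:ℝ), BddAwayZero (SH r) := by
    intro r hr
    refine ⟨r / C, by positivity, fun x hx => ?_⟩
    rw [div_le_iff₀ hC, mul_comm]
    exact le_of_lt (lt_of_lt_of_le hx (hCb x))
  have hanti : ∀ ⦃r v : ℝ⦄, 0 < r → r ≤ v → SH v ⊆ SH r :=
    fun r v _ hrv x hx => lt_of_le_of_lt hrv hx
  have hscale : ∀ r > (0:ℝ), SH r = r • SH 1 := fun r hr => (smul_h_set hhom hr).symm
  have hopen : ∀ r : ℝ, IsOpen (SH r) := fun r => isOpen_lt continuous_const hcont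
  have hfrsub : ∀ r : ℝ, frontier (SH r) ⊆ {x | h x = r} := by
    intro r x hx
    rw [(hopen r).frontier_eq] at hx
    have h2 : r ≤ h x :=
      closure_minimal (fun y hy => le_of_lt hy) (isClosed_le continuous_const hcont) hx.1
    exact le_antisymm (not_lt.1 hx.2) h2
  set B := {r : ℝ | ∃ n : ℕ, 0 < μ {x | h x = r ∧ 1 / (n + 1) < ‖x‖}} with hB
  have hBc : B.Countable := countable_level μ hfin h hcont.measurable
  set G := Set.Ioi (0:ℝ) \ B with hG
  have hGsub : G ⊆ Set.Ioi 0 := Set.diff_subset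
  have hGc : (Set.Ioi 0 \ G).Countable := by
    refine hBc.mono fun r hr => ?_
    rcases hr with ⟨h1, h2⟩
    by_contra hrB
    exact h2 ⟨h1, hrB⟩
  have hlevelEq : ∀ r > (0:ℝ), {x : Fin d → ℝ | h x = r}
      = {x | h x = r ∧ r / C ≤ ‖x‖} := by
    intro r hr
    ext x
    refine ⟨fun hx => ⟨hx, ?_⟩, fun hx => hx.1⟩
    rw [div_le_iff₀ hC, mul_comm]
    rw [Set.mem_setOf_eq] at hx
    rw [← hx]
    exact hCb x
  have hfr : ∀ r ∈ G, μ (frontier (SH r)) = 0 := by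
    rintro r ⟨hr0, hrB⟩
    refine measure_mono_null (hfrsub r) ?_
    rw [hlevelEq r hr0]
    exact level_null hrB (div_pos hr0 hC)
  have hXfull : IsMRVIdx P X β b μ := ⟨⟨hbtop, hμ0, hμz, hfin, hconv⟩, hβ, hl⟩
  have htail := family_power hXfull SH hscale hmeas hbdd hanti hGsub hGc hfr
  have hfin' : ∀ r > (0:ℝ), μ (SH r) ≠ ⊤ := fun r hr => hfin _ (hmeas r hr) (hbdd r hr)
  have hlevel : ∀ r > (0:ℝ), μ {x : Fin d → ℝ | h x = r} = 0 := by
    intro r hr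
    refine squeeze_null SH hmeas hfin' hanti htail hr ?_
    intro r' r'' hr' hr'r hrr'' x hx
    rw [Set.mem_setOf_eq] at hx
    exact ⟨by rw [Set.mem_setOf_eq, hx]; exact hr'r, by
      rw [Set.mem_setOf_eq, hx]; exact not_lt.2 (le_of_lt hrr'')⟩
  have hfr1 : μ (frontier (SH 1)) = 0 :=
    measure_mono_null (hfrsub 1) (hlevel 1 one_pos)
  have hT := hconv (SH 1) (hmeas 1 one_pos) (hbdd 1 one_pos) hfr1
  refine hT.congr' ?_
  filter_upwards [eventually_gt_atTop (0:ℝ)] with t ht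
  have hset : {ω | X ω ∈ t • SH 1} = {ω | t < h (X ω)} := by
    ext ω
    rw [Set.mem_setOf_eq, Set.mem_setOf_eq, ← hscale t ht]
    rfl
  rw [hset]

/-- Tail behaviour of the cone sets, for good angular levels `u`. -/
lemma cone_tail {Ω : Type*} [MeasurableSpace Ω] {P : Measure Ω} {d : ℕ}
    {X : Ω → Fin d → ℝ} {β : ℝ} {b : ℝ → ℝ} {μ : Measure (Fin d → ℝ)}
    (hX : IsMRVIdx P X β b μ) {h : (Fin d → ℝ) → ℝ} (hcont : Continuous h)
    (hhom : ∀ c : ℝ, 0 < c → ∀ x, h (c • x) = c * h x)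
    (hnormlevel : ∀ r > (0:ℝ), μ {x : Fin d → ℝ | ‖x‖ = r} = 0)
    {u : ℝ}
    (hlev : ∀ ε > (0:ℝ), μ {x : Fin d → ℝ | h x = u * ‖x‖ ∧ ε ≤ ‖x‖} = 0) :
    (∀ r > (0:ℝ), (μ {x : Fin d → ℝ | r < ‖x‖ ∧ u * ‖x‖ < h x}).toReal
      = (μ {x : Fin d → ℝ | 1 < ‖x‖ ∧ u * ‖x‖ < h x}).toReal * r ^ (-β)) ∧
    Tendsto (fun t : ℝ =>
        b t * (P {ω | X ω ∈ t • {x : Fin d → ℝ | 1 < ‖x‖ ∧ u * ‖x‖ < h x}}).toReal) atTop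
      (nhds (μ {x : Fin d → ℝ | 1 < ‖x‖ ∧ u * ‖x‖ < h x}).toReal) := by
  obtain ⟨⟨hbtop, hμ0, hμz, hfin, hconv⟩, hβ, hl⟩ := hX
  set T : ℝ → Set (Fin d → ℝ) := fun r => {x | r < ‖x‖ ∧ u * ‖x‖ < h x} with hT
  have hmeas : ∀ r > (0:ℝ), MeasurableSet (T r) := by
    intro r _
    exact (measurableSet_lt measurable_const measurable_norm).inter
      (measurableSet_lt (measurable_const.mul measurable_norm) hcont.measurable)
  have hbdd : ∀ r > (0:ℝ), BddAwayZero (T r) :=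
    fun r hr => ⟨r, hr, fun x hx => le_of_lt hx.1⟩
  have hanti : ∀ ⦃r v : ℝ⦄, 0 < r → r ≤ v → T v ⊆ T r :=
    fun r v _ hrv x hx => ⟨lt_of_le_of_lt hrv hx.1, hx.2⟩
  have hscale : ∀ r > (0:ℝ), T r = r • T 1 := fun r hr => (smul_cone_set hhom hr).symm
  have hopen : ∀ r : ℝ, IsOpen (T r) := fun r =>
    (isOpen_lt continuous_const continuous_norm).inter
      (isOpen_lt (continuous_const.mul continuous_norm) hcont)
  have hfr : ∀ r > (0:ℝ), μ (frontier (T r)) = 0 := by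
    intro r hr
    have hsub : frontier (T r)
        ⊆ {x : Fin d → ℝ | ‖x‖ = r} ∪ {x | h x = u * ‖x‖ ∧ r ≤ ‖x‖} := by
      intro x hx
      rw [(hopen r).frontier_eq] at hx
      have hcl : closure (T r) ⊆ {x : Fin d → ℝ | r ≤ ‖x‖ ∧ u * ‖x‖ ≤ h x} := by
        refine closure_minimal (fun y hy => ⟨le_of_lt hy.1, le_of_lt hy.2⟩) ?_
        exact (isClosed_le continuous_const continuous_norm).inter
          (isClosed_le (continuous_const.mul continuous_norm) hcont)
      obtain ⟨h1, h2⟩ := hcl hx.1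
      have h3 : ¬(r < ‖x‖ ∧ u * ‖x‖ < h x) := hx.2
      by_cases hc : r < ‖x‖
      · right
        refine ⟨?_, h1⟩
        rcases lt_or_eq_of_le h2 with h4 | h4
        · exact absurd ⟨hc, h4⟩ h3
        · exact h4.symm
      · left
        exact le_antisymm (not_lt.1 hc) h1
    refine measure_mono_null hsub (measure_union_null (hnormlevel r hr) ?_)
    exact hlev r hr
  have hXfull : IsMRVIdx P X β b μ := ⟨⟨hbtop, hμ0, hμz, hfin, hconv⟩, hβ, hl⟩
  have hGc : (Set.Ioi (0:ℝ) \ Set.Ioi 0).Countable := by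
    simp
  have htail := family_power hXfull T hscale hmeas hbdd hanti (le_refl _) hGc
    (fun r hr => hfr r hr)
  exact ⟨htail, hconv (T 1) (hmeas 1 one_pos) (hbdd 1 one_pos) (hfr 1 one_pos)⟩

lemma integrable_of_bdd {α : Type*} [MeasurableSpace α] {ν : Measure α} [IsFiniteMeasure ν]
    {f : α → ℝ} (hm : AEStronglyMeasurable f ν) {C : ℝ} (hb : ∀ x, |f x| ≤ C) :
    Integrable f ν :=
  ⟨hm, HasFiniteIntegral.of_bounded (C := C) (Filter.Eventually.of_forall fun x => by
    simpa [Real.norm_eq_abs] using hb x)⟩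

/-- Eventually, the angular integrand is integrable on the conditioning event. -/
lemma ev_integrable {Ω : Type*} [MeasurableSpace Ω] {P : Measure Ω} [IsProbabilityMeasure P] {d : ℕ}
    {X : Ω → Fin d → ℝ} {σ : Measure (Fin d → ℝ)}
    (hσ : IsAngular P X σ) {f : (Fin d → ℝ) → ℝ} (hf : Continuous f) {Cf : ℝ}
    (hb : ∀ x, |f x| ≤ Cf) :
    ∀ᶠ t : ℝ in atTop,
      Integrable (fun ω => f (‖X ω‖⁻¹ • X ω)) (P.restrict {ω | t < ‖X ω‖}) := by
  obtain ⟨hprob, hsphere, hconv⟩ := hσ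
  haveI := hprob
  by_contra hcon
  rw [Filter.not_eventually] at hcon
  have hg : Continuous (fun x => 1 - f x) := continuous_const.sub hf
  have hgb : ∀ x, |1 - f x| ≤ 1 + Cf := by
    intro x
    calc |1 - f x| ≤ |1| + |f x| := by
          rw [sub_eq_add_neg]
          simpa [abs_neg] using abs_add_le 1 (-f x)
      _ ≤ 1 + Cf := by simp [hb x]
  have h1 := hconv f hf ⟨Cf, hb⟩
  have h2 := hconv _ hg ⟨1 + Cf, hgb⟩
  have hfreq : ∃ᶠ t : ℝ in atTop,
      ((∫ ω in {ω | t < ‖X ω‖}, f (‖X ω‖⁻¹ • X ω) ∂P) / (P {ω | t < ‖X ω‖}).toReal = 0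
      ∧ (∫ ω in {ω | t < ‖X ω‖}, (1 - f (‖X ω‖⁻¹ • X ω)) ∂P)
          / (P {ω | t < ‖X ω‖}).toReal = 0) := by
    refine hcon.mono fun t ht => ?_
    haveI : IsFiniteMeasure (P.restrict {ω | t < ‖X ω‖}) := by
      constructor
      rw [Measure.restrict_apply MeasurableSet.univ]
      exact lt_of_le_of_lt (measure_mono (Set.inter_subset_right)) (measure_lt_top P _)
    have hni2 : ¬ Integrable (fun ω => 1 - f (‖X ω‖⁻¹ • X ω))
        (P.restrict {ω | t < ‖X ω‖}) := by
      intro h2i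
      refine ht ?_
      have h3 := (integrable_const (c := (1:ℝ)) (μ := P.restrict {ω | t < ‖X ω‖})).sub h2i
      refine h3.congr (Filter.Eventually.of_forall fun ω => ?_)
      simp
    exact ⟨by rw [integral_undef ht, zero_div], by rw [integral_undef hni2, zero_div]⟩
  have e1 : ∫ θ, f θ ∂σ = 0 :=
    tendsto_nhds_unique_of_frequently_eq h1 tendsto_const_nhds (hfreq.mono fun t ht => ht.1)
  have e2 : ∫ θ, (1 - f θ) ∂σ = 0 :=
    tendsto_nhds_unique_of_frequently_eq h2 tendsto_const_nhds (hfreq.mono fun t ht => ht.2)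
  have hfint : Integrable f σ := integrable_of_bdd hf.aestronglyMeasurable hb
  rw [integral_sub (integrable_const 1) hfint, integral_const, e1] at e2
  simp at e2

/-- The key comparison between the conditional angular integral and the cone events. -/
lemma event_bounds {Ω : Type*} [MeasurableSpace Ω] {P : Measure Ω} [IsProbabilityMeasure P]
    {d : ℕ} {X : Ω → Fin d → ℝ} {h f : (Fin d → ℝ) → ℝ}
    (hhom : ∀ c : ℝ, 0 < c → ∀ x, h (c • x) = c * h x)
    {u' u t : ℝ} (ht : 0 < t)
    (h0f : ∀ x, 0 ≤ f x) (hf1 : ∀ x, f x ≤ 1)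
    (hfge : ∀ x, u ≤ h x → f x = 1) (hfpos : ∀ x, 0 < f x → u' < h x)
    (hint : Integrable (fun ω => f (‖X ω‖⁻¹ • X ω)) (P.restrict {ω | t < ‖X ω‖})) :
    (P {ω | X ω ∈ t • {x : Fin d → ℝ | 1 < ‖x‖ ∧ u * ‖x‖ < h x}}).toReal
      ≤ ∫ ω in {ω | t < ‖X ω‖}, f (‖X ω‖⁻¹ • X ω) ∂P
    ∧ ∫ ω in {ω | t < ‖X ω‖}, f (‖X ω‖⁻¹ • X ω) ∂P
      ≤ (P {ω | X ω ∈ t • {x : Fin d → ℝ | 1 < ‖x‖ ∧ u' * ‖x‖ < h x}}).toReal := by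
  classical
  set A := {ω | t < ‖X ω‖} with hA
  set ν := P.restrict A with hν
  haveI : IsFiniteMeasure ν := by
    constructor
    rw [hν, Measure.restrict_apply MeasurableSet.univ]
    exact lt_of_le_of_lt (measure_mono (Set.inter_subset_right)) (measure_lt_top P A)
  set g : Ω → ℝ := fun ω => f (‖X ω‖⁻¹ • X ω) with hg
  have hm : AEStronglyMeasurable g ν := hint.aestronglyMeasurable
  set g' := hm.mk g with hg'
  have hgg' : g =ᵐ[ν] g' := hm.ae_eq_mk
  have hint' : Integrable g' ν := hint.congr hgg'
  have hnull : ν {ω | ¬ g ω = g' ω} = 0 := ae_iff.mp hgg'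
  have hmg' : Measurable g' := hm.stronglyMeasurable_mk.measurable
  -- pointwise homogeneity on the event
  have hunit : ∀ ω : Ω, ω ∈ A → h (‖X ω‖⁻¹ • X ω) = ‖X ω‖⁻¹ * h (X ω) := by
    intro ω hω
    have hpos : 0 < ‖X ω‖ := lt_trans ht hω
    exact hhom _ (inv_pos.2 hpos) _
  have hXpos : ∀ ω : Ω, ω ∈ A → 0 < ‖X ω‖ := fun ω hω => lt_trans ht hω
  -- describe the events
  have hEu : {ω | X ω ∈ t • {x : Fin d → ℝ | 1 < ‖x‖ ∧ u * ‖x‖ < h x}}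
      = {ω | t < ‖X ω‖ ∧ u * ‖X ω‖ < h (X ω)} := by
    ext ω
    rw [Set.mem_setOf_eq, smul_cone_set hhom ht]
    rfl
  have hEu' : {ω | X ω ∈ t • {x : Fin d → ℝ | 1 < ‖x‖ ∧ u' * ‖x‖ < h x}}
      = {ω | t < ‖X ω‖ ∧ u' * ‖X ω‖ < h (X ω)} := by
    ext ω
    rw [Set.mem_setOf_eq, smul_cone_set hhom ht]
    rfl
  have hmeas1 : MeasurableSet {ω | 1 ≤ g' ω} := measurableSet_le measurable_const hmg'
  have hmeas0 : MeasurableSet {ω | 0 < g' ω} := measurableSet_lt measurable_const hmg'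
  constructor
  · -- lower bound
    rw [hEu]
    have hsub : {ω | t < ‖X ω‖ ∧ u * ‖X ω‖ < h (X ω)}
        ⊆ (A ∩ {ω | 1 ≤ g' ω}) ∪ (A ∩ {ω | ¬ g ω = g' ω}) := by
      intro ω hω
      have hωA : ω ∈ A := hω.1
      have hg1 : g ω = 1 := by
        refine hfge _ ?_
        rw [hunit ω hωA]
        have hp := hXpos ω hωA
        rw [inv_mul_eq_div, le_div_iff₀ hp]
        exact le_of_lt hω.2
      by_cases hgg : g ω = g' ω
      · exact Or.inl ⟨hωA, by rw [Set.mem_setOf_eq, ← hgg, hg1]⟩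
      · exact Or.inr ⟨hωA, hgg⟩
    have h1 : P {ω | t < ‖X ω‖ ∧ u * ‖X ω‖ < h (X ω)} ≤ ν {ω | 1 ≤ g' ω} := by
      calc P {ω | t < ‖X ω‖ ∧ u * ‖X ω‖ < h (X ω)}
          ≤ P (A ∩ {ω | 1 ≤ g' ω}) + P (A ∩ {ω | ¬ g ω = g' ω}) :=
            (measure_mono hsub).trans (measure_union_le _ _)
        _ ≤ ν {ω | 1 ≤ g' ω} + ν {ω | ¬ g ω = g' ω} := by
            refine add_le_add ?_ ?_
            · rw [hν, Measure.restrict_apply hmeas1]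
              exact measure_mono (by rw [Set.inter_comm])
            · rw [Set.inter_comm]
              exact Measure.le_restrict_apply _ _
        _ = ν {ω | 1 ≤ g' ω} := by rw [hnull, add_zero]
    have h2 : (ν {ω | 1 ≤ g' ω}).toReal ≤ ∫ ω, g' ω ∂ν := by
      have h0g' : 0 ≤ᵐ[ν] g' := by
        filter_upwards [hgg'] with ω hω
        rw [← hω]
        exact h0f _
      have := mul_meas_ge_le_integral_of_nonneg h0g' hint' 1
      simpa [Measure.real_def] using this
    have h3 : ∫ ω, g' ω ∂ν = ∫ ω in A, g ω ∂P := by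
      rw [← hν]
      exact (integral_congr_ae hgg').symm
    calc (P {ω | t < ‖X ω‖ ∧ u * ‖X ω‖ < h (X ω)}).toReal
        ≤ (ν {ω | 1 ≤ g' ω}).toReal := ENNReal.toReal_mono (measure_ne_top ν _) h1
      _ ≤ ∫ ω, g' ω ∂ν := h2
      _ = ∫ ω in A, g ω ∂P := h3
  · -- upper bound
    rw [hEu']
    have hmono : g' ≤ᵐ[ν] Set.indicator {ω | 0 < g' ω} (fun _ => (1:ℝ)) := by
      filter_upwards [hgg'] with ω hω
      by_cases hc : 0 < g' ω
      · rw [Set.indicator_of_mem (show ω ∈ {ω | 0 < g' ω} from hc)]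
        rw [← hω]
        exact hf1 _
      · rw [Set.indicator_of_notMem (show ω ∉ {ω | 0 < g' ω} from hc)]
        exact le_of_not_gt hc
    have hiind : Integrable (Set.indicator {ω | 0 < g' ω} (fun _ => (1:ℝ))) ν :=
      (integrable_const (1:ℝ)).indicator hmeas0
    have h4 : ∫ ω, g' ω ∂ν ≤ (ν {ω | 0 < g' ω}).toReal := by
      calc ∫ ω, g' ω ∂ν ≤ ∫ ω, Set.indicator {ω | 0 < g' ω} (fun _ => (1:ℝ)) ω ∂ν :=
            integral_mono_ae hint' hiind hmono
        _ = (ν {ω | 0 < g' ω}).toReal := by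
            rw [integral_indicator_const (1:ℝ) hmeas0]
            simp [Measure.real_def]
    have h5 : ν {ω | 0 < g' ω} ≤ P {ω | t < ‖X ω‖ ∧ u' * ‖X ω‖ < h (X ω)} := by
      have hsub2 : {ω | 0 < g' ω} ∩ A
          ⊆ {ω | t < ‖X ω‖ ∧ u' * ‖X ω‖ < h (X ω)} ∪ (A ∩ {ω | ¬ g ω = g' ω}) := by
        rintro ω ⟨hω0, hωA⟩
        by_cases hgg : g ω = g' ω
        · left
          refine ⟨hωA, ?_⟩
          have hgpos : 0 < g ω := by rw [hgg]; exact hω0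
          have := hfpos _ hgpos
          rw [hunit ω hωA] at this
          have hp := hXpos ω hωA
          rw [inv_mul_eq_div, lt_div_iff₀ hp] at this
          exact this
        · right; exact ⟨hωA, hgg⟩
      calc ν {ω | 0 < g' ω} = P ({ω | 0 < g' ω} ∩ A) := by
            rw [hν, Measure.restrict_apply hmeas0]
        _ ≤ P ({ω | t < ‖X ω‖ ∧ u' * ‖X ω‖ < h (X ω)} ∪ (A ∩ {ω | ¬ g ω = g' ω})) :=
            measure_mono hsub2
        _ ≤ P {ω | t < ‖X ω‖ ∧ u' * ‖X ω‖ < h (X ω)} + P (A ∩ {ω | ¬ g ω = g' ω}) :=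
            measure_union_le _ _
        _ ≤ P {ω | t < ‖X ω‖ ∧ u' * ‖X ω‖ < h (X ω)} + ν {ω | ¬ g ω = g' ω} := by
            refine add_le_add le_rfl ?_
            rw [Set.inter_comm]
            exact Measure.le_restrict_apply _ _
        _ = P {ω | t < ‖X ω‖ ∧ u' * ‖X ω‖ < h (X ω)} := by rw [hnull, add_zero]
    have h3 : ∫ ω in A, g ω ∂P = ∫ ω, g' ω ∂ν := by
      rw [← hν]
      exact integral_congr_ae hgg'
    calc ∫ ω in A, g ω ∂P = ∫ ω, g' ω ∂ν := h3
      _ ≤ (ν {ω | 0 < g' ω}).toReal := h4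
      _ ≤ (P {ω | t < ‖X ω‖ ∧ u' * ‖X ω‖ < h (X ω)}).toReal :=
          ENNReal.toReal_mono (measure_ne_top P _) h5

/-- Identification of the angular measure of upper level sets of `h` via the exponent measure. -/
lemma angular_id {Ω : Type*} [MeasurableSpace Ω] {P : Measure Ω} [IsProbabilityMeasure P]
    {d : ℕ} {X : Ω → Fin d → ℝ} {β : ℝ} {b : ℝ → ℝ} {μ σ : Measure (Fin d → ℝ)}
    (hX : IsMRVIdx P X β b μ) (hσ : IsAngular P X σ)
    {h : (Fin d → ℝ) → ℝ} (hcont : Continuous h)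
    (hhom : ∀ c : ℝ, 0 < c → ∀ x, h (c • x) = c * h x)
    {U : Set ℝ} (hUpos : U ⊆ Set.Ioi 0)
    (hUlev : ∀ u ∈ U, ∀ ε > (0:ℝ), μ {x : Fin d → ℝ | h x = u * ‖x‖ ∧ ε ≤ ‖x‖} = 0)
    (hUc : (Set.Ioi 0 \ U).Countable)
    {w : ℝ} (hw : w ∈ U)
    (hwcont : ContinuousAt
      (fun v : ℝ => (μ {x : Fin d → ℝ | 1 < ‖x‖ ∧ v * ‖x‖ < h x}).toReal) w) :
    (μ {x : Fin d → ℝ | 1 < ‖x‖ ∧ w * ‖x‖ < h x}).toReal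
      = (μ {x : Fin d → ℝ | 1 < ‖x‖}).toReal * (σ {x : Fin d → ℝ | w < h x}).toReal := by
  classical
  obtain ⟨hc0pos, htailN, hlevelN, hcN⟩ := norm_tail hX
  set c₀ := (μ {x : Fin d → ℝ | 1 < ‖x‖}).toReal with hc₀
  set Λ : ℝ → ℝ := fun v => (μ {x : Fin d → ℝ | 1 < ‖x‖ ∧ v * ‖x‖ < h x}).toReal with hΛ
  set s : ℝ → ℝ := fun v => (σ {x : Fin d → ℝ | v < h x}).toReal with hs
  haveI hσprob : IsProbabilityMeasure σ := hσ.1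
  have hbtop : Tendsto b atTop atTop := hX.1.1
  -- eventual positivity of the conditioning probability
  have hppos : ∀ᶠ t : ℝ in atTop, 0 < (P {ω | t < ‖X ω‖}).toReal := by
    have hev : ∀ᶠ t : ℝ in atTop,
        c₀ / 2 < b t * (P {ω | t < ‖X ω‖}).toReal :=
      hcN.eventually (eventually_gt_nhds (half_lt_self hc0pos))
    filter_upwards [hev] with t htv
    by_contra hc
    push_neg at hc
    have : (P {ω | t < ‖X ω‖}).toReal = 0 := le_antisymm hc ENNReal.toReal_nonneg
    rw [this, mul_zero] at htv
    linarith
  -- the key sandwich for a good pair u' < u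
  have key : ∀ u' ∈ U, ∀ u ∈ U, u' < u →
      c₀ * s u ≤ Λ u' ∧ Λ u ≤ c₀ * s u' := by
    intro u' hu' u hu huu
    have hu'0 : (0:ℝ) < u' := hUpos hu'
    have hu0 : (0:ℝ) < u := hUpos hu
    set f : (Fin d → ℝ) → ℝ := fun x => max 0 (min 1 ((h x - u') / (u - u'))) with hf
    have hcf : Continuous f :=
      continuous_const.max (continuous_const.min ((hcont.sub continuous_const).div_const _))
    have h0f : ∀ x, 0 ≤ f x := fun x => le_max_left _ _
    have hf1 : ∀ x, f x ≤ 1 := fun x => max_le zero_le_one (min_le_left _ _)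
    have habs : ∀ x, |f x| ≤ 1 := fun x => abs_le.2 ⟨le_trans (by norm_num) (h0f x), hf1 x⟩
    have hfge : ∀ x, u ≤ h x → f x = 1 := by
      intro x hx
      have hq : (1:ℝ) ≤ (h x - u') / (u - u') := by
        rw [le_div_iff₀ (by linarith : (0:ℝ) < u - u')]
        linarith
      show (0 ⊔ (1 ⊓ ((h x - u') / (u - u')))) = 1
      rw [min_eq_left hq, max_eq_right zero_le_one]
    have hfpos : ∀ x, 0 < f x → u' < h x := by
      intro x hx
      have hx' : 0 < 0 ⊔ (1 ⊓ ((h x - u') / (u - u'))) := hx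
      have h1 : 0 < min 1 ((h x - u') / (u - u')) := by
        by_contra hcn
        push_neg at hcn
        rw [max_eq_left hcn] at hx'
        exact lt_irrefl 0 hx'
      have h2 : 0 < (h x - u') / (u - u') := lt_of_lt_of_le h1 (min_le_right _ _)
      have h3 : 0 < h x - u' := by
        by_contra hcn
        push_neg at hcn
        have hdenom : (0:ℝ) ≤ (u - u')⁻¹ := inv_nonneg.2 (by linarith)
        have : (h x - u') / (u - u') ≤ 0 := by
          rw [div_eq_mul_inv]
          exact mul_nonpos_of_nonpos_of_nonneg hcn hdenom
        linarith
      linarith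
    -- the event limits
    have hTu := (cone_tail hX hcont hhom hlevelN (hUlev u hu)).2
    have hTu' := (cone_tail hX hcont hhom hlevelN (hUlev u' hu')).2
    -- the numerator limit
    have hratio := hσ.2.2 f hcf ⟨1, habs⟩
    have hprod := hratio.mul hcN
    have hnum : Tendsto
        (fun t : ℝ => b t * ∫ ω in {ω | t < ‖X ω‖}, f (‖X ω‖⁻¹ • X ω) ∂P) atTop
        (nhds (c₀ * ∫ θ, f θ ∂σ)) := by
      rw [show c₀ * ∫ θ, f θ ∂σ = (∫ θ, f θ ∂σ) * c₀ from mul_comm _ _]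
      refine hprod.congr' ?_
      filter_upwards [hppos] with t hp
      field_simp
    -- the eventual inequalities
    have hsand : ∀ᶠ t : ℝ in atTop,
        b t * (P {ω | X ω ∈ t • {x : Fin d → ℝ | 1 < ‖x‖ ∧ u * ‖x‖ < h x}}).toReal
          ≤ b t * ∫ ω in {ω | t < ‖X ω‖}, f (‖X ω‖⁻¹ • X ω) ∂P
        ∧ b t * ∫ ω in {ω | t < ‖X ω‖}, f (‖X ω‖⁻¹ • X ω) ∂P
          ≤ b t * (P {ω | X ω ∈ t • {x : Fin d → ℝ | 1 < ‖x‖ ∧ u' * ‖x‖ < h x}}).toReal := by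
      filter_upwards [ev_integrable ⟨hσ.1, hσ.2.1, hσ.2.2⟩ hcf habs,
        eventually_gt_atTop (0:ℝ), hbtop.eventually_ge_atTop 0] with t hint ht hbt
      obtain ⟨hlow, hup⟩ := event_bounds hhom ht h0f hf1 hfge hfpos hint
      exact ⟨mul_le_mul_of_nonneg_left hlow hbt, mul_le_mul_of_nonneg_left hup hbt⟩
    have hleft : Λ u ≤ c₀ * ∫ θ, f θ ∂σ :=
      le_of_tendsto_of_tendsto hTu hnum (hsand.mono fun t ht => ht.1)
    have hright : c₀ * ∫ θ, f θ ∂σ ≤ Λ u' :=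
      le_of_tendsto_of_tendsto hnum hTu' (hsand.mono fun t ht => ht.2)
    -- σ-side comparison
    have hfint : Integrable f σ := integrable_of_bdd hcf.aestronglyMeasurable habs
    have hmeasu : MeasurableSet {x : Fin d → ℝ | u < h x} :=
      measurableSet_lt measurable_const hcont.measurable
    have hmeasu' : MeasurableSet {x : Fin d → ℝ | u' < h x} :=
      measurableSet_lt measurable_const hcont.measurable
    have hσ1 : s u ≤ ∫ θ, f θ ∂σ := by
      have hind : Integrable (Set.indicator {x : Fin d → ℝ | u < h x} fun _ => (1:ℝ)) σ :=
        (integrable_const (1:ℝ)).indicator hmeasu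
      have hmono : ∀ θ, Set.indicator {x : Fin d → ℝ | u < h x} (fun _ => (1:ℝ)) θ ≤ f θ := by
        intro θ
        by_cases hθ : θ ∈ {x : Fin d → ℝ | u < h x}
        · rw [Set.indicator_of_mem hθ, hfge θ (le_of_lt hθ)]
        · rw [Set.indicator_of_notMem hθ]
          exact h0f θ
      have := integral_mono hind hfint hmono
      rwa [integral_indicator_const (1:ℝ) hmeasu, smul_eq_mul, mul_one] at this
    have hσ2 : ∫ θ, f θ ∂σ ≤ s u' := by
      have hind : Integrable (Set.indicator {x : Fin d → ℝ | u' < h x} fun _ => (1:ℝ)) σ :=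
        (integrable_const (1:ℝ)).indicator hmeasu'
      have hmono : ∀ θ, f θ ≤ Set.indicator {x : Fin d → ℝ | u' < h x} (fun _ => (1:ℝ)) θ := by
        intro θ
        by_cases hθ : θ ∈ {x : Fin d → ℝ | u' < h x}
        · rw [Set.indicator_of_mem hθ]
          exact hf1 θ
        · rw [Set.indicator_of_notMem hθ]
          by_contra hcn
          push_neg at hcn
          exact hθ (hfpos θ hcn)
      have := integral_mono hfint hind hmono
      rwa [integral_indicator_const (1:ℝ) hmeasu', smul_eq_mul, mul_one] at this
    constructor
    · calc c₀ * s u ≤ c₀ * ∫ θ, f θ ∂σ :=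
            mul_le_mul_of_nonneg_left hσ1 (le_of_lt hc0pos)
        _ ≤ Λ u' := hright
    · calc Λ u ≤ c₀ * ∫ θ, f θ ∂σ := hleft
        _ ≤ c₀ * s u' := mul_le_mul_of_nonneg_left hσ2 (le_of_lt hc0pos)
  -- approach `w` from above and below within `U`
  have hw0 : (0:ℝ) < w := hUpos hw
  obtain ⟨v, hvU, hv1, hv2⟩ := seq_approx_above hUc hw0
  obtain ⟨y, hyU, hy1, hy2⟩ := seq_approx_below hUc hw0
  have hΛv : Tendsto (fun n => Λ (v n)) atTop (nhds (Λ w)) := hwcont.tendsto.comp hv2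
  have hΛy : Tendsto (fun n => Λ (y n)) atTop (nhds (Λ w)) := hwcont.tendsto.comp hy2
  have hle1 : Λ w ≤ c₀ * s w := by
    refine le_of_tendsto hΛv (Filter.Eventually.of_forall fun n => ?_)
    exact (key w hw (v n) (hvU n) (hv1 n)).2
  have hle2 : c₀ * s w ≤ Λ w := by
    refine ge_of_tendsto hΛy (Filter.Eventually.of_forall fun n => ?_)
    exact (key (y n) (hyU n) w hw (hy1 n).2).1
  exact le_antisymm hle1 hle2

/-- A finite grid of good points with small mesh reaching above `C`. -/
lemma exists_grid {U : Set ℝ} (hUc : (Set.Ioi 0 \ U).Countable) {u₀ C δ : ℝ}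
    (hu₀ : 0 < u₀) (hu₀U : u₀ ∈ U) (hδ : 0 < δ) (hC : 0 < C) :
    ∃ (N : ℕ) (v : ℕ → ℝ), v 0 = u₀ ∧ (∀ i, v i ∈ U) ∧ StrictMono v ∧
      (∀ i, v (i + 1) ≤ v i + δ) ∧ C < v N := by
  have hpick : ∀ i : ℕ, ∃ y ∈ U,
      u₀ + ((i:ℝ) + 1) * δ / 2 < y ∧ y < u₀ + ((i:ℝ) + 1) * δ / 2 + δ / 4 := by
    intro i
    refine good_dense hUc ?_ ?_
    · positivity
    · linarith
  choose w hwU hw1 hw2 using hpick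
  set v : ℕ → ℝ := fun i => if i = 0 then u₀ else w (i - 1) with hv
  have hv0 : v 0 = u₀ := rfl
  have hvsucc : ∀ j : ℕ, v (j + 1) = w j := fun j => by simp [hv]
  have hwlb : ∀ j : ℕ, u₀ + ((j:ℝ) + 1) * δ / 2 < w j := hw1
  have hwub : ∀ j : ℕ, w j < u₀ + ((j:ℝ) + 1) * δ / 2 + δ / 4 := hw2
  have hmono : StrictMono v := by
    refine strictMono_nat_of_lt_succ fun i => ?_
    cases i with
    | zero =>
      rw [hv0, hvsucc]
      have := hwlb 0
      simp only [Nat.cast_zero] at this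
      linarith
    | succ j =>
      rw [hvsucc, hvsucc]
      have h1 := hwub j
      have h2 := hwlb (j + 1)
      push_cast at h1 h2 ⊢
      linarith
  have hgap : ∀ i, v (i + 1) ≤ v i + δ := by
    intro i
    cases i with
    | zero =>
      rw [hv0, hvsucc]
      have := hwub 0
      simp only [Nat.cast_zero] at this
      linarith
    | succ j =>
      rw [hvsucc, hvsucc]
      have h1 := hwub (j + 1)
      have h2 := hwlb j
      push_cast at h1 h2 ⊢
      linarith
  have hvU : ∀ i, v i ∈ U := by
    intro i
    cases i with
    | zero => exact hv0 ▸ hu₀U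
    | succ j => rw [hvsucc]; exact hwU j
  set N : ℕ := ⌈2 * C / δ⌉₊ + 1 with hN
  refine ⟨N, v, hv0, hvU, hmono, hgap, ?_⟩
  have hle : 2 * C / δ ≤ (⌈2 * C / δ⌉₊ : ℝ) := Nat.le_ceil _
  have hNval : v N = w (N - 1) := by simp [hv, hN]
  have hNlb : u₀ + ((⌈2 * C / δ⌉₊:ℝ) + 1) * δ / 2 < w (N - 1) := by
    have := hwlb (N - 1)
    have hN1 : ((N - 1 : ℕ) : ℝ) = (⌈2 * C / δ⌉₊ : ℝ) := by
      simp [hN]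
    rwa [hN1] at this
  have hCle : C ≤ ((⌈2 * C / δ⌉₊:ℝ) + 1) * δ / 2 := by
    rw [div_le_iff₀ hδ] at hle
    nlinarith
  rw [hNval]
  linarith

/-- Locating a value within a finite increasing grid. -/
lemma exists_grid_index {v : ℕ → ℝ} {q : ℝ} :
    ∀ N : ℕ, v 0 < q → q ≤ v N → ∃ i, i < N ∧ v i < q ∧ q ≤ v (i + 1) := by
  intro N
  induction N with
  | zero => intro h1 h2; exact absurd (lt_of_lt_of_le h1 h2) (lt_irrefl _)
  | succ M ih =>
    intro h1 h2
    by_cases hc : q ≤ v M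
    · obtain ⟨i, hi, hq1, hq2⟩ := ih h1 hc
      exact ⟨i, Nat.lt_succ_of_lt hi, hq1, hq2⟩
    · push_neg at hc
      exact ⟨M, Nat.lt_succ_self M, hc, h2⟩

lemma cont_rpow_comp {E : Type*} [TopologicalSpace E] {g : E → ℝ} (hg : Continuous g)
    {β : ℝ} (hβ : 0 ≤ β) : Continuous fun x => g x ^ β :=
  continuous_iff_continuousAt.2 fun x =>
    (Real.continuousAt_rpow_const _ _ (Or.inr hβ)).comp hg.continuousAt

/-- The main identity: `μ{h > 1} = μ{‖x‖>1} · ∫ h^β dσ`. -/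
lemma grid_identity {Ω : Type*} [MeasurableSpace Ω] {P : Measure Ω} [IsProbabilityMeasure P]
    {d : ℕ} {X : Ω → Fin d → ℝ} {β : ℝ} {b : ℝ → ℝ} {μ σ : Measure (Fin d → ℝ)}
    (hX : IsMRVIdx P X β b μ) (hσ : IsAngular P X σ)
    {h : (Fin d → ℝ) → ℝ} (hcont : Continuous h) (hnonneg : ∀ x, 0 ≤ h x)
    (hhom : ∀ c : ℝ, 0 < c → ∀ x, h (c • x) = c * h x)
    {C : ℝ} (hC : 0 < C) (hCb : ∀ x, h x ≤ C * ‖x‖) :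
    (μ {x : Fin d → ℝ | 1 < h x}).toReal
      = (μ {x : Fin d → ℝ | 1 < ‖x‖}).toReal * ∫ θ, h θ ^ β ∂σ := by
  classical
  obtain ⟨hc0pos, htailN, hlevelN, hcN⟩ := norm_tail hX
  have hβ : 0 < β := hX.2.1
  have hfin := hX.1.2.2.2.1
  haveI hσprob : IsProbabilityMeasure σ := hσ.1
  have hae : ∀ᵐ θ ∂σ, ‖θ‖ = 1 := hσ.2.1
  set c₀ := (μ {x : Fin d → ℝ | 1 < ‖x‖}).toReal with hc₀
  set m := (μ {x : Fin d → ℝ | 1 < h x}).toReal with hm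
  set Λ : ℝ → ℝ := fun v => (μ {x : Fin d → ℝ | 1 < ‖x‖ ∧ v * ‖x‖ < h x}).toReal with hΛ
  set s : ℝ → ℝ := fun v => (σ {x : Fin d → ℝ | v < h x}).toReal with hs
  -- basic measurability and finiteness
  have hTmeas : ∀ r u : ℝ, MeasurableSet {x : Fin d → ℝ | r < ‖x‖ ∧ u * ‖x‖ < h x} :=
    fun r u => (measurableSet_lt measurable_const measurable_norm).inter
      (measurableSet_lt (measurable_const.mul measurable_norm) hcont.measurable)
  have hTbdd : ∀ r > (0:ℝ), ∀ u : ℝ, BddAwayZero {x : Fin d → ℝ | r < ‖x‖ ∧ u * ‖x‖ < h x} :=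
    fun r hr u => ⟨r, hr, fun x hx => le_of_lt hx.1⟩
  have hTfin : ∀ r > (0:ℝ), ∀ u : ℝ, μ {x : Fin d → ℝ | r < ‖x‖ ∧ u * ‖x‖ < h x} ≠ ⊤ :=
    fun r hr u => hfin _ (hTmeas r u) (hTbdd r hr u)
  have hHmeas : MeasurableSet {x : Fin d → ℝ | 1 < h x} :=
    measurableSet_lt measurable_const hcont.measurable
  have hHfin : μ {x : Fin d → ℝ | 1 < h x} ≠ ⊤ := by
    refine hfin _ hHmeas ⟨1 / C, by positivity, fun x hx => ?_⟩
    rw [div_le_iff₀ hC, mul_comm]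
    exact le_of_lt (lt_of_lt_of_le hx (hCb x))
  -- the good set U
  set g₀ : (Fin d → ℝ) → ℝ := fun x => h x / ‖x‖ with hg₀
  have hg₀m : Measurable g₀ := hcont.measurable.div measurable_norm
  set Bcone := {u : ℝ | ∃ n : ℕ, 0 < μ {x | g₀ x = u ∧ 1 / (n + 1) < ‖x‖}} with hBcone
  have hBconeC : Bcone.Countable := countable_level μ hfin g₀ hg₀m
  have hΛanti : Antitone Λ := by
    intro v v' hvv'
    refine ENNReal.toReal_mono (hTfin 1 one_pos v) (measure_mono fun x hx => ?_)
    refine ⟨hx.1, lt_of_le_of_lt ?_ hx.2⟩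
    exact mul_le_mul_of_nonneg_right hvv' (norm_nonneg x)
  set BΛ := {v : ℝ | ¬ContinuousAt Λ v} with hBΛ
  have hBΛC : BΛ.Countable := hΛanti.countable_not_continuousAt
  set U := Set.Ioi (0:ℝ) \ (Bcone ∪ BΛ) with hU
  have hUpos : U ⊆ Set.Ioi 0 := Set.diff_subset
  have hUc : (Set.Ioi 0 \ U).Countable := by
    refine (hBconeC.union hBΛC).mono fun r hr => ?_
    rcases hr with ⟨h1, h2⟩
    by_contra hrB
    exact h2 ⟨h1, hrB⟩
  have hUlev : ∀ u ∈ U, ∀ ε > (0:ℝ), μ {x : Fin d → ℝ | h x = u * ‖x‖ ∧ ε ≤ ‖x‖} = 0 := by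
    intro u hu ε hε
    have hnB : ¬ ∃ n : ℕ, 0 < μ {x | g₀ x = u ∧ 1 / (n + 1) < ‖x‖} := by
      intro hcontra
      exact hu.2 (Or.inl hcontra)
    have h0 := level_null (μ := μ) (g := g₀) hnB hε
    have hseteq : {x : Fin d → ℝ | h x = u * ‖x‖ ∧ ε ≤ ‖x‖}
        = {x : Fin d → ℝ | g₀ x = u ∧ ε ≤ ‖x‖} := by
      ext x
      simp only [Set.mem_setOf_eq, hg₀]
      constructor
      · rintro ⟨h1, h2⟩
        have hx0 : ‖x‖ ≠ 0 := ne_of_gt (lt_of_lt_of_le hε h2)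
        exact ⟨by rw [h1]; field_simp, h2⟩
      · rintro ⟨h1, h2⟩
        have hx0 : ‖x‖ ≠ 0 := ne_of_gt (lt_of_lt_of_le hε h2)
        refine ⟨?_, h2⟩
        rw [← h1]
        field_simp
    rw [hseteq]
    exact h0
  have hAng : ∀ w ∈ U, Λ w = c₀ * s w := by
    intro w hw
    have hwc : ContinuousAt Λ w := by
      by_contra hcn
      exact hw.2 (Or.inr hcn)
    exact angular_id hX hσ hcont hhom hUpos hUlev hUc hw hwc
  have hV : ∀ u ∈ U, ∀ r > (0:ℝ),
      (μ {x : Fin d → ℝ | r < ‖x‖ ∧ u * ‖x‖ < h x}).toReal = Λ u * r ^ (-β) :=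
    fun u hu => (cone_tail hX hcont hhom hlevelN (hUlev u hu)).1
  -- real-valued difference formulas
  have hdiffT : ∀ (r u u' : ℝ), 0 < r → u ≤ u' →
      (μ ({x : Fin d → ℝ | r < ‖x‖ ∧ u * ‖x‖ < h x}
          \ {x : Fin d → ℝ | r < ‖x‖ ∧ u' * ‖x‖ < h x})).toReal
        = (μ {x : Fin d → ℝ | r < ‖x‖ ∧ u * ‖x‖ < h x}).toReal
          - (μ {x : Fin d → ℝ | r < ‖x‖ ∧ u' * ‖x‖ < h x}).toReal := by
    intro r u u' hr huu'
    have hss : {x : Fin d → ℝ | r < ‖x‖ ∧ u' * ‖x‖ < h x}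
        ⊆ {x : Fin d → ℝ | r < ‖x‖ ∧ u * ‖x‖ < h x} := by
      intro x hx
      exact ⟨hx.1, lt_of_le_of_lt (mul_le_mul_of_nonneg_right huu' (norm_nonneg x)) hx.2⟩
    rw [measure_diff hss (hTmeas r u').nullMeasurableSet (hTfin r hr u'),
      ENNReal.toReal_sub_of_le (measure_mono hss) (hTfin r hr u)]
  have hsdiff : ∀ v v' : ℝ, v ≤ v' →
      (σ ({x : Fin d → ℝ | v < h x} \ {x : Fin d → ℝ | v' < h x})).toReal = s v - s v' := by
    intro v v' hvv'
    have hss : {x : Fin d → ℝ | v' < h x} ⊆ {x : Fin d → ℝ | v < h x} :=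
      fun x hx => lt_of_le_of_lt hvv' hx
    rw [measure_diff hss (measurableSet_lt measurable_const hcont.measurable).nullMeasurableSet
      (measure_ne_top σ _),
      ENNReal.toReal_sub_of_le (measure_mono hss) (measure_ne_top σ _)]
  have hinvpow : ∀ y : ℝ, 0 < y → (y⁻¹ : ℝ) ^ (-β) = y ^ β := by
    intro y hy
    rw [Real.inv_rpow hy.le, Real.rpow_neg hy.le, inv_inv]
  -- the two-sided bounds for a fixed good level and mesh
  have bounds : ∀ u₀ ∈ U, ∀ δ : ℝ, 0 < δ → δ ≤ 1 →
      c₀ * ∫ θ in {θ : Fin d → ℝ | u₀ < h θ}, (max (h θ - δ) 0) ^ β ∂σ ≤ m ∧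
      m ≤ c₀ * u₀ ^ β + c₀ * ∫ θ in {θ : Fin d → ℝ | u₀ < h θ}, (h θ + δ) ^ β ∂σ := by
    intro u₀ hu₀U δ hδ hδ1
    have hu₀ : 0 < u₀ := hUpos hu₀U
    obtain ⟨N, v, hv0, hvU, hvmono, hvgap, hvN⟩ := exists_grid hUc hu₀ hu₀U hδ hC
    have hvpos : ∀ i, 0 < v i := fun i => hUpos (hvU i)
    set F : ℕ → Set (Fin d → ℝ) := fun i => {θ | v i < h θ} \ {θ | v (i + 1) < h θ} with hF
    have hhm : MeasurableSet {θ : Fin d → ℝ | u₀ < h θ} :=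
      measurableSet_lt measurable_const hcont.measurable
    have hFmeas : ∀ i, MeasurableSet (F i) := fun i =>
      (measurableSet_lt measurable_const hcont.measurable).diff
        (measurableSet_lt measurable_const hcont.measurable)
    have hFd : ∀ i j, i < j → Disjoint (F i) (F j) := by
      intro i j hij
      refine Set.disjoint_left.2 fun θ hθi hθj => ?_
      have h1 : h θ ≤ v (i + 1) := not_lt.1 hθi.2
      have h2 : v j < h θ := hθj.1
      have h3 : v (i + 1) ≤ v j := hvmono.monotone (Nat.succ_le_of_lt hij)
      linarith
    have hFdisj : Set.Pairwise ↑(Finset.range N) (Function.onFun Disjoint F) := by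
      intro i _ j _ hij
      rcases lt_or_gt_of_ne hij with hlt | hgt
      · exact hFd i j hlt
      · exact (hFd j i hgt).symm
    have hσvN : σ {θ : Fin d → ℝ | v N < h θ} = 0 := by
      have hsub : {θ : Fin d → ℝ | v N < h θ} ⊆ {θ : Fin d → ℝ | ¬ ‖θ‖ = 1} := by
        intro θ hθ h1
        have h2 := hCb θ
        rw [h1, mul_one] at h2
        have h3 : v N < h θ := hθ
        linarith
      exact measure_mono_null hsub (ae_iff.mp hae)
    have hFunion : (⋃ i ∈ Finset.range N, F i)
        = {θ : Fin d → ℝ | u₀ < h θ} \ {θ : Fin d → ℝ | v N < h θ} := by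
      ext θ
      simp only [Set.mem_iUnion, Finset.mem_range, Set.mem_diff, Set.mem_setOf_eq, hF,
        exists_prop]
      constructor
      · rintro ⟨i, hiN, hi1, hi2⟩
        have hle : v 0 ≤ v i := hvmono.monotone (Nat.zero_le i)
        refine ⟨lt_of_le_of_lt (hv0 ▸ hle) hi1, fun hN => ?_⟩
        have h1 : v (i + 1) ≤ v N := hvmono.monotone hiN
        have h2 : h θ ≤ v (i + 1) := not_lt.1 hi2
        linarith
      · rintro ⟨h1, h2⟩
        have h2' : h θ ≤ v N := not_lt.1 h2
        obtain ⟨i, hiN, hq1, hq2⟩ := exists_grid_index N (by rw [hv0]; exact h1) h2'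
        exact ⟨i, hiN, hq1, not_lt.2 hq2⟩
    have haeEq : ({θ : Fin d → ℝ | u₀ < h θ} \ {θ : Fin d → ℝ | v N < h θ} : Set (Fin d → ℝ))
        =ᵐ[σ] ({θ : Fin d → ℝ | u₀ < h θ} : Set (Fin d → ℝ)) := by
      have hnm : ∀ᵐ θ ∂σ, θ ∉ {θ : Fin d → ℝ | v N < h θ} := by
        rw [ae_iff]
        simpa using hσvN
      rw [Filter.eventuallyEq_set]
      filter_upwards [hnm] with θ hθ
      simp only [Set.mem_diff]
      exact ⟨fun hx => hx.1, fun hx => ⟨hx, hθ⟩⟩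
    have sum_int : ∀ G : (Fin d → ℝ) → ℝ, Integrable G σ →
        ∑ i ∈ Finset.range N, ∫ θ in F i, G θ ∂σ
          = ∫ θ in {θ : Fin d → ℝ | u₀ < h θ}, G θ ∂σ := by
      intro G hG
      rw [← integral_biUnion_finset (Finset.range N) (fun i _ => hFmeas i) hFdisj
        (fun i _ => hG.integrableOn), hFunion, setIntegral_congr_set haeEq]
    have hcell : ∀ r : ℝ, 0 < r → ∀ i : ℕ,
        (μ ({x : Fin d → ℝ | r < ‖x‖ ∧ v i * ‖x‖ < h x}
            \ {x : Fin d → ℝ | r < ‖x‖ ∧ v (i + 1) * ‖x‖ < h x})).toReal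
          = (Λ (v i) - Λ (v (i + 1))) * r ^ (-β) := by
      intro r hr i
      rw [hdiffT r (v i) (v (i + 1)) hr (le_of_lt (hvmono (Nat.lt_succ_self i))),
        hV (v i) (hvU i) r hr, hV (v (i + 1)) (hvU (i + 1)) r hr]
      ring
    have hΛs : ∀ i : ℕ, Λ (v i) - Λ (v (i + 1)) = c₀ * (σ (F i)).toReal := by
      intro i
      have hd := hsdiff (v i) (v (i + 1)) (le_of_lt (hvmono (Nat.lt_succ_self i)))
      rw [hAng (v i) (hvU i), hAng (v (i + 1)) (hvU (i + 1))]
      rw [show (σ (F i)).toReal = s (v i) - s (v (i + 1)) from hd]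
      ring
    -- lower bound
    have hGlcont : Continuous (fun θ => (max (h θ - δ) 0) ^ β) :=
      cont_rpow_comp ((hcont.sub continuous_const).max continuous_const) hβ.le
    have hGlbd : ∀ᵐ θ ∂σ, ‖(max (h θ - δ) 0) ^ β‖ ≤ (C + 1) ^ β := by
      filter_upwards [hae] with θ hθ
      have h1 : h θ ≤ C := by have h2 := hCb θ; rw [hθ, mul_one] at h2; exact h2
      have h2 : max (h θ - δ) 0 ≤ C + 1 := max_le (by linarith) (by positivity)
      have h3 : (0:ℝ) ≤ max (h θ - δ) 0 := le_max_right _ _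
      rw [Real.norm_eq_abs, abs_of_nonneg (Real.rpow_nonneg h3 β)]
      exact Real.rpow_le_rpow h3 h2 hβ.le
    have hGlint : Integrable (fun θ => (max (h θ - δ) 0) ^ β) σ :=
      ⟨hGlcont.aestronglyMeasurable, HasFiniteIntegral.of_bounded hGlbd⟩
    have hl3 : ∀ i : ℕ, ∫ θ in F i, (max (h θ - δ) 0) ^ β ∂σ ≤ v i ^ β * (σ (F i)).toReal := by
      intro i
      have hle : ∀ θ ∈ F i, (max (h θ - δ) 0) ^ β ≤ v i ^ β := by
        intro θ hθ
        have h1 : h θ ≤ v (i + 1) := not_lt.1 hθ.2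
        have h2 : max (h θ - δ) 0 ≤ v i := max_le (by linarith [hvgap i]) (hvpos i).le
        exact Real.rpow_le_rpow (le_max_right _ _) h2 hβ.le
      calc ∫ θ in F i, (max (h θ - δ) 0) ^ β ∂σ ≤ ∫ _ in F i, (v i ^ β) ∂σ :=
            setIntegral_mono_on hGlint.integrableOn
              (integrableOn_const (measure_ne_top σ _)) (hFmeas i) hle
        _ = v i ^ β * (σ (F i)).toReal := by rw [setIntegral_const, smul_eq_mul, mul_comm, Measure.real_def]
    set D : ℕ → Set (Fin d → ℝ) := fun i =>
      {x : Fin d → ℝ | (v i)⁻¹ < ‖x‖ ∧ v i * ‖x‖ < h x}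
        \ {x : Fin d → ℝ | (v i)⁻¹ < ‖x‖ ∧ v (i + 1) * ‖x‖ < h x} with hDdef
    have hDmeas : ∀ i, MeasurableSet (D i) := fun i => (hTmeas _ _).diff (hTmeas _ _)
    have hDsub : ∀ i, D i ⊆ {x : Fin d → ℝ | 1 < h x} := by
      intro i x hx
      obtain ⟨⟨h1, h2⟩, -⟩ := hx
      have h3 : v i * (v i)⁻¹ < v i * ‖x‖ := mul_lt_mul_of_pos_left h1 (hvpos i)
      rw [mul_inv_cancel₀ (ne_of_gt (hvpos i))] at h3
      exact lt_trans h3 h2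
    have hDd : ∀ i j, i < j → Disjoint (D i) (D j) := by
      intro i j hij
      refine Set.disjoint_left.2 fun x hxi hxj => ?_
      have h2 : h x ≤ v (i + 1) * ‖x‖ := by
        by_contra hcn
        push_neg at hcn
        exact hxi.2 ⟨hxi.1.1, hcn⟩
      have h3 : v (i + 1) ≤ v j := hvmono.monotone (Nat.succ_le_of_lt hij)
      have h4 : v j * ‖x‖ < h x := hxj.1.2
      have h5 : v (i + 1) * ‖x‖ ≤ v j * ‖x‖ := mul_le_mul_of_nonneg_right h3 (norm_nonneg x)
      linarith
    have hDdisj : Set.Pairwise ↑(Finset.range N) (Function.onFun Disjoint D) := by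
      intro i _ j _ hij
      rcases lt_or_gt_of_ne hij with hlt | hgt
      · exact hDd i j hlt
      · exact (hDd j i hgt).symm
    have hDfin : ∀ i, μ (D i) ≠ ⊤ :=
      fun i => ne_top_of_le_ne_top hHfin (measure_mono (hDsub i))
    have hlow1 : ∑ i ∈ Finset.range N, (μ (D i)).toReal ≤ m := by
      have h1 : μ (⋃ i ∈ Finset.range N, D i) = ∑ i ∈ Finset.range N, μ (D i) :=
        measure_biUnion_finset hDdisj (fun i _ => hDmeas i)
      have h2 : μ (⋃ i ∈ Finset.range N, D i) ≤ μ {x : Fin d → ℝ | 1 < h x} :=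
        measure_mono (Set.iUnion₂_subset fun i _ => hDsub i)
      calc ∑ i ∈ Finset.range N, (μ (D i)).toReal
          = (∑ i ∈ Finset.range N, μ (D i)).toReal :=
            (ENNReal.toReal_sum (fun i _ => hDfin i)).symm
        _ = (μ (⋃ i ∈ Finset.range N, D i)).toReal := by rw [h1]
        _ ≤ m := ENNReal.toReal_mono hHfin h2
    have hlow2 : ∀ i : ℕ, (μ (D i)).toReal = c₀ * (v i ^ β * (σ (F i)).toReal) := by
      intro i
      have hr : (0:ℝ) < (v i)⁻¹ := inv_pos.2 (hvpos i)
      have hc := hcell ((v i)⁻¹) hr i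
      rw [hDdef]
      rw [hc, hΛs i, hinvpow (v i) (hvpos i)]
      ring
    have hlower : c₀ * ∫ θ in {θ : Fin d → ℝ | u₀ < h θ}, (max (h θ - δ) 0) ^ β ∂σ ≤ m := by
      rw [← sum_int _ hGlint, Finset.mul_sum]
      refine le_trans (Finset.sum_le_sum fun i _ => ?_) hlow1
      rw [hlow2 i]
      exact mul_le_mul_of_nonneg_left (hl3 i) hc0pos.le
    -- upper bound
    have hGucont : Continuous (fun θ => (h θ + δ) ^ β) :=
      cont_rpow_comp (hcont.add continuous_const) hβ.le
    have hGubd : ∀ᵐ θ ∂σ, ‖(h θ + δ) ^ β‖ ≤ (C + 1) ^ β := by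
      filter_upwards [hae] with θ hθ
      have h1 : h θ ≤ C := by have h2 := hCb θ; rw [hθ, mul_one] at h2; exact h2
      have h3 : (0:ℝ) ≤ h θ + δ := by linarith [hnonneg θ]
      rw [Real.norm_eq_abs, abs_of_nonneg (Real.rpow_nonneg h3 β)]
      exact Real.rpow_le_rpow h3 (by linarith) hβ.le
    have hGuint : Integrable (fun θ => (h θ + δ) ^ β) σ :=
      ⟨hGucont.aestronglyMeasurable, HasFiniteIntegral.of_bounded hGubd⟩
    have hu3 : ∀ i : ℕ, v (i + 1) ^ β * (σ (F i)).toReal ≤ ∫ θ in F i, (h θ + δ) ^ β ∂σ := by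
      intro i
      have hle : ∀ θ ∈ F i, v (i + 1) ^ β ≤ (h θ + δ) ^ β := by
        intro θ hθ
        have h1 : v i < h θ := hθ.1
        have h2 : v (i + 1) ≤ h θ + δ := le_trans (hvgap i) (by linarith)
        exact Real.rpow_le_rpow (hvpos (i + 1)).le h2 hβ.le
      calc v (i + 1) ^ β * (σ (F i)).toReal = ∫ _ in F i, (v (i + 1) ^ β) ∂σ := by
            rw [setIntegral_const, smul_eq_mul, mul_comm, Measure.real_def]
        _ ≤ ∫ θ in F i, (h θ + δ) ^ β ∂σ :=
            setIntegral_mono_on (integrableOn_const (measure_ne_top σ _))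
              hGuint.integrableOn (hFmeas i) hle
    set M : ℕ → Set (Fin d → ℝ) := fun i =>
      {x : Fin d → ℝ | (v (i + 1))⁻¹ < ‖x‖ ∧ v i * ‖x‖ < h x}
        \ {x : Fin d → ℝ | (v (i + 1))⁻¹ < ‖x‖ ∧ v (i + 1) * ‖x‖ < h x} with hMdef
    have hMfin : ∀ i, μ (M i) ≠ ⊤ := fun i =>
      ne_top_of_le_ne_top (hTfin ((v (i + 1))⁻¹) (inv_pos.2 (hvpos (i + 1))) (v i))
        (measure_mono Set.diff_subset)
    have hNSfin : μ {x : Fin d → ℝ | u₀⁻¹ < ‖x‖} ≠ ⊤ := by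
      refine hfin _ (measurableSet_lt measurable_const measurable_norm) ?_
      exact ⟨u₀⁻¹, inv_pos.2 hu₀, fun x hx => le_of_lt hx⟩
    have hcover : {x : Fin d → ℝ | 1 < h x}
        ⊆ {x : Fin d → ℝ | u₀⁻¹ < ‖x‖} ∪ ⋃ i ∈ Finset.range N, M i := by
      intro x hx
      have hx1 : (1:ℝ) < h x := hx
      have hx0 : 0 < ‖x‖ := by
        by_contra hcn
        push_neg at hcn
        have h0 : ‖x‖ = 0 := le_antisymm hcn (norm_nonneg x)
        have h2 := hCb x
        rw [h0, mul_zero] at h2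
        linarith
      by_cases hq : h x ≤ u₀ * ‖x‖
      · left
        have h1 : 1 < u₀ * ‖x‖ := lt_of_lt_of_le hx1 hq
        show u₀⁻¹ < ‖x‖
        rw [inv_eq_one_div, div_lt_iff₀ hu₀]
        linarith
      · right
        push_neg at hq
        have hxN : h x ≤ v N * ‖x‖ :=
          le_trans (hCb x) (mul_le_mul_of_nonneg_right (le_of_lt hvN) (norm_nonneg x))
        obtain ⟨i, hiN, hq1, hq2⟩ := exists_grid_index (v := fun j => v j * ‖x‖) N
          (by show v 0 * ‖x‖ < h x; rw [hv0]; exact hq) hxN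
        refine Set.mem_iUnion₂.2 ⟨i, Finset.mem_range.2 hiN, ⟨⟨?_, hq1⟩, ?_⟩⟩
        · have h1 : 1 < v (i + 1) * ‖x‖ := lt_of_lt_of_le hx1 hq2
          rw [inv_eq_one_div, div_lt_iff₀ (hvpos (i + 1))]
          linarith
        · rintro ⟨-, hcn⟩
          exact absurd hcn (not_lt.2 hq2)
    have hup1 : m ≤ (μ {x : Fin d → ℝ | u₀⁻¹ < ‖x‖}).toReal
        + ∑ i ∈ Finset.range N, (μ (M i)).toReal := by
      have h1 : μ {x : Fin d → ℝ | 1 < h x}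
          ≤ μ {x : Fin d → ℝ | u₀⁻¹ < ‖x‖} + ∑ i ∈ Finset.range N, μ (M i) := by
        refine (measure_mono hcover).trans ((measure_union_le _ _).trans ?_)
        exact add_le_add le_rfl (measure_biUnion_finset_le _ _)
      have h2 : (μ {x : Fin d → ℝ | u₀⁻¹ < ‖x‖} + ∑ i ∈ Finset.range N, μ (M i)) ≠ ⊤ := by
        refine ENNReal.add_ne_top.2 ⟨hNSfin, ?_⟩
        exact (ENNReal.sum_lt_top.2 fun i _ => lt_top_iff_ne_top.2 (hMfin i)).ne
      calc m ≤ (μ {x : Fin d → ℝ | u₀⁻¹ < ‖x‖} + ∑ i ∈ Finset.range N, μ (M i)).toReal :=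
            ENNReal.toReal_mono h2 h1
        _ = (μ {x : Fin d → ℝ | u₀⁻¹ < ‖x‖}).toReal
            + ∑ i ∈ Finset.range N, (μ (M i)).toReal := by
            rw [ENNReal.toReal_add hNSfin (ENNReal.sum_lt_top.2
              fun i _ => lt_top_iff_ne_top.2 (hMfin i)).ne,
              ENNReal.toReal_sum (fun i _ => hMfin i)]
    have hup2 : (μ {x : Fin d → ℝ | u₀⁻¹ < ‖x‖}).toReal = c₀ * u₀ ^ β := by
      rw [htailN u₀⁻¹ (inv_pos.2 hu₀), hinvpow u₀ hu₀]
    have hup3 : ∀ i : ℕ, (μ (M i)).toReal = c₀ * (v (i + 1) ^ β * (σ (F i)).toReal) := by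
      intro i
      have hr : (0:ℝ) < (v (i + 1))⁻¹ := inv_pos.2 (hvpos (i + 1))
      have hc := hcell ((v (i + 1))⁻¹) hr i
      rw [hMdef]
      rw [hc, hΛs i, hinvpow (v (i + 1)) (hvpos (i + 1))]
      ring
    have hupper : m ≤ c₀ * u₀ ^ β
        + c₀ * ∫ θ in {θ : Fin d → ℝ | u₀ < h θ}, (h θ + δ) ^ β ∂σ := by
      rw [← sum_int _ hGuint, Finset.mul_sum]
      refine le_trans hup1 ?_
      rw [hup2]
      refine add_le_add le_rfl ?_
      have e1 : ∑ i ∈ Finset.range N, (μ (M i)).toReal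
          = ∑ i ∈ Finset.range N, c₀ * (v (i + 1) ^ β * (σ (F i)).toReal) :=
        Finset.sum_congr rfl fun i _ => hup3 i
      rw [e1]
      exact Finset.sum_le_sum fun i _ => mul_le_mul_of_nonneg_left (hu3 i) hc0pos.le
    exact ⟨hlower, hupper⟩
  -- pass to the limit in the mesh, for a fixed good level
  have hrpowcont : ∀ a : ℝ, ContinuousAt (fun y : ℝ => y ^ β) a :=
    fun a => Real.continuousAt_rpow_const _ _ (Or.inr hβ.le)
  have honedivpos : ∀ n : ℕ, (0:ℝ) < 1 / ((n:ℝ) + 1) := fun n => by positivity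
  have honedivle : ∀ n : ℕ, (1:ℝ) / ((n:ℝ) + 1) ≤ 1 := by
    intro n
    rw [div_le_one (by positivity)]
    linarith [Nat.cast_nonneg (α := ℝ) n]
  have honediv : Tendsto (fun n : ℕ => 1 / ((n:ℝ) + 1)) atTop (nhds 0) :=
    tendsto_one_div_add_atTop_nhds_zero_nat
  have step1 : ∀ u₀ ∈ U, c₀ * ∫ θ in {θ : Fin d → ℝ | u₀ < h θ}, h θ ^ β ∂σ ≤ m ∧
      m ≤ c₀ * u₀ ^ β + c₀ * ∫ θ in {θ : Fin d → ℝ | u₀ < h θ}, h θ ^ β ∂σ := by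
    intro u₀ hu₀U
    have hhm : MeasurableSet {θ : Fin d → ℝ | u₀ < h θ} :=
      measurableSet_lt measurable_const hcont.measurable
    haveI : IsFiniteMeasure (σ.restrict {θ : Fin d → ℝ | u₀ < h θ}) := by
      constructor
      rw [Measure.restrict_apply MeasurableSet.univ]
      exact lt_of_le_of_lt (measure_mono Set.inter_subset_right) (measure_lt_top σ _)
    have haerestrict : ∀ᵐ θ ∂(σ.restrict {θ : Fin d → ℝ | u₀ < h θ}), h θ ≤ C := by
      refine ae_restrict_of_ae ?_
      filter_upwards [hae] with θ hθ
      have h2 := hCb θ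
      rwa [hθ, mul_one] at h2
    -- lower list
    have hlimGl : Tendsto
        (fun n : ℕ => ∫ θ in {θ : Fin d → ℝ | u₀ < h θ}, (max (h θ - 1 / (n + 1)) 0) ^ β ∂σ)
        atTop (nhds (∫ θ in {θ : Fin d → ℝ | u₀ < h θ}, h θ ^ β ∂σ)) := by
      refine tendsto_integral_of_dominated_convergence (fun _ => (C + 1) ^ β)
        (fun n => (cont_rpow_comp ((hcont.sub continuous_const).max continuous_const)
          hβ.le).aestronglyMeasurable) (integrable_const _) (fun n => ?_) ?_
      · filter_upwards [haerestrict] with θ hθ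
        have h3 : (0:ℝ) ≤ max (h θ - 1 / (n + 1)) 0 := le_max_right _ _
        rw [Real.norm_eq_abs, abs_of_nonneg (Real.rpow_nonneg h3 β)]
        refine Real.rpow_le_rpow h3 (max_le ?_ (by positivity)) hβ.le
        have := honedivpos n
        linarith
      · refine Filter.Eventually.of_forall fun θ => ?_
        have hbase : Tendsto (fun n : ℕ => max (h θ - 1 / ((n:ℝ) + 1)) 0) atTop
            (nhds (h θ)) := by
          have h1 : Tendsto (fun n : ℕ => h θ - 1 / ((n:ℝ) + 1)) atTop (nhds (h θ)) := by
            simpa using tendsto_const_nhds.sub honediv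
          have h2 := h1.max (tendsto_const_nhds (x := (0:ℝ)))
          rwa [max_eq_left (hnonneg θ)] at h2
        exact ((hrpowcont (h θ)).tendsto).comp hbase
    have hlimGu : Tendsto
        (fun n : ℕ => ∫ θ in {θ : Fin d → ℝ | u₀ < h θ}, (h θ + 1 / (n + 1)) ^ β ∂σ)
        atTop (nhds (∫ θ in {θ : Fin d → ℝ | u₀ < h θ}, h θ ^ β ∂σ)) := by
      refine tendsto_integral_of_dominated_convergence (fun _ => (C + 1) ^ β)
        (fun n => (cont_rpow_comp (hcont.add continuous_const) hβ.le).aestronglyMeasurable)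
        (integrable_const _) (fun n => ?_) ?_
      · filter_upwards [haerestrict] with θ hθ
        have h3 : (0:ℝ) ≤ h θ + 1 / (n + 1) := by
          have := honedivpos n
          linarith [hnonneg θ]
        rw [Real.norm_eq_abs, abs_of_nonneg (Real.rpow_nonneg h3 β)]
        refine Real.rpow_le_rpow h3 ?_ hβ.le
        have := honedivle n
        linarith
      · refine Filter.Eventually.of_forall fun θ => ?_
        have hbase : Tendsto (fun n : ℕ => h θ + 1 / ((n:ℝ) + 1)) atTop (nhds (h θ)) := by
          simpa using tendsto_const_nhds.add honediv
        exact ((hrpowcont (h θ)).tendsto).comp hbase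
    constructor
    · refine le_of_tendsto (hlimGl.const_mul c₀) ?_
      exact Filter.Eventually.of_forall fun n =>
        (bounds u₀ hu₀U (1 / (n + 1)) (honedivpos n) (honedivle n)).1
    · refine ge_of_tendsto ((tendsto_const_nhds (x := c₀ * u₀ ^ β)).add
        (hlimGu.const_mul c₀)) ?_
      exact Filter.Eventually.of_forall fun n =>
        (bounds u₀ hu₀U (1 / (n + 1)) (honedivpos n) (honedivle n)).2
  -- now let the good level go to zero
  have hzex : ∀ k : ℕ, ∃ x, x ∈ U ∧ 0 < x ∧ x < 1 / ((k:ℝ) + 1) := by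
    intro k
    obtain ⟨x, hxU, hx1, hx2⟩ := good_dense hUc (le_refl (0:ℝ)) (honedivpos k)
    exact ⟨x, hxU, hx1, hx2⟩
  choose z hzU hz0 hz1 using hzex
  have hztend : Tendsto z atTop (nhds 0) :=
    tendsto_of_tendsto_of_tendsto_of_le_of_le tendsto_const_nhds honediv
      (fun k => (hz0 k).le) (fun k => (hz1 k).le)
  have hJ : Tendsto (fun k : ℕ => ∫ θ in {θ : Fin d → ℝ | z k < h θ}, h θ ^ β ∂σ) atTop
      (nhds (∫ θ, h θ ^ β ∂σ)) := by
    have hmk : ∀ k : ℕ, MeasurableSet {θ : Fin d → ℝ | z k < h θ} :=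
      fun k => measurableSet_lt measurable_const hcont.measurable
    have hJk : ∀ k : ℕ, ∫ θ in {θ : Fin d → ℝ | z k < h θ}, h θ ^ β ∂σ
        = ∫ θ, Set.indicator {θ : Fin d → ℝ | z k < h θ} (fun θ => h θ ^ β) θ ∂σ :=
      fun k => (integral_indicator (hmk k)).symm
    simp only [hJk]
    refine tendsto_integral_of_dominated_convergence (fun _ => C ^ β)
      (fun k => ((cont_rpow_comp hcont hβ.le).aestronglyMeasurable).indicator (hmk k))
      (integrable_const _) (fun k => ?_) ?_
    · filter_upwards [hae] with θ hθ
      have h1 : h θ ≤ C := by have h2 := hCb θ; rwa [hθ, mul_one] at h2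
      have h2 : h θ ^ β ≤ C ^ β := Real.rpow_le_rpow (hnonneg θ) h1 hβ.le
      by_cases hc : θ ∈ {θ : Fin d → ℝ | z k < h θ}
      · rw [Set.indicator_of_mem hc, Real.norm_eq_abs,
          abs_of_nonneg (Real.rpow_nonneg (hnonneg θ) β)]
        exact h2
      · rw [Set.indicator_of_notMem hc, norm_zero]
        exact Real.rpow_nonneg hC.le β
    · refine Filter.Eventually.of_forall fun θ => ?_
      rcases lt_or_eq_of_le (hnonneg θ) with hpos | hzero
      · have hev : ∀ᶠ k : ℕ in atTop,
            Set.indicator {θ : Fin d → ℝ | z k < h θ} (fun θ => h θ ^ β) θ = h θ ^ β := by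
          obtain ⟨n, hn⟩ := exists_nat_one_div_lt hpos
          refine Filter.eventually_atTop.2 ⟨n, fun k hk => ?_⟩
          have h1 : z k < h θ := by
            have h2 : (1:ℝ) / ((k:ℝ) + 1) ≤ 1 / ((n:ℝ) + 1) := by
              apply one_div_le_one_div_of_le (by positivity)
              have := Nat.cast_le (α := ℝ) |>.2 hk
              linarith
            linarith [hz1 k]
          exact Set.indicator_of_mem (show θ ∈ {θ : Fin d → ℝ | z k < h θ} from h1) _
        exact tendsto_const_nhds.congr' (hev.mono fun k hk => hk.symm)
      · have hzeq : ∀ k : ℕ,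
            Set.indicator {θ : Fin d → ℝ | z k < h θ} (fun θ => h θ ^ β) θ = h θ ^ β := by
          intro k
          have h1 : θ ∉ {θ : Fin d → ℝ | z k < h θ} := by
            intro hc
            have : z k < h θ := hc
            rw [← hzero] at this
            exact absurd this (not_lt.2 (hz0 k).le)
          rw [Set.indicator_of_notMem h1, ← hzero, Real.zero_rpow (ne_of_gt hβ)]
        simp only [hzeq]
        exact tendsto_const_nhds
  have hlbfin : c₀ * ∫ θ, h θ ^ β ∂σ ≤ m :=
    le_of_tendsto (hJ.const_mul c₀)
      (Filter.Eventually.of_forall fun k => (step1 (z k) (hzU k)).1)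
  have hubfin : m ≤ c₀ * ∫ θ, h θ ^ β ∂σ := by
    have hzpow : Tendsto (fun k : ℕ => c₀ * z k ^ β) atTop (nhds 0) := by
      have h1 : Tendsto (fun k : ℕ => z k ^ β) atTop (nhds ((0:ℝ) ^ β)) :=
        hztend.rpow_const (Or.inr hβ.le)
      rw [Real.zero_rpow (ne_of_gt hβ)] at h1
      simpa using h1.const_mul c₀
    have hT : Tendsto (fun k : ℕ => c₀ * z k ^ β + c₀ * ∫ θ in {θ : Fin d → ℝ | z k < h θ},
        h θ ^ β ∂σ) atTop (nhds (0 + c₀ * ∫ θ, h θ ^ β ∂σ)) :=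
      hzpow.add (hJ.const_mul c₀)
    rw [zero_add] at hT
    exact ge_of_tendsto hT
      (Filter.Eventually.of_forall fun k => (step1 (z k) (hzU k)).2)
  exact le_antisymm hubfin hlbfin

/-- if `X ∈ RV_β(ℝ^d,{b(t)},μ)` with angular measure `σ`, then for every
continuous, nonnegative, 1-homogeneous `h`, one has
`b(t)·P[h(X) > t] → c_μ · E[h(Θ)^β]` where `c_μ = μ{x : ‖x‖ > 1}` and `Θ ∼ σ`. -/
theorem stmt0 {Ω : Type*} [MeasurableSpace Ω] (P : Measure Ω) [IsProbabilityMeasure P]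
    {d : ℕ} (X : Ω → Fin d → ℝ) (β : ℝ) (b : ℝ → ℝ)
    (μ σ : Measure (Fin d → ℝ))
    (hX : IsMRVIdx P X β b μ) (hσ : IsAngular P X σ)
    (h : (Fin d → ℝ) → ℝ) (hcont : Continuous h) (hnonneg : ∀ x, 0 ≤ h x)
    (hhom : ∀ c : ℝ, 0 < c → ∀ x, h (c • x) = c * h x) :
    Tendsto (fun t : ℝ => b t * (P {ω | t < h (X ω)}).toReal) atTop
      (nhds ((μ {x | 1 < ‖x‖}).toReal * ∫ θ, h θ ^ β ∂σ)) := by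
  classical
  have hβ : 0 < β := hX.2.1
  have h0 : h 0 = 0 := by
    have h2 := hhom 2 two_pos 0
    rw [smul_zero] at h2
    linarith
  by_cases hd : ∃ x : Fin d → ℝ, x ≠ 0
  · obtain ⟨x₀, hx₀⟩ := hd
    have hx₀n : ‖x₀‖ ≠ 0 := norm_ne_zero_iff.2 hx₀
    set y₀ : Fin d → ℝ := ‖x₀‖⁻¹ • x₀ with hy₀
    have hy₀mem : y₀ ∈ Metric.sphere (0 : Fin d → ℝ) 1 := by
      rw [mem_sphere_zero_iff_norm, hy₀, norm_smul, norm_inv, norm_norm,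
        inv_mul_cancel₀ hx₀n]
    obtain ⟨θmax, hθmem, hθmax⟩ := (isCompact_sphere (0 : Fin d → ℝ) 1).exists_isMaxOn
      ⟨y₀, hy₀mem⟩ hcont.continuousOn
    set C := h θmax with hCdef
    have hCb : ∀ x, h x ≤ C * ‖x‖ := by
      intro x
      by_cases hx : x = 0
      · rw [hx, norm_zero, mul_zero, h0]
      · have hxn : 0 < ‖x‖ := norm_pos_iff.2 hx
        have hunit : (‖x‖⁻¹ • x) ∈ Metric.sphere (0 : Fin d → ℝ) 1 := by
          rw [mem_sphere_zero_iff_norm, norm_smul, norm_inv, norm_norm,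
            inv_mul_cancel₀ (ne_of_gt hxn)]
        have hle : h (‖x‖⁻¹ • x) ≤ C := hθmax hunit
        have hxeq : h x = ‖x‖ * h (‖x‖⁻¹ • x) := by
          have := hhom ‖x‖ hxn (‖x‖⁻¹ • x)
          rw [smul_smul, mul_inv_cancel₀ (ne_of_gt hxn), one_smul] at this
          exact this
        rw [hxeq, mul_comm C ‖x‖]
        exact mul_le_mul_of_nonneg_left hle hxn.le
    by_cases hCpos : 0 < C
    · have hident := grid_identity hX hσ hcont hnonneg hhom hCpos hCb
      have hconv := h_tail hX hcont hhom hCpos hCb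
      rw [hident] at hconv
      exact hconv
    · have hC0 : C = 0 := le_antisymm (not_lt.1 hCpos) (hnonneg θmax)
      have hh0 : ∀ x, h x = 0 := by
        intro x
        have h1 := hCb x
        rw [hC0, zero_mul] at h1
        exact le_antisymm h1 (hnonneg x)
      have hint0 : ∫ θ, h θ ^ β ∂σ = 0 := by
        have hfeq : (fun θ : Fin d → ℝ => h θ ^ β) = fun _ => (0:ℝ) :=
          funext fun θ => by rw [hh0 θ, Real.zero_rpow (ne_of_gt hβ)]
        rw [hfeq, integral_zero]
      rw [hint0, mul_zero]
      refine Tendsto.congr' ?_ tendsto_const_nhds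
      filter_upwards [eventually_gt_atTop (0:ℝ)] with t ht
      have hempty : {ω | t < h (X ω)} = ∅ := by
        refine Set.eq_empty_iff_forall_notMem.2 fun ω hω => ?_
        rw [Set.mem_setOf_eq, hh0] at hω
        linarith
      rw [hempty, measure_empty]
      simp
  · push_neg at hd
    exfalso
    have huniv : μ Set.univ = 0 := by
      have hsub : (Set.univ : Set (Fin d → ℝ)) ⊆ {0} := fun x _ => hd x
      exact le_antisymm (le_trans (measure_mono hsub) (le_of_eq hX.1.2.2.1)) (zero_le)
    exact hX.1.2.1 (Measure.measure_univ_eq_zero.mp huniv)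
end
end

section
/- Let P_1, …, P_d be Uniform(0,1) random variables and set X_i := 1/(1 − P_i), so each X_i is standard 1-Pareto. Assume that the vector X = (X_1, …, X_d) ∈ RV_{β=1}(ℝ^d, {b(t)}, μ). Then for all weights w_1, …, w_d ≥ 0 with Σ_{i=1}^d w_i = 1, lim_{t→∞} P[Σ_{i=1}^d w_i X_i > t] / P[X_1 > t] = 1. In other words, the linear Pareto combination test is asymptotically calibrated for every multivariate regularly varying dependence structure. -/
open MeasureTheory Filter Topology
open scoped Pointwise

noncomputable section

section Helpers

variable {Ω : Type*} [MeasurableSpace Ω]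

/-- bounded nonneg min is integrable. -/
lemma integrable_min_const (P : Measure Ω) [IsProbabilityMeasure P] {Y : Ω → ℝ}
    (hY : AEMeasurable Y P) (hY0 : ∀ᵐ ω ∂P, 0 ≤ Y ω) {T : ℝ} (hT : 0 ≤ T) :
    Integrable (fun ω => min (Y ω) T) P := by
  refine Integrable.mono' (integrable_const T) (hY.min aemeasurable_const).aestronglyMeasurable ?_
  filter_upwards [hY0] with ω h0
  rw [Real.norm_eq_abs, abs_le]
  exact ⟨by nlinarith [le_min h0 hT], min_le_right _ _⟩

/-- Layer-cake formula for truncated expectation. -/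
lemma integral_min_eq (P : Measure Ω) [IsProbabilityMeasure P] {Y : Ω → ℝ}
    (hY : AEMeasurable Y P) (hY0 : ∀ᵐ ω ∂P, 0 ≤ Y ω) {T : ℝ} (hT : 0 < T) :
    ∫ ω, min (Y ω) T ∂P = ∫ t in Set.Ioo (0:ℝ) T, (P {ω | t < Y ω}).toReal := by
  have hint : Integrable (fun ω => min (Y ω) T) P := integrable_min_const P hY hY0 hT.le
  have hnn : 0 ≤ᵐ[P] fun ω => min (Y ω) T := by
    filter_upwards [hY0] with ω h using le_min h hT.le
  rw [hint.integral_eq_integral_meas_lt hnn]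
  simp only [measureReal_def]
  have h1 : ∀ t ∈ Set.Ioi (0:ℝ),
      (P {a | t < min (Y a) T}).toReal
        = Set.indicator (Set.Ioo (0:ℝ) T) (fun t => (P {ω | t < Y ω}).toReal) t := by
    intro t ht
    by_cases htT : t < T
    · rw [Set.indicator_of_mem (Set.mem_Ioo.mpr ⟨Set.mem_Ioi.mp ht, htT⟩)]
      congr 2
      ext a
      simp only [Set.mem_setOf_eq, lt_min_iff, htT, and_true]
    · rw [Set.indicator_of_notMem (by simp [Set.mem_Ioo, htT])]
      have h0 : {a | t < min (Y a) T} = (∅ : Set Ω) := by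
        ext a
        simp only [Set.mem_setOf_eq, lt_min_iff, Set.mem_empty_iff_false, iff_false, not_and]
        intro _; exact htT
      rw [h0, measure_empty, ENNReal.toReal_zero]
  rw [setIntegral_congr_fun measurableSet_Ioi h1, integral_indicator measurableSet_Ioo,
    Measure.restrict_restrict measurableSet_Ioo,
    Set.inter_eq_left.mpr (fun x hx => hx.1)]

lemma integrableOn_of_bounded_one {s : Set ℝ} (hs : MeasurableSet s) (hvol : volume s < ⊤)
    {f : ℝ → ℝ} (hf : Measurable f) (hbd : ∀ t ∈ s, |f t| ≤ 1) : IntegrableOn f s := by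
  refine Integrable.mono' (g := fun _ => (1:ℝ)) (integrableOn_const hvol.ne)
    hf.aestronglyMeasurable.restrict ?_
  rw [ae_restrict_iff' hs]
  exact Eventually.of_forall fun t ht => by rw [Real.norm_eq_abs]; exact hbd t ht

/-- Exact truncated expectation for the standard Pareto tail. -/
lemma integral_Ioo_min_inv {T : ℝ} (hT : 1 ≤ T) :
    ∫ t in Set.Ioo (0:ℝ) T, min t⁻¹ 1 = 1 + Real.log T := by
  have hmeas : Measurable fun t : ℝ => min t⁻¹ 1 := measurable_inv.min measurable_const
  have hsplit : Set.Ioo (0:ℝ) T = Set.Ioo 0 1 ∪ Set.Ico 1 T :=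
    (Set.Ioo_union_Ico_eq_Ioo one_pos hT).symm
  have hdisj : Disjoint (Set.Ioo (0:ℝ) 1) (Set.Ico 1 T) :=
    Set.disjoint_left.mpr fun t h1 h2 => absurd h2.1 (not_le.mpr h1.2)
  have hint1 : IntegrableOn (fun t : ℝ => min t⁻¹ 1) (Set.Ioo 0 1) := by
    refine integrableOn_of_bounded_one measurableSet_Ioo (by simp [Real.volume_Ioo]) hmeas
      fun t ht => abs_le.mpr ⟨?_, min_le_right _ _⟩
    have : (0:ℝ) ≤ min t⁻¹ 1 := le_min (inv_nonneg.mpr ht.1.le) one_pos.le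
    linarith
  have hint2 : IntegrableOn (fun t : ℝ => min t⁻¹ 1) (Set.Ico 1 T) := by
    refine integrableOn_of_bounded_one measurableSet_Ico
      (by rw [Real.volume_Ico]; exact ENNReal.ofReal_lt_top) hmeas
      fun t ht => abs_le.mpr ⟨?_, min_le_right _ _⟩
    have : (0:ℝ) ≤ min t⁻¹ 1 := le_min (inv_nonneg.mpr (by linarith [ht.1])) one_pos.le
    linarith
  rw [hsplit, setIntegral_union hdisj measurableSet_Ico hint1 hint2]
  have e1 : ∫ t in Set.Ioo (0:ℝ) 1, min t⁻¹ 1 = 1 := by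
    rw [setIntegral_congr_fun measurableSet_Ioo
      (fun t ht => min_eq_right ((one_le_inv₀ ht.1).mpr ht.2.le))]
    simp [Real.volume_Ioo]
  have e2 : ∫ t in Set.Ico (1:ℝ) T, min t⁻¹ 1 = Real.log T := by
    rw [setIntegral_congr_fun measurableSet_Ico
      (fun t ht => min_eq_left (inv_le_one_of_one_le₀ ht.1))]
    rw [integral_Ico_eq_integral_Ioo, ← integral_Ioc_eq_integral_Ioo,
      ← intervalIntegral.integral_of_le hT, integral_inv_of_pos one_pos (lt_of_lt_of_le one_pos hT)]
    rw [div_one]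
  rw [e1, e2]

end Helpers


/-- The Abelian direction: if `t·G(t) → c` then `(∫_0^T G)/log T → c`. -/
lemma abelian_log (G : ℝ → ℝ) (hGmeas : Measurable G) (hG0 : ∀ t, 0 ≤ G t) (hG1 : ∀ t, G t ≤ 1)
    {c : ℝ} (hc : Tendsto (fun t => t * G t) atTop (nhds c)) :
    Tendsto (fun T => (∫ t in Set.Ioo (0:ℝ) T, G t) / Real.log T) atTop (nhds c) := by
  have hGbd : ∀ t : ℝ, |G t| ≤ 1 := fun t => abs_le.mpr ⟨by linarith [hG0 t], hG1 t⟩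
  have hGint : ∀ a b : ℝ, IntegrableOn G (Set.Ioo a b) := fun a b =>
    integrableOn_of_bounded_one measurableSet_Ioo (by simp [Real.volume_Ioo]) hGmeas
      fun t _ => hGbd t
  have hGint' : ∀ a b : ℝ, IntegrableOn G (Set.Ico a b) := fun a b =>
    integrableOn_of_bounded_one measurableSet_Ico
      (by rw [Real.volume_Ico]; exact ENNReal.ofReal_lt_top) hGmeas fun t _ => hGbd t
  rw [Metric.tendsto_atTop]
  intro ε hε
  obtain ⟨N, hN⟩ := Metric.tendsto_atTop.mp hc (ε/2) (half_pos hε)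
  set M : ℝ := max N 1 with hMdef
  have hM1 : (1:ℝ) ≤ M := le_max_right _ _
  have hM0 : (0:ℝ) < M := lt_of_lt_of_le one_pos hM1
  have hlogM : 0 ≤ Real.log M := Real.log_nonneg hM1
  -- integral of inverse over [M,T)
  have hinv_int : ∀ T : ℝ, M < T → (∫ t in Set.Ico M T, t⁻¹) = Real.log T - Real.log M := by
    intro T hT
    rw [integral_Ico_eq_integral_Ioo, ← integral_Ioc_eq_integral_Ioo,
      ← intervalIntegral.integral_of_le hT.le, integral_inv_of_pos hM0 (hM0.trans hT),
      Real.log_div (by linarith : T ≠ 0) (by linarith : M ≠ 0)]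
  have hinv_integrable : ∀ T : ℝ, M < T → IntegrableOn (fun t : ℝ => t⁻¹) (Set.Ico M T) := by
    intro T hT
    refine integrableOn_of_bounded_one measurableSet_Ico
      (by rw [Real.volume_Ico]; exact ENNReal.ofReal_lt_top) measurable_inv fun t ht => ?_
    rw [abs_of_nonneg (inv_nonneg.mpr (by linarith [ht.1] : (0:ℝ) ≤ t))]
    exact inv_le_one_of_one_le₀ (le_trans hM1 ht.1)
  set K : ℝ := M + |c| * Real.log M with hKdef
  have hK0 : 0 < K := by positivity
  -- main estimate
  have key : ∀ T : ℝ, M < T → |(∫ t in Set.Ioo (0:ℝ) T, G t) - c * Real.log T|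
      ≤ K + (ε/2) * Real.log T := by
    intro T hT
    have hsplit : Set.Ioo (0:ℝ) T = Set.Ioo 0 M ∪ Set.Ico M T :=
      (Set.Ioo_union_Ico_eq_Ioo hM0 hT.le).symm
    have hdisj : Disjoint (Set.Ioo (0:ℝ) M) (Set.Ico M T) :=
      Set.disjoint_left.mpr fun t h1 h2 => absurd h2.1 (not_le.mpr h1.2)
    have hIsum : (∫ t in Set.Ioo (0:ℝ) T, G t)
        = (∫ t in Set.Ioo (0:ℝ) M, G t) + ∫ t in Set.Ico M T, G t := by
      rw [hsplit, setIntegral_union hdisj measurableSet_Ico (hGint 0 M) (hGint' M T)]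
    set A := ∫ t in Set.Ioo (0:ℝ) M, G t with hA
    set B := ∫ t in Set.Ico M T, G t with hB
    have hA0 : 0 ≤ A := setIntegral_nonneg measurableSet_Ioo fun t _ => hG0 t
    have hAM : A ≤ M := by
      calc A ≤ ∫ t in Set.Ioo (0:ℝ) M, (1:ℝ) :=
          setIntegral_mono_on (hGint 0 M) (integrableOn_const (by simp [Real.volume_Ioo]))
            measurableSet_Ioo fun t _ => hG1 t
        _ = M := by simp [Real.volume_Ioo, hM0.le]
    -- middle piece
    have hmid : |B - c * (Real.log T - Real.log M)| ≤ (ε/2) * (Real.log T - Real.log M) := by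
      have hBc : B - c * (Real.log T - Real.log M)
          = ∫ t in Set.Ico M T, (G t - c * t⁻¹) := by
        rw [integral_sub (hGint' M T) ((hinv_integrable T hT).const_mul c),
          integral_const_mul, hinv_int T hT]
      rw [hBc]
      have hptwise : ∀ t ∈ Set.Ico M T, |G t - c * t⁻¹| ≤ (ε/2) * t⁻¹ := by
        intro t ht
        have ht0 : (0:ℝ) < t := lt_of_lt_of_le hM0 ht.1
        have htN : N ≤ t := le_trans (le_max_left _ _) ht.1
        have hdist := hN t htN
        rw [Real.dist_eq] at hdist
        have : G t - c * t⁻¹ = (t * G t - c) * t⁻¹ := by field_simp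
        rw [this, abs_mul, abs_of_nonneg (inv_nonneg.mpr ht0.le)]
        exact mul_le_mul_of_nonneg_right hdist.le (inv_nonneg.mpr ht0.le)
      calc |∫ t in Set.Ico M T, (G t - c * t⁻¹)|
            = ‖∫ t in Set.Ico M T, (G t - c * t⁻¹)‖ := (Real.norm_eq_abs _).symm
        _ ≤ ∫ t in Set.Ico M T, ‖G t - c * t⁻¹‖ := norm_integral_le_integral_norm _
        _ ≤ ∫ t in Set.Ico M T, (ε/2) * t⁻¹ := by
            refine setIntegral_mono_on ?_ ((hinv_integrable T hT).const_mul (ε/2))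
              measurableSet_Ico fun t ht => by
                rw [Real.norm_eq_abs]; exact hptwise t ht
            exact ((hGint' M T).sub ((hinv_integrable T hT).const_mul c)).norm
        _ = (ε/2) * (Real.log T - Real.log M) := by
            rw [integral_const_mul, hinv_int T hT]
    have hlogT : Real.log M ≤ Real.log T := Real.log_le_log hM0 hT.le
    have hlogT0 : 0 ≤ Real.log T := le_trans hlogM hlogT
    calc |(∫ t in Set.Ioo (0:ℝ) T, G t) - c * Real.log T|
        = |A + (B - c * (Real.log T - Real.log M)) + (- c * Real.log M)| := by
          rw [hIsum]; ring_nf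
      _ ≤ |A + (B - c * (Real.log T - Real.log M))| + |(- c * Real.log M)| := abs_add_le _ _
      _ ≤ |A| + |B - c * (Real.log T - Real.log M)| + |(- c * Real.log M)| := by
          gcongr; exact abs_add_le _ _
      _ ≤ M + (ε/2) * (Real.log T - Real.log M) + |c| * Real.log M := by
          have h1 : |A| ≤ M := by rw [abs_of_nonneg hA0]; exact hAM
          have h3 : |(- c * Real.log M)| = |c| * Real.log M := by
            rw [neg_mul, abs_neg, abs_mul, abs_of_nonneg hlogM]
          linarith [hmid]
      _ ≤ K + (ε/2) * Real.log T := by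
          rw [hKdef]
          have : (ε/2) * (Real.log T - Real.log M) ≤ (ε/2) * Real.log T := by
            have := half_pos hε
            nlinarith
          linarith
  -- conclude
  have hTbig : ∀ᶠ T in (atTop : Filter ℝ), M < T ∧ 2 * K / ε + 1 ≤ Real.log T := by
    filter_upwards [eventually_gt_atTop M, eventually_ge_atTop (Real.exp (2 * K / ε + 1))]
      with T h1 h2
    refine ⟨h1, ?_⟩
    calc 2 * K / ε + 1 = Real.log (Real.exp (2 * K / ε + 1)) := (Real.log_exp _).symm
      _ ≤ Real.log T := Real.log_le_log (Real.exp_pos _) h2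
  rw [eventually_atTop] at hTbig
  obtain ⟨T₀, hT₀⟩ := hTbig
  refine ⟨T₀, fun T hT => ?_⟩
  obtain ⟨h1, h2⟩ := hT₀ T hT
  have hlogpos : 0 < Real.log T := by
    have : (0:ℝ) < 2 * K / ε + 1 := by positivity
    linarith
  rw [Real.dist_eq]
  have hrw : (∫ t in Set.Ioo (0:ℝ) T, G t) / Real.log T - c
      = ((∫ t in Set.Ioo (0:ℝ) T, G t) - c * Real.log T) / Real.log T := by
    field_simp
  rw [hrw, abs_div, abs_of_pos hlogpos, div_lt_iff₀ hlogpos]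
  calc |(∫ t in Set.Ioo (0:ℝ) T, G t) - c * Real.log T| ≤ K + (ε/2) * Real.log T :=
      key T h1
    _ < ε * Real.log T := by
      have hK2 : K < (ε/2) * Real.log T := by
        rw [← div_lt_iff₀' (half_pos hε)]
        have : K / (ε/2) = 2 * K / ε := by field_simp
        rw [this]; linarith
      linarith


set_option maxHeartbeats 2000000 in
/-- Key halfspace limit lemma for MRV vectors with β = 1. -/
lemma halfspace_limit {Ω : Type*} [MeasurableSpace Ω] (P : Measure Ω)
    {d : ℕ} (X : Ω → Fin d → ℝ) (b : ℝ → ℝ) (μ : Measure (Fin d → ℝ))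
    (hmrv : IsMRV P X b μ) {l : ℝ → ℝ} (hl : SlowlyVarying l) (hbl : ∀ t > 0, b t = l t * t)
    (v : Fin d → ℝ) (hv : v ≠ 0) :
    ∃ c : ℝ, 0 ≤ c ∧
      Tendsto (fun t => b t * (P {ω | t < ∑ i, v i * X ω i}).toReal) atTop (nhds c) ∧
      (c = 0 → ∀ u : ℝ, 0 < u → μ {x | u < ∑ i, v i * x i} = 0) := by
  obtain ⟨hb, hμne, hμz, hfin, hconv⟩ := hmrv
  set φ : (Fin d → ℝ) → ℝ := fun x => ∑ i, v i * x i with hφdef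
  have hφ : Continuous φ := continuous_finset_sum _ fun i _ => continuous_const.mul (continuous_apply i)
  set V : ℝ := ∑ i, |v i| with hVdef
  have hV : 0 < V := by
    obtain ⟨i, hi⟩ := Function.ne_iff.mp hv
    exact Finset.sum_pos' (fun j _ => abs_nonneg _) ⟨i, Finset.mem_univ i, abs_pos.mpr hi⟩
  have hφbd : ∀ x : Fin d → ℝ, φ x ≤ V * ‖x‖ := by
    intro x
    calc φ x ≤ ∑ i, |v i * x i| := Finset.sum_le_sum fun i _ => le_abs_self _
      _ ≤ ∑ i, |v i| * ‖x‖ := by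
          refine Finset.sum_le_sum fun i _ => ?_
          rw [abs_mul]
          refine mul_le_mul_of_nonneg_left ?_ (abs_nonneg _)
          have := norm_le_pi_norm x i
          rwa [Real.norm_eq_abs] at this
      _ = V * ‖x‖ := by rw [← Finset.sum_mul]
  set A : ℝ → Set (Fin d → ℝ) := fun u => {x | u < φ x} with hAdef
  have hmeasA : ∀ u, MeasurableSet (A u) := fun u =>
    measurableSet_lt measurable_const hφ.measurable
  have hbddA : ∀ u : ℝ, 0 < u → BddAwayZero (A u) := by
    intro u hu
    refine ⟨u / V, div_pos hu hV, fun x hx => ?_⟩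
    have h1 : u < V * ‖x‖ := lt_of_lt_of_le hx (hφbd x)
    rw [div_le_iff₀ hV]
    nlinarith
  have hAfin : ∀ u : ℝ, 0 < u → μ (A u) ≠ ⊤ := fun u hu => hfin _ (hmeasA u) (hbddA u hu)
  have hAmono : ∀ {u u' : ℝ}, u ≤ u' → A u' ⊆ A u := fun h x hx => lt_of_le_of_lt h hx
  set f : ℝ → ℝ := fun s => (μ (A (Real.exp s))).toReal with hfdef
  have hf0 : ∀ s, 0 ≤ f s := fun s => ENNReal.toReal_nonneg
  have hfanti : Antitone f := by
    intro s s' hss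
    have hsub : μ (A (Real.exp s')) ≤ μ (A (Real.exp s)) :=
      measure_mono (hAmono (Real.exp_le_exp.mpr hss))
    exact (ENNReal.toReal_le_toReal (hAfin _ (Real.exp_pos s')) (hAfin _ (Real.exp_pos s))).mpr hsub
  -- frontier is null at continuity points of f
  have hfront : ∀ s : ℝ, ContinuousAt f s → μ (frontier (A (Real.exp s))) = 0 := by
    intro s hs
    have hsub : frontier (A (Real.exp s)) ⊆ {x | Real.exp s = φ x} :=
      frontier_lt_subset_eq continuous_const hφ
    set Z := {x | Real.exp s = φ x} with hZdef
    have hZmeas : MeasurableSet Z := (isClosed_eq continuous_const hφ).measurableSet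
    have hZbdd : BddAwayZero Z := by
      refine ⟨Real.exp s / V, div_pos (Real.exp_pos s) hV, fun x hx => ?_⟩
      have h1 : Real.exp s ≤ V * ‖x‖ := hx ▸ hφbd x
      rw [div_le_iff₀ hV]
      nlinarith
    have hZfin : μ Z ≠ ⊤ := hfin _ hZmeas hZbdd
    have hkey : ∀ n : ℕ, (μ Z).toReal ≤ f (s - ((n:ℝ)+1)⁻¹) - f s := by
      intro n
      set δ : ℝ := ((n:ℝ)+1)⁻¹ with hδdef
      have hδ : 0 < δ := by positivity
      have hlt : Real.exp (s - δ) < Real.exp s := Real.exp_lt_exp.mpr (by linarith)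
      have hsub2 : Z ⊆ A (Real.exp (s - δ)) \ A (Real.exp s) := by
        intro x hx
        refine ⟨lt_of_lt_of_le hlt (le_of_eq hx), ?_⟩
        simp only [hAdef, Set.mem_setOf_eq, not_lt]
        exact le_of_eq hx.symm
      have hdiff : μ (A (Real.exp (s - δ)) \ A (Real.exp s))
          = μ (A (Real.exp (s - δ))) - μ (A (Real.exp s)) :=
        measure_diff (hAmono hlt.le) (hmeasA _).nullMeasurableSet (hAfin _ (Real.exp_pos _))
      have hdifffin : μ (A (Real.exp (s - δ)) \ A (Real.exp s)) ≠ ⊤ :=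
        ne_top_of_le_ne_top (hAfin _ (Real.exp_pos _)) (measure_mono Set.diff_subset)
      calc (μ Z).toReal ≤ (μ (A (Real.exp (s - δ)) \ A (Real.exp s))).toReal :=
            (ENNReal.toReal_le_toReal hZfin hdifffin).mpr (measure_mono hsub2)
        _ = f (s - δ) - f s := by
            rw [hdiff, ENNReal.toReal_sub_of_le (measure_mono (hAmono hlt.le))
              (hAfin _ (Real.exp_pos _))]
    have hlim : Tendsto (fun n : ℕ => f (s - ((n:ℝ)+1)⁻¹) - f s) atTop (nhds 0) := by
      have hseq : Tendsto (fun n : ℕ => s - ((n:ℝ)+1)⁻¹) atTop (nhds s) := by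
        have h1 : Tendsto (fun n : ℕ => ((n:ℝ)+1)) atTop atTop :=
          tendsto_atTop_add_const_right _ 1 tendsto_natCast_atTop_atTop
        have h2 : Tendsto (fun n : ℕ => ((n:ℝ)+1)⁻¹) atTop (nhds 0) :=
          h1.inv_tendsto_atTop
        have h3 : Tendsto (fun _ : ℕ => s) atTop (nhds s) := tendsto_const_nhds
        simpa using h3.sub h2
      have h4 : Tendsto (fun _ : ℕ => f s) atTop (nhds (f s)) := tendsto_const_nhds
      simpa using (hs.tendsto.comp hseq).sub h4
    have hle : (μ Z).toReal ≤ 0 := ge_of_tendsto hlim (Eventually.of_forall hkey)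
    have hZ0 : μ Z = 0 := by
      have := le_antisymm hle ENNReal.toReal_nonneg
      rwa [ENNReal.toReal_eq_zero_iff, or_iff_left hZfin] at this
    exact measure_mono_null hsub hZ0
  -- convergence at continuity points
  have hgood : ∀ s : ℝ, ContinuousAt f s →
      Tendsto (fun t => b t * (P {ω | t * Real.exp s < ∑ i, v i * X ω i}).toReal)
        atTop (nhds (f s)) := by
    intro s hs
    have H := hconv (A (Real.exp s)) (hmeasA _) (hbddA _ (Real.exp_pos s)) (hfront s hs)
    refine H.congr' ?_
    filter_upwards [eventually_gt_atTop (0:ℝ)] with t ht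
    have hseteq : {ω | X ω ∈ t • A (Real.exp s)}
        = {ω | t * Real.exp s < ∑ i, v i * X ω i} := by
      ext ω
      rw [Set.mem_setOf_eq, Set.mem_setOf_eq,
        Set.mem_smul_set_iff_inv_smul_mem₀ (ne_of_gt ht)]
      simp only [hAdef, Set.mem_setOf_eq, hφdef, Pi.smul_apply, smul_eq_mul]
      have hsum : ∑ i, v i * (t⁻¹ * X ω i) = (∑ i, v i * X ω i) / t := by
        rw [Finset.sum_div]
        exact Finset.sum_congr rfl fun i _ => by ring
      rw [hsum, lt_div_iff₀ ht]
      try rw [mul_comm (Real.exp s) t]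
    rw [hseteq]
  -- shifted limits
  have hslow : ∀ r : ℝ, Tendsto (fun t => b t / b (t * Real.exp r)) atTop (nhds (Real.exp (-r))) := by
    intro r
    have h1 : Tendsto (fun t => l (t * Real.exp r) / l t) atTop (nhds 1) := hl _ (Real.exp_pos r)
    have h2 : Tendsto (fun t => l t / l (t * Real.exp r)) atTop (nhds 1) := by
      have := h1.inv₀ one_ne_zero
      simpa [inv_div] using this
    have h3 : Tendsto (fun t => l t / l (t * Real.exp r) * Real.exp (-r)) atTop
        (nhds (Real.exp (-r))) := by
      simpa using h2.mul_const (Real.exp (-r))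
    refine h3.congr' ?_
    have hbev : ∀ᶠ t in (atTop : Filter ℝ), (1:ℝ) ≤ b t := hb.eventually (eventually_ge_atTop 1)
    have hbev2 : ∀ᶠ t in (atTop : Filter ℝ), (1:ℝ) ≤ b (t * Real.exp r) :=
      (hb.comp (Tendsto.atTop_mul_const (Real.exp_pos r) tendsto_id)).eventually
        (eventually_ge_atTop 1)
    filter_upwards [eventually_gt_atTop (0:ℝ), hbev, hbev2] with t ht h1t h2t
    have htr : 0 < t * Real.exp r := mul_pos ht (Real.exp_pos r)
    have hlt : l t ≠ 0 := by
      intro h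
      rw [hbl t ht, h, zero_mul] at h1t
      linarith
    have hltr : l (t * Real.exp r) ≠ 0 := by
      intro h
      rw [hbl _ htr, h, zero_mul] at h2t
      linarith
    rw [hbl t ht, hbl _ htr, Real.exp_neg]
    field_simp
  have hshift : ∀ r s : ℝ, ContinuousAt f s →
      Tendsto (fun t => b t * (P {ω | t * Real.exp (r + s) < ∑ i, v i * X ω i}).toReal)
        atTop (nhds (Real.exp (-r) * f s)) := by
    intro r s hs
    have hcomp : Tendsto (fun t : ℝ => t * Real.exp r) atTop atTop :=
      Tendsto.atTop_mul_const (Real.exp_pos r) tendsto_id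
    have H := (hgood s hs).comp hcomp
    have H' : Tendsto (fun t => b (t * Real.exp r) *
        (P {ω | t * Real.exp (r + s) < ∑ i, v i * X ω i}).toReal) atTop (nhds (f s)) := by
      refine H.congr fun t => ?_
      simp only [Function.comp_apply, Real.exp_add, ← mul_assoc]
    have := (hslow r).mul H'
    refine this.congr' ?_
    have hbev2 : ∀ᶠ t in (atTop : Filter ℝ), (1:ℝ) ≤ b (t * Real.exp r) :=
      (hb.comp (Tendsto.atTop_mul_const (Real.exp_pos r) tendsto_id)).eventually
        (eventually_ge_atTop 1)
    filter_upwards [hbev2] with t h2t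
    have : b (t * Real.exp r) ≠ 0 := by linarith
    field_simp
  -- scaling relation at pairs of continuity points
  have hpair : ∀ p q : ℝ, ContinuousAt f p → ContinuousAt f q →
      Real.exp p * f p = Real.exp q * f q := by
    intro p q hp hq
    have h1 := hgood p hp
    have h2 := hshift (p - q) q hq
    rw [sub_add_cancel] at h2
    have h3 : f p = Real.exp (-(p - q)) * f q := tendsto_nhds_unique h1 h2
    have harg : p + -(p - q) = q := by ring
    rw [h3, ← mul_assoc, ← Real.exp_add, harg]
  -- continuity points are dense
  have hbad : {s : ℝ | ¬ ContinuousAt f s}.Countable := hfanti.countable_not_continuousAt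
  have hdense : ∀ a c : ℝ, a < c → ∃ s, a < s ∧ s < c ∧ ContinuousAt f s := by
    intro a c hac
    by_contra hcon
    push_neg at hcon
    have hsub : Set.Ioo a c ⊆ {s : ℝ | ¬ ContinuousAt f s} := by
      intro s hs
      exact hcon s hs.1 hs.2
    have h1 : volume (Set.Ioo a c) ≤ 0 := by
      rw [← Set.Countable.measure_zero hbad volume]
      exact measure_mono hsub
    rw [Real.volume_Ioo] at h1
    exact absurd (le_antisymm h1 zero_le)
      (ne_of_gt (ENNReal.ofReal_pos.mpr (sub_pos.mpr hac)))
  obtain ⟨q₀, _, _, hq₀⟩ := hdense 0 1 one_pos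
  set c : ℝ := Real.exp q₀ * f q₀ with hcdef
  have hc0 : 0 ≤ c := mul_nonneg (Real.exp_pos _).le (hf0 _)
  have hfgood : ∀ s : ℝ, ContinuousAt f s → f s = c * Real.exp (-s) := by
    intro s hs
    have h := hpair s q₀ hs hq₀
    have hes : Real.exp s ≠ 0 := (Real.exp_pos s).ne'
    rw [Real.exp_neg, ← div_eq_mul_inv, eq_div_iff hes, hcdef]
    linear_combination h
  have hfall : ∀ s : ℝ, f s = c * Real.exp (-s) := by
    intro s
    have hseq0 : Tendsto (fun n : ℕ => ((n:ℝ)+1)⁻¹) atTop (nhds 0) :=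
      (tendsto_atTop_add_const_right _ 1 tendsto_natCast_atTop_atTop).inv_tendsto_atTop
    -- lower approximations from the right
    have hchoiceR : ∀ n : ℕ, ∃ p, s < p ∧ p < s + ((n:ℝ)+1)⁻¹ ∧ ContinuousAt f p := by
      intro n
      have : s < s + ((n:ℝ)+1)⁻¹ := by
        have : (0:ℝ) < ((n:ℝ)+1)⁻¹ := by positivity
        linarith
      obtain ⟨p, h1, h2, h3⟩ := hdense s (s + ((n:ℝ)+1)⁻¹) this
      exact ⟨p, h1, h2, h3⟩
    choose pR hR1 hR2 hR3 using hchoiceR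
    have hchoiceL : ∀ n : ℕ, ∃ p, s - ((n:ℝ)+1)⁻¹ < p ∧ p < s ∧ ContinuousAt f p := by
      intro n
      have : s - ((n:ℝ)+1)⁻¹ < s := by
        have : (0:ℝ) < ((n:ℝ)+1)⁻¹ := by positivity
        linarith
      exact hdense _ s this
    choose pL hL1 hL2 hL3 using hchoiceL
    have hRt : Tendsto pR atTop (nhds s) := by
      refine tendsto_of_tendsto_of_tendsto_of_le_of_le tendsto_const_nhds ?_
        (fun n => (hR1 n).le) (fun n => (hR2 n).le)
      have h3 : Tendsto (fun _ : ℕ => s) atTop (nhds s) := tendsto_const_nhds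
      simpa using h3.add hseq0
    have hLt : Tendsto pL atTop (nhds s) := by
      refine tendsto_of_tendsto_of_tendsto_of_le_of_le ?_ tendsto_const_nhds
        (fun n => (hL1 n).le) (fun n => (hL2 n).le)
      have h3 : Tendsto (fun _ : ℕ => s) atTop (nhds s) := tendsto_const_nhds
      simpa using h3.sub hseq0
    have hexpR : Tendsto (fun n => c * Real.exp (-(pR n))) atTop (nhds (c * Real.exp (-s))) :=
      tendsto_const_nhds.mul ((Real.continuous_exp.tendsto _).comp hRt.neg)
    have hexpL : Tendsto (fun n => c * Real.exp (-(pL n))) atTop (nhds (c * Real.exp (-s))) :=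
      tendsto_const_nhds.mul ((Real.continuous_exp.tendsto _).comp hLt.neg)
    have hub : f s ≤ c * Real.exp (-s) := by
      refine ge_of_tendsto hexpL (Eventually.of_forall fun n => ?_)
      rw [← hfgood (pL n) (hL3 n)]
      exact hfanti (hL2 n).le
    have hlb : c * Real.exp (-s) ≤ f s := by
      refine le_of_tendsto hexpR (Eventually.of_forall fun n => ?_)
      rw [← hfgood (pR n) (hR3 n)]
      exact hfanti (hR1 n).le
    linarith
  have hfcont : Continuous f := by
    have : f = fun s => c * Real.exp (-s) := funext hfall
    rw [this]
    exact continuous_const.mul (Real.continuous_exp.comp continuous_neg)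
  have hmain := hgood 0 hfcont.continuousAt
  rw [Real.exp_zero] at hmain
  have hf0c : f 0 = c := by rw [hfall 0]; simp
  rw [hf0c] at hmain
  refine ⟨c, hc0, ?_, ?_⟩
  · refine hmain.congr fun t => ?_
    simp only [mul_one]
  · intro hczero u hu
    have h1 : f (Real.log u) = 0 := by rw [hfall, hczero, zero_mul]
    have h2 : (μ (A u)).toReal = 0 := by
      rw [hfdef] at h1
      simp only at h1
      rwa [Real.exp_log hu] at h1
    have := hAfin u hu
    rw [ENNReal.toReal_eq_zero_iff] at h2
    exact h2.resolve_right this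


lemma min_sum_le_sum_min {ι : Type*} (s : Finset ι) (a : ι → ℝ) (T : ℝ)
    (ha : ∀ i, 0 ≤ a i) (hT : 0 ≤ T) :
    min (∑ i ∈ s, a i) T ≤ ∑ i ∈ s, min (a i) T := by
  classical
  induction s using Finset.induction_on with
  | empty => simpa using min_le_left (0:ℝ) T
  | @insert i s his ih =>
    rw [Finset.sum_insert his, Finset.sum_insert his]
    have hai : 0 ≤ a i := ha i
    have hsum0 : 0 ≤ ∑ j ∈ s, a j := Finset.sum_nonneg fun j _ => ha j
    have two : min (a i + ∑ j ∈ s, a j) T ≤ min (a i) T + min (∑ j ∈ s, a j) T := by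
      rcases le_total (a i + ∑ j ∈ s, a j) T with h | h
      · rw [min_eq_left h, min_eq_left (by linarith), min_eq_left (by linarith)]
      · rw [min_eq_right h]
        rcases le_total (a i) T with h1 | h1
        · rcases le_total (∑ j ∈ s, a j) T with h2 | h2
          · rw [min_eq_left h1, min_eq_left h2]; linarith
          · rw [min_eq_left h1, min_eq_right h2]; linarith
        · rw [min_eq_right h1]
          have : 0 ≤ min (∑ j ∈ s, a j) T := le_min hsum0 hT
          linarith
    exact two.trans (by linarith [ih])

lemma sum_weighted_min_le {ι : Type*} [Fintype ι] (w a : ι → ℝ) (T : ℝ) (hw : ∀ i, 0 ≤ w i)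
    (hwsum : ∑ i, w i = 1) (_ : ∀ i, 0 ≤ a i) :
    ∑ i, w i * min (a i) T ≤ min (∑ i, w i * a i) T := by
  refine le_min ?_ ?_
  · exact Finset.sum_le_sum fun i _ => mul_le_mul_of_nonneg_left (min_le_left _ _) (hw i)
  · calc ∑ i, w i * min (a i) T ≤ ∑ i, w i * T :=
        Finset.sum_le_sum fun i _ => mul_le_mul_of_nonneg_left (min_le_right _ _) (hw i)
      _ = T := by rw [← Finset.sum_mul, hwsum, one_mul]


set_option maxHeartbeats 2000000 in
/-- Corollary `c:PCT`, universality of the Pareto Combination Test: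
if `P_i ∼ Uniform(0,1)`, `X_i = 1/(1-P_i)` and `X ∈ RV_{β=1}(ℝ^d,{b(t)},μ)`, then for every
choice of nonnegative weights summing to one the linear Pareto combination test is
asymptotically calibrated: `P[Σ w_i X_i > t]/P[X_1 > t] → 1`. -/
theorem stmt2 {Ω : Type*} [MeasurableSpace Ω] (P : Measure Ω) [IsProbabilityMeasure P]
    {d : ℕ} (hd : 0 < d) (Pv : Ω → Fin d → ℝ)
    (hunif : ∀ i : Fin d, Measure.map (fun ω => Pv ω i) P
      = volume.restrict (Set.Ioo (0 : ℝ) 1))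
    (X : Ω → Fin d → ℝ) (hXdef : ∀ ω i, X ω i = 1 / (1 - Pv ω i))
    (b : ℝ → ℝ) (μ : Measure (Fin d → ℝ))
    (hX : IsMRVIdx P X 1 b μ)
    (w : Fin d → ℝ) (hw : ∀ i, 0 ≤ w i) (hwsum : ∑ i, w i = 1) :
    Tendsto (fun t : ℝ =>
        (P {ω | t < ∑ i, w i * X ω i}).toReal / (P {ω | t < X ω ⟨0, hd⟩}).toReal)
      atTop (nhds 1) := by
  obtain ⟨hmrv, -, l, hl, hbl1⟩ := hX
  have hbl : ∀ t > 0, b t = l t * t := fun t ht => by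
    have := hbl1 t ht
    rwa [Real.rpow_one] at this
  have hb : Tendsto b atTop atTop := hmrv.1
  have hμne : μ ≠ 0 := hmrv.2.1
  have hμz : μ {0} = 0 := hmrv.2.2.1
  -- uniform marginals are a.e.-measurable
  have haePv : ∀ i, AEMeasurable (fun ω => Pv ω i) P := by
    intro i
    by_contra hcon
    have h0 := Measure.map_of_not_aemeasurable hcon
    rw [hunif i] at h0
    have h1 := congrArg (fun m : Measure ℝ => m (Set.Ioo 0 1)) h0
    simp only [Measure.restrict_apply measurableSet_Ioo, Set.inter_self, Real.volume_Ioo,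
      Measure.coe_zero, Pi.zero_apply] at h1
    norm_num at h1
  have haein : ∀ i, ∀ᵐ ω ∂P, Pv ω i ∈ Set.Ioo (0:ℝ) 1 := by
    intro i
    have hpre : P ((fun ω => Pv ω i) ⁻¹' (Set.Ioo 0 1)) = 1 := by
      rw [← Measure.map_apply_of_aemeasurable (haePv i) measurableSet_Ioo, hunif i,
        Measure.restrict_apply measurableSet_Ioo, Set.inter_self, Real.volume_Ioo]
      norm_num
    have hnm : NullMeasurableSet ((fun ω => Pv ω i) ⁻¹' (Set.Ioo 0 1)) P :=
      (haePv i).nullMeasurable measurableSet_Ioo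
    have hcompl : P (((fun ω => Pv ω i) ⁻¹' (Set.Ioo 0 1))ᶜ) = 0 := by
      rw [measure_compl₀ hnm (measure_ne_top P _), hpre, measure_univ, tsub_self]
    rw [ae_iff]
    exact hcompl
  have hX1 : ∀ᵐ ω ∂P, ∀ i, 1 < X ω i := by
    rw [ae_all_iff]
    intro i
    filter_upwards [haein i] with ω hp
    rw [hXdef]
    have h1 : 0 < 1 - Pv ω i := by linarith [hp.2]
    rw [lt_div_iff₀ h1, one_mul]
    linarith [hp.1]
  have hXmeas : ∀ i, AEMeasurable (fun ω => X ω i) P := by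
    intro i
    have heq : (fun ω => X ω i) = fun ω => (1 - Pv ω i)⁻¹ :=
      funext fun ω => by rw [hXdef, one_div]
    rw [heq]
    exact (aemeasurable_const.sub (haePv i)).inv
  have hX0 : ∀ i, ∀ᵐ ω ∂P, 0 ≤ X ω i := fun i => hX1.mono fun ω h => by linarith [h i]
  -- exact Pareto tails
  have htail : ∀ (i : Fin d) (u : ℝ), 0 < u → (P {ω | u < X ω i}).toReal = min u⁻¹ 1 := by
    intro i u hu
    rcases le_or_gt u 1 with hu1 | hu1
    · rw [min_eq_right ((one_le_inv₀ hu).mpr hu1)]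
      have hae : {ω | u < X ω i} =ᵐ[P] (Set.univ : Set Ω) := by
        rw [Filter.eventuallyEq_set]
        filter_upwards [hX1] with ω h1
        have : u < X ω i := lt_of_le_of_lt hu1 (h1 i)
        simp [this]
      rw [measure_congr hae, measure_univ, ENNReal.toReal_one]
    · have hu0 : (0:ℝ) < u := hu
      rw [min_eq_left (inv_le_one_of_one_le₀ hu1.le)]
      have hae : {ω | u < X ω i} =ᵐ[P] ((fun ω => Pv ω i) ⁻¹' (Set.Ioo (1 - 1/u) 1)) := by
        rw [Filter.eventuallyEq_set]
        filter_upwards [haein i] with ω hp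
        have h1p : 0 < 1 - Pv ω i := by linarith [hp.2]
        simp only [Set.mem_setOf_eq, Set.mem_preimage, Set.mem_Ioo]
        rw [hXdef]
        constructor
        · intro h
          refine ⟨?_, hp.2⟩
          have h2 : u * (1 - Pv ω i) < 1 := (lt_div_iff₀ h1p).mp h
          have h3 : (1 - Pv ω i) * u < 1 := by rw [mul_comm]; exact h2
          have h4 : 1 - Pv ω i < 1/u := (lt_div_iff₀ hu0).mpr h3
          linarith
        · intro h
          have h3 : (1 - Pv ω i) * u < 1 := (lt_div_iff₀ hu0).mp (by linarith [h.1])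
          refine (lt_div_iff₀ h1p).mpr ?_
          rw [mul_comm] at h3
          exact h3
      have hP : P ((fun ω => Pv ω i) ⁻¹' (Set.Ioo (1 - 1/u) 1)) = ENNReal.ofReal (1/u) := by
        rw [← Measure.map_apply_of_aemeasurable (haePv i) measurableSet_Ioo, hunif i,
          Measure.restrict_apply measurableSet_Ioo]
        have hss : Set.Ioo (1 - 1/u) 1 ∩ Set.Ioo 0 1 = Set.Ioo (1 - 1/u) 1 := by
          apply Set.inter_eq_left.mpr
          intro x hx
          have h1u : 1/u ≤ 1 := by
            rw [div_le_one hu0]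
            exact hu1.le
          exact ⟨lt_of_le_of_lt (by linarith) hx.1, hx.2⟩
        rw [hss, Real.volume_Ioo]
        congr 1
        ring
      rw [measure_congr hae, hP, ENNReal.toReal_ofReal (by positivity), one_div]
  -- Pi.single facts
  have hsingle_sum : ∀ (i : Fin d) (x : Fin d → ℝ), ∑ j, (Pi.single i (1:ℝ) : Fin d → ℝ) j * x j = x i := by
    intro i x
    rw [Finset.sum_eq_single i]
    · rw [Pi.single_eq_same, one_mul]
    · intro j _ hj
      rw [Pi.single_eq_of_ne hj, zero_mul]
    · intro h; exact absurd (Finset.mem_univ i) h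
  have hsingle_ne : ∀ i : Fin d, (Pi.single i (1:ℝ) : Fin d → ℝ) ≠ 0 := by
    intro i h
    have := congrFun h i
    rw [Pi.single_eq_same] at this
    exact one_ne_zero this
  -- the combination S
  have hSmeas : AEMeasurable (fun ω => ∑ i, w i * X ω i) P :=
    Finset.aemeasurable_fun_sum _ fun i _ => (hXmeas i).const_mul (w i)
  have hS1 : ∀ᵐ ω ∂P, 1 ≤ ∑ i, w i * X ω i := by
    filter_upwards [hX1] with ω h1
    calc (1:ℝ) = ∑ i, w i * 1 := by simp [hwsum]
      _ ≤ ∑ i, w i * X ω i :=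
        Finset.sum_le_sum fun i _ => mul_le_mul_of_nonneg_left (h1 i).le (hw i)
  have hS0 : ∀ᵐ ω ∂P, 0 ≤ ∑ i, w i * X ω i := hS1.mono fun ω h => by linarith
  -- first coordinate limit
  obtain ⟨c1, hc10, hc1T, hc1z⟩ :=
    halfspace_limit P X b μ hmrv hl hbl (Pi.single ⟨0, hd⟩ 1) (hsingle_ne ⟨0, hd⟩)
  simp only [hsingle_sum] at hc1T hc1z
  have hbt : Tendsto (fun t => b t / t) atTop (nhds c1) := by
    refine hc1T.congr' ?_
    filter_upwards [eventually_gt_atTop (1:ℝ)] with t ht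
    rw [htail ⟨0, hd⟩ t (lt_trans one_pos ht), min_eq_left (inv_le_one_of_one_le₀ ht.le),
      ← div_eq_mul_inv]
  -- c1 is positive
  have hc1pos : 0 < c1 := by
    rcases hc10.lt_or_eq with h | h
    · exact h
    exfalso
    have hc1zero : c1 = 0 := h.symm
    have hpos0 : ∀ (i : Fin d) (u : ℝ), 0 < u → μ {x | u < x i} = 0 := by
      intro i
      obtain ⟨ci, _, hciT, hciz⟩ :=
        halfspace_limit P X b μ hmrv hl hbl (Pi.single i 1) (hsingle_ne i)
      simp only [hsingle_sum] at hciT hciz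
      have hci : Tendsto (fun t => b t / t) atTop (nhds ci) := by
        refine hciT.congr' ?_
        filter_upwards [eventually_gt_atTop (1:ℝ)] with t ht
        rw [htail i t (lt_trans one_pos ht), min_eq_left (inv_le_one_of_one_le₀ ht.le),
          ← div_eq_mul_inv]
      exact hciz ((tendsto_nhds_unique hci hbt).trans hc1zero)
    have hneg0 : ∀ (i : Fin d) (u : ℝ), 0 < u → μ {x | u < -x i} = 0 := by
      intro i
      obtain ⟨ci, _, hciT, hciz⟩ :=
        halfspace_limit P X b μ hmrv hl hbl (-Pi.single i 1) (neg_ne_zero.mpr (hsingle_ne i))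
      have hsum_neg : ∀ x : Fin d → ℝ, ∑ j, (-(Pi.single i (1:ℝ) : Fin d → ℝ)) j * x j = -x i := by
        intro x
        simp only [Pi.neg_apply, neg_mul]
        rw [Finset.sum_neg_distrib, hsingle_sum]
      simp only [hsum_neg] at hciT hciz
      have hnull : P {ω | ¬ ∀ j, 1 < X ω j} = 0 := ae_iff.mp hX1
      have hzero : Tendsto (fun t => b t * (P {ω | t < -X ω i}).toReal) atTop (nhds 0) := by
        refine (tendsto_const_nhds (α := ℝ)).congr' ?_
        filter_upwards [eventually_gt_atTop (0:ℝ)] with t ht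
        have hP0 : P {ω | t < -X ω i} = 0 := by
          have hsubnull : {ω | t < -X ω i} ⊆ {ω | ¬ ∀ j, 1 < X ω j} := by
            intro ω hω hall
            have h1 := hall i
            simp only [Set.mem_setOf_eq] at hω
            linarith
          exact measure_mono_null hsubnull hnull
        rw [hP0, ENNReal.toReal_zero, mul_zero]
      exact hciz (tendsto_nhds_unique hciT hzero)
    apply hμne
    apply Measure.measure_univ_eq_zero.mp
    have hshell : ∀ n : ℕ, μ {x : Fin d → ℝ | ((n:ℝ)+1)⁻¹ < ‖x‖} = 0 := by
      intro n
      have hr : (0:ℝ) < ((n:ℝ)+1)⁻¹ := by positivity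
      have hsub : {x : Fin d → ℝ | ((n:ℝ)+1)⁻¹ < ‖x‖}
          ⊆ ⋃ i : Fin d, ({x | ((n:ℝ)+1)⁻¹ < x i} ∪ {x | ((n:ℝ)+1)⁻¹ < -x i}) := by
        intro x hx
        by_contra hcon
        simp only [Set.mem_iUnion, Set.mem_union, Set.mem_setOf_eq, not_exists, not_or,
          not_lt] at hcon
        have hle : ‖x‖ ≤ ((n:ℝ)+1)⁻¹ := by
          rw [pi_norm_le_iff_of_nonneg hr.le]
          intro i
          rw [Real.norm_eq_abs, abs_le]
          exact ⟨by linarith [(hcon i).2], (hcon i).1⟩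
        simp only [Set.mem_setOf_eq] at hx
        linarith
      exact measure_mono_null hsub (measure_iUnion_null fun i =>
        measure_union_null (hpos0 i _ hr) (hneg0 i _ hr))
    have hcover : (Set.univ : Set (Fin d → ℝ))
        ⊆ {0} ∪ ⋃ n : ℕ, {x : Fin d → ℝ | ((n:ℝ)+1)⁻¹ < ‖x‖} := by
      intro x _
      by_cases hx : x = 0
      · exact Or.inl hx
      · right
        have hxn : 0 < ‖x‖ := norm_pos_iff.mpr hx
        obtain ⟨n, hn⟩ := exists_nat_one_div_lt hxn
        refine Set.mem_iUnion.mpr ⟨n, ?_⟩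
        simp only [Set.mem_setOf_eq]
        rwa [one_div] at hn
    exact measure_mono_null hcover (measure_union_null hμz (measure_iUnion_null hshell))
  -- the weight direction
  have hwne : w ≠ 0 := by
    intro h
    rw [h] at hwsum
    simp at hwsum
  obtain ⟨cw, hcw0, hcwT, -⟩ := halfspace_limit P X b μ hmrv hl hbl w hwne
  have hTP : Tendsto (fun t => t * (P {ω | t < ∑ i, w i * X ω i}).toReal)
      atTop (nhds (cw / c1)) := by
    have h1 := (hbt.inv₀ hc1pos.ne').mul hcwT
    rw [show c1⁻¹ * cw = cw / c1 from by ring] at h1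
    refine h1.congr' ?_
    filter_upwards [eventually_gt_atTop (0:ℝ), hb.eventually (eventually_ge_atTop (1:ℝ))]
      with t ht hbt1
    have hbne : b t ≠ 0 := by linarith
    rw [inv_div]
    field_simp
  -- Abelian side
  have hGanti : Antitone (fun t => (P {ω | t < ∑ i, w i * X ω i}).toReal) := by
    intro t t' htt'
    exact (ENNReal.toReal_le_toReal (measure_ne_top P _) (measure_ne_top P _)).mpr
      (measure_mono fun ω hω => lt_of_le_of_lt htt' hω)
  have hG1 : ∀ t : ℝ, (P {ω | t < ∑ i, w i * X ω i}).toReal ≤ 1 := by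
    intro t
    rw [← ENNReal.toReal_one]
    exact (ENNReal.toReal_le_toReal (measure_ne_top P _) ENNReal.one_ne_top).mpr prob_le_one
  have habel := abelian_log (fun t => (P {ω | t < ∑ i, w i * X ω i}).toReal)
    hGanti.measurable (fun t => ENNReal.toReal_nonneg) hG1 hTP
  have hES : Tendsto (fun T => (∫ ω, min (∑ i, w i * X ω i) T ∂P) / Real.log T)
      atTop (nhds (cw / c1)) := by
    refine habel.congr' ?_
    filter_upwards [eventually_gt_atTop (0:ℝ)] with T hT
    rw [integral_min_eq P hSmeas hS0 hT]
  -- exact marginal truncated expectations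
  have hmargin : ∀ (i : Fin d) (T : ℝ), 1 ≤ T → ∫ ω, min (X ω i) T ∂P = 1 + Real.log T := by
    intro i T hT
    have hT0 : (0:ℝ) < T := lt_of_lt_of_le one_pos hT
    rw [integral_min_eq P (hXmeas i) (hX0 i) hT0,
      setIntegral_congr_fun measurableSet_Ioo (fun t ht => htail i t ht.1)]
    exact integral_Ioo_min_inv hT
  -- lower sandwich bound
  have hlowS : ∀ T : ℝ, 1 ≤ T → 1 + Real.log T ≤ ∫ ω, min (∑ i, w i * X ω i) T ∂P := by
    intro T hT
    have hT0 : (0:ℝ) < T := lt_of_lt_of_le one_pos hT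
    have hpt : ∀ᵐ ω ∂P, ∑ i, w i * min (X ω i) T ≤ min (∑ i, w i * X ω i) T := by
      filter_upwards [hX1] with ω h1
      exact sum_weighted_min_le w (fun i => X ω i) T hw hwsum (fun i => by linarith [h1 i])
    have hintS : Integrable (fun ω => min (∑ i, w i * X ω i) T) P :=
      integrable_min_const P hSmeas hS0 hT0.le
    have hinti : ∀ i : Fin d, Integrable (fun ω => min (X ω i) T) P := fun i =>
      integrable_min_const P (hXmeas i) (hX0 i) hT0.le
    calc 1 + Real.log T = ∑ i, w i * (1 + Real.log T) := by
          rw [← Finset.sum_mul, hwsum, one_mul]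
      _ = ∑ i, w i * ∫ ω, min (X ω i) T ∂P :=
          Finset.sum_congr rfl fun i _ => by rw [hmargin i T hT]
      _ = ∫ ω, ∑ i, w i * min (X ω i) T ∂P := by
          rw [integral_finset_sum _ fun i _ => (hinti i).const_mul (w i)]
          exact Finset.sum_congr rfl fun i _ => (integral_const_mul _ _).symm
      _ ≤ ∫ ω, min (∑ i, w i * X ω i) T ∂P :=
          integral_mono_ae (integrable_finset_sum _ fun i _ => (hinti i).const_mul (w i))
            hintS hpt
  -- upper sandwich bound
  have hwle1 : ∀ i, w i ≤ 1 := by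
    intro i
    calc w i ≤ ∑ j, w j := Finset.single_le_sum (fun j _ => hw j) (Finset.mem_univ i)
      _ = 1 := hwsum
  have hupS : ∀ T : ℝ, 1 ≤ T → ∫ ω, min (∑ i, w i * X ω i) T ∂P
      ≤ 1 + Real.log T + (- ∑ i, w i * Real.log (w i)) := by
    intro T hT
    have hT0 : (0:ℝ) < T := lt_of_lt_of_le one_pos hT
    have hpt : ∀ᵐ ω ∂P, min (∑ i, w i * X ω i) T ≤ ∑ i, min (w i * X ω i) T := by
      filter_upwards [hX1] with ω h1
      exact min_sum_le_sum_min Finset.univ (fun i => w i * X ω i) T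
        (fun i => mul_nonneg (hw i) (by linarith [h1 i])) hT0.le
    have hintS : Integrable (fun ω => min (∑ i, w i * X ω i) T) P :=
      integrable_min_const P hSmeas hS0 hT0.le
    have hinti : ∀ i : Fin d, Integrable (fun ω => min (w i * X ω i) T) P := fun i =>
      integrable_min_const P ((hXmeas i).const_mul (w i))
        ((hX0 i).mono fun ω h => mul_nonneg (hw i) h) hT0.le
    have hterm : ∀ i : Fin d, ∫ ω, min (w i * X ω i) T ∂P
        ≤ w i * (1 + Real.log T) - w i * Real.log (w i) := by
      intro i
      rcases (hw i).lt_or_eq with hwi | hwi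
      · have hTw : 1 ≤ T / w i := by
          rw [le_div_iff₀ hwi]
          nlinarith [hwle1 i]
        have hEq : ∀ ω, min (w i * X ω i) T = w i * min (X ω i) (T / w i) := by
          intro ω
          rw [mul_min_of_nonneg _ _ hwi.le]
          congr 1
          field_simp
        calc ∫ ω, min (w i * X ω i) T ∂P = ∫ ω, w i * min (X ω i) (T / w i) ∂P := by
              exact integral_congr_ae (Eventually.of_forall fun ω => hEq ω)
          _ = w i * ∫ ω, min (X ω i) (T / w i) ∂P := integral_const_mul _ _
          _ = w i * (1 + Real.log (T / w i)) := by rw [hmargin i _ hTw]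
          _ ≤ w i * (1 + Real.log T) - w i * Real.log (w i) := le_of_eq (by
              rw [Real.log_div (by linarith : T ≠ 0) hwi.ne']
              ring)
      · have hzero : ∀ ω, min (w i * X ω i) T = 0 := by
          intro ω
          rw [← hwi, zero_mul]
          exact min_eq_left hT0.le
        calc ∫ ω, min (w i * X ω i) T ∂P = ∫ ω, (0:ℝ) ∂P :=
              integral_congr_ae (Eventually.of_forall fun ω => hzero ω)
          _ = 0 := integral_zero _ _
          _ ≤ w i * (1 + Real.log T) - w i * Real.log (w i) := by
              rw [← hwi]
              simp
    calc ∫ ω, min (∑ i, w i * X ω i) T ∂P ≤ ∫ ω, ∑ i, min (w i * X ω i) T ∂P :=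
          integral_mono_ae hintS (integrable_finset_sum _ fun i _ => hinti i) hpt
      _ = ∑ i, ∫ ω, min (w i * X ω i) T ∂P := integral_finset_sum _ fun i _ => hinti i
      _ ≤ ∑ i, (w i * (1 + Real.log T) - w i * Real.log (w i)) :=
          Finset.sum_le_sum fun i _ => hterm i
      _ = 1 + Real.log T + (- ∑ i, w i * Real.log (w i)) := by
          rw [Finset.sum_sub_distrib, ← Finset.sum_mul, hwsum, one_mul]
          ring
  -- squeeze to get cw / c1 = 1
  have hloginv : Tendsto (fun T : ℝ => (Real.log T)⁻¹) atTop (nhds 0) :=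
    Real.tendsto_log_atTop.inv_tendsto_atTop
  have hlow : Tendsto (fun T : ℝ => (1 + Real.log T) / Real.log T) atTop (nhds 1) := by
    have h1 : Tendsto (fun T : ℝ => (Real.log T)⁻¹ + 1) atTop (nhds 1) := by
      have hone : Tendsto (fun _ : ℝ => (1:ℝ)) atTop (nhds 1) := tendsto_const_nhds
      simpa using hloginv.add hone
    refine h1.congr' ?_
    filter_upwards [Real.tendsto_log_atTop.eventually (eventually_gt_atTop (0:ℝ))] with T hT
    rw [add_div, div_self hT.ne', one_div]
  have hup : Tendsto (fun T : ℝ =>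
      (1 + Real.log T + (- ∑ i, w i * Real.log (w i))) / Real.log T) atTop (nhds 1) := by
    have h1 : Tendsto (fun T : ℝ => (1 + (- ∑ i, w i * Real.log (w i))) * (Real.log T)⁻¹ + 1)
        atTop (nhds 1) := by
      have hone : Tendsto (fun _ : ℝ => (1:ℝ)) atTop (nhds 1) := tendsto_const_nhds
      have := (hloginv.const_mul (1 + (- ∑ i, w i * Real.log (w i)))).add hone
      simpa using this
    refine h1.congr' ?_
    filter_upwards [Real.tendsto_log_atTop.eventually (eventually_gt_atTop (0:ℝ))] with T hT
    field_simp
    ring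
  have hsq : Tendsto (fun T => (∫ ω, min (∑ i, w i * X ω i) T ∂P) / Real.log T)
      atTop (nhds 1) := by
    refine tendsto_of_tendsto_of_tendsto_of_le_of_le' hlow hup ?_ ?_
    · filter_upwards [eventually_ge_atTop (Real.exp 1)] with T hT
      have hT1 : (1:ℝ) ≤ T := le_trans (by nlinarith [Real.exp_one_gt_d9]) hT
      have hlogT : 0 < Real.log T := by
        have h1 : (1:ℝ) ≤ Real.log T := by
          rw [← Real.log_exp 1]
          exact Real.log_le_log (Real.exp_pos 1) hT
        linarith
      exact (div_le_div_iff_of_pos_right hlogT).mpr (hlowS T hT1)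
    · filter_upwards [eventually_ge_atTop (Real.exp 1)] with T hT
      have hT1 : (1:ℝ) ≤ T := le_trans (by nlinarith [Real.exp_one_gt_d9]) hT
      have hlogT : 0 < Real.log T := by
        have h1 : (1:ℝ) ≤ Real.log T := by
          rw [← Real.log_exp 1]
          exact Real.log_le_log (Real.exp_pos 1) hT
        linarith
      exact (div_le_div_iff_of_pos_right hlogT).mpr (hupS T hT1)
  have hone : cw / c1 = 1 := tendsto_nhds_unique hES hsq
  -- conclude
  rw [hone] at hTP
  refine hTP.congr' ?_
  filter_upwards [eventually_gt_atTop (1:ℝ)] with t ht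
  rw [htail ⟨0, hd⟩ t (lt_trans one_pos ht), min_eq_left (inv_le_one_of_one_le₀ ht.le),
    div_inv_eq_mul, mul_comm]
end
end

section
/- Let Δ = {(x_i)_{i=1}^d : x_i ≥ 0, Σ_{i=1}^d x_i = 1} be the unit simplex and let h : [0, ∞)^d → [0, ∞) be a continuous 1-homogeneous function. Then ∫_Δ h(θ) σ(dθ) = 1/d for every Borel probability measure σ on Δ satisfying ∫_Δ θ_i σ(dθ) = 1/d for all i = 1, …, d, if and only if there exist w_1, …, w_d ≥ 0 with Σ_{i=1}^d w_i = 1 such that h(x) = Σ_{i=1}^d w_i x_i for all x ∈ [0, ∞)^d. (This characterizes the linear Pareto-type combination tests as the unique universally calibrated homogeneous combination tests.) -/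
open MeasureTheory Filter Topology

noncomputable section

lemma integrable_ofReal_smul_dirac {α : Type*} [MeasurableSpace α] [MeasurableSingletonClass α]
    (c : ℝ) (a : α) (f : α → ℝ) :
    Integrable f (ENNReal.ofReal c • Measure.dirac a) := by
  have hae : f =ᵐ[ENNReal.ofReal c • Measure.dirac a] (fun _ => f a) := by
    rw [Filter.EventuallyEq, ae_iff]
    have : Measure.dirac a {x | ¬ f x = f a} = 0 := by
      rw [Measure.dirac_apply]
      simp [Set.indicator_apply]
    rw [Measure.smul_apply, this]
    simp
  have : IsFiniteMeasure (ENNReal.ofReal c • Measure.dirac a) := by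
    constructor
    rw [Measure.smul_apply]
    simp [lt_top_iff_ne_top, ENNReal.mul_ne_top, ENNReal.ofReal_ne_top]
  exact (integrable_const (f a)).congr hae.symm

lemma integral_ofReal_smul_dirac {α : Type*} [MeasurableSpace α] [MeasurableSingletonClass α]
    (c : ℝ) (hc : 0 ≤ c) (a : α) (f : α → ℝ) :
    ∫ x, f x ∂(ENNReal.ofReal c • Measure.dirac a) = c * f a := by
  rw [integral_smul_measure, integral_dirac, ENNReal.toReal_ofReal hc, smul_eq_mul]

lemma prob_sum_dirac {ι α : Type*} [Fintype ι] [MeasurableSpace α] [MeasurableSingletonClass α]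
    (c : ι → ℝ) (hc : ∀ i, 0 ≤ c i) (hsum : ∑ i, c i = 1) (a : ι → α) :
    IsProbabilityMeasure (∑ i, ENNReal.ofReal (c i) • Measure.dirac (a i)) := by
  constructor
  rw [Measure.finset_sum_apply]
  have h1 : ∀ i ∈ Finset.univ, (ENNReal.ofReal (c i) • Measure.dirac (a i)) Set.univ
      = ENNReal.ofReal (c i) := by
    intro i _
    rw [Measure.smul_apply, Measure.dirac_apply]
    simp
  rw [Finset.sum_congr rfl h1, ← ENNReal.ofReal_sum_of_nonneg (fun i _ => hc i), hsum,
    ENNReal.ofReal_one]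

lemma ae_sum_dirac {ι α : Type*} [Fintype ι] [MeasurableSpace α] [MeasurableSingletonClass α]
    (c : ι → ℝ) (a : ι → α) (P : α → Prop) (hP : ∀ i, P (a i)) :
    ∀ᵐ x ∂(∑ i, ENNReal.ofReal (c i) • Measure.dirac (a i)), P x := by
  rw [ae_iff, Measure.finset_sum_apply]
  apply Finset.sum_eq_zero
  intro i _
  rw [Measure.smul_apply, Measure.dirac_apply]
  simp [Set.indicator_apply, hP i]

lemma integral_sum_dirac {ι α : Type*} [Fintype ι] [MeasurableSpace α] [MeasurableSingletonClass α]
    (c : ι → ℝ) (hc : ∀ i, 0 ≤ c i) (a : ι → α) (f : α → ℝ) :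
    ∫ x, f x ∂(∑ i, ENNReal.ofReal (c i) • Measure.dirac (a i)) = ∑ i, c i * f (a i) := by
  rw [integral_finset_sum_measure (fun i _ => integrable_ofReal_smul_dirac _ _ _)]
  exact Finset.sum_congr rfl fun i _ => integral_ofReal_smul_dirac _ (hc i) _ _

/-- Theorem `t:unique_univ_calibrated`: a continuous 1-homogeneous
`h : [0,∞)^d → [0,∞)` satisfies `∫_Δ h dσ = 1/d` for every Borel probability measure `σ`
on the unit simplex `Δ` with `∫_Δ θ_i dσ = 1/d` for all `i`, if and only if `h` is a convex
combination `h(x) = Σ w_i x_i` with `w_i ≥ 0`, `Σ w_i = 1`.  In other words, the linear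
Pareto-type combination tests are the unique universally calibrated homogeneous tests. -/
theorem stmt8 {d : ℕ} (hd : 0 < d) (h : (Fin d → ℝ) → ℝ)
    (hcont : ContinuousOn h {x | ∀ i, 0 ≤ x i})
    (hnonneg : ∀ x, (∀ i, 0 ≤ x i) → 0 ≤ h x)
    (hhom : ∀ lam : ℝ, 0 < lam → ∀ x : Fin d → ℝ, (∀ i, 0 ≤ x i) →
      h (lam • x) = lam * h x) :
    ((∀ σ : Measure (Fin d → ℝ), IsProbabilityMeasure σ →
        (∀ᵐ θ ∂σ, (∀ i, 0 ≤ θ i) ∧ ∑ i, θ i = 1) →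
        (∀ i : Fin d, ∫ θ, θ i ∂σ = 1 / d) →
        ∫ θ, h θ ∂σ = 1 / d)
      ↔ ∃ w : Fin d → ℝ, (∀ i, 0 ≤ w i) ∧ ∑ i, w i = 1 ∧
          ∀ x : Fin d → ℝ, (∀ i, 0 ≤ x i) → h x = ∑ i, w i * x i) := by
  have hdpos : (0:ℝ) < d := Nat.cast_pos.mpr hd
  have hdne : (d:ℝ) ≠ 0 := ne_of_gt hdpos
  constructor
  · intro H
    set e : Fin d → Fin d → ℝ := fun i => Pi.single i 1 with he
    have he_apply : ∀ i j, e i j = if j = i then 1 else 0 := by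
      intro i j; simp [he, Pi.single_apply]
    have he_nonneg : ∀ i j, 0 ≤ e i j := by
      intro i j; rw [he_apply]; split_ifs <;> norm_num
    have he_sum : ∀ i, ∑ j, e i j = 1 := by
      intro i; simp [he_apply]
    set w : Fin d → ℝ := fun i => h (e i) with hwdef
    have hw0 : ∀ i, 0 ≤ w i := fun i => hnonneg _ (he_nonneg i)
    -- step 1 : Σ w = 1, via uniform measure on the vertices
    have hw1 : ∑ i, w i = 1 := by
      have hc : ∀ _i : Fin d, (0:ℝ) ≤ (d:ℝ)⁻¹ := fun _ => by positivity
      have hcs : ∑ _i : Fin d, (d:ℝ)⁻¹ = 1 := by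
        rw [Finset.sum_const, Finset.card_univ, Fintype.card_fin, nsmul_eq_mul]
        field_simp
      have key := H (∑ i, ENNReal.ofReal ((d:ℝ)⁻¹) • Measure.dirac (e i))
        (prob_sum_dirac _ hc hcs _)
        (ae_sum_dirac _ _ _ (fun i => ⟨he_nonneg i, he_sum i⟩))
        (by
          intro i
          rw [integral_sum_dirac _ hc]
          simp only [he_apply, mul_ite, mul_one, mul_zero]
          rw [Finset.sum_ite_eq]
          simp [one_div])
      rw [integral_sum_dirac _ hc] at key
      have h2 : (d:ℝ)⁻¹ * ∑ i, w i = (d:ℝ)⁻¹ * 1 := by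
        rw [mul_one, Finset.mul_sum]
        simpa [one_div] using key
      exact mul_left_cancel₀ (inv_ne_zero hdne) h2
    -- step 2 : h = Σ w θ on the simplex
    have hsimplex : ∀ θ : Fin d → ℝ, (∀ i, 0 ≤ θ i) → ∑ i, θ i = 1 →
        h θ = ∑ i, w i * θ i := by
      intro θ hθ0 hθ1
      have hθle : ∀ i, θ i ≤ 1 := by
        intro i
        calc θ i ≤ ∑ j, θ j := Finset.single_le_sum (fun j _ => hθ0 j) (Finset.mem_univ i)
        _ = 1 := hθ1
      set c : Option (Fin d) → ℝ := fun o => o.elim ((d:ℝ)⁻¹) (fun i => (1 - θ i)/d) with hcdef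
      set a : Option (Fin d) → (Fin d → ℝ) := fun o => o.elim θ e with hadef
      have hc : ∀ o, 0 ≤ c o := by
        rintro (_ | i)
        · simp only [hcdef, Option.elim]
          positivity
        · simp only [hcdef, Option.elim]
          exact div_nonneg (by linarith [hθle i]) hdpos.le
      have hcs : ∑ o, c o = 1 := by
        rw [Fintype.sum_option]
        simp only [hcdef, Option.elim]
        rw [← Finset.sum_div, Finset.sum_sub_distrib, hθ1, Finset.sum_const,
          Finset.card_univ, Fintype.card_fin, nsmul_eq_mul, mul_one]
        field_simp
        ring
      have key := H (∑ o, ENNReal.ofReal (c o) • Measure.dirac (a o))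
        (prob_sum_dirac _ hc hcs _)
        (ae_sum_dirac _ _ _ (by
          rintro (_ | i)
          · exact ⟨hθ0, hθ1⟩
          · exact ⟨he_nonneg i, he_sum i⟩))
        (by
          intro i
          rw [integral_sum_dirac _ hc, Fintype.sum_option]
          simp only [hcdef, hadef, Option.elim, he_apply, mul_ite, mul_one, mul_zero]
          rw [Finset.sum_ite_eq]
          simp only [Finset.mem_univ, if_true]
          field_simp
          ring)
      rw [integral_sum_dirac _ hc, Fintype.sum_option] at key
      simp only [hcdef, hadef, Option.elim] at key
      have hsum2 : ∑ i, (1 - θ i)/d * h (e i) = (1 - ∑ i, w i * θ i)/d := by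
        have h1 : ∀ i ∈ Finset.univ, (1 - θ i)/(d:ℝ) * h (e i) = (w i - w i * θ i)/d := by
          intro i _
          simp only [hwdef]
          ring
        rw [Finset.sum_congr rfl h1, ← Finset.sum_div, Finset.sum_sub_distrib, hw1]
      rw [hsum2] at key
      have key2 : (d:ℝ)⁻¹ * h θ = (d:ℝ)⁻¹ * ∑ i, w i * θ i := by
        have e1 : (1 - ∑ i, w i * θ i)/(d:ℝ) = 1/d - (∑ i, w i * θ i)/d := by ring
        rw [e1] at key
        have h3 : (d:ℝ)⁻¹ * h θ = (∑ i, w i * θ i)/d := by linarith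
        rw [h3]
        ring
      exact mul_left_cancel₀ (inv_ne_zero hdne) key2
    -- step 3 : extending to the cone by homogeneity
    refine ⟨w, hw0, hw1, ?_⟩
    intro x hx
    by_cases hx0 : ∀ i, x i = 0
    · have hxz : x = 0 := funext hx0
      have h0 : h 0 = 0 := by
        have := hhom 2 (by norm_num) 0 (fun i => le_refl 0)
        rw [smul_zero] at this
        linarith [this]
      rw [hxz, h0]
      simp
    · push_neg at hx0
      obtain ⟨i0, hi0⟩ := hx0
      have hs : 0 < ∑ i, x i := by
        have : 0 < x i0 := lt_of_le_of_ne (hx i0) (Ne.symm hi0)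
        calc (0:ℝ) < x i0 := this
        _ ≤ ∑ i, x i := Finset.single_le_sum (fun j _ => hx j) (Finset.mem_univ i0)
      set s := ∑ i, x i with hsdef
      have hθspec : h ((s⁻¹) • x) = ∑ i, w i * ((s⁻¹) • x) i := by
        apply hsimplex
        · intro i; exact mul_nonneg (inv_nonneg.2 hs.le) (hx i)
        · simp only [Pi.smul_apply, smul_eq_mul, ← Finset.mul_sum, ← hsdef]
          field_simp
      have := hhom s hs ((s⁻¹) • x) (fun i => mul_nonneg (inv_nonneg.2 hs.le) (hx i))
      rw [smul_smul, mul_inv_cancel₀ (ne_of_gt hs), one_smul] at this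
      rw [this, hθspec, Finset.mul_sum]
      apply Finset.sum_congr rfl
      intro i _
      simp only [Pi.smul_apply, smul_eq_mul]
      field_simp
  · rintro ⟨w, hw0, hw1, hwl⟩ σ hprob hae hmeans
    have haeq : h =ᵐ[σ] fun θ => ∑ i, w i * θ i := hae.mono (fun θ hθ => hwl θ hθ.1)
    rw [integral_congr_ae haeq]
    have hint : ∀ i, Integrable (fun θ : Fin d → ℝ => θ i) σ := by
      intro i
      apply Integrable.mono' (integrable_const (1:ℝ))
      · exact (continuous_apply i).aestronglyMeasurable
      · filter_upwards [hae] with θ hθ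
        rw [Real.norm_eq_abs, abs_of_nonneg (hθ.1 i)]
        calc θ i ≤ ∑ j, θ j := Finset.single_le_sum (fun j _ => hθ.1 j) (Finset.mem_univ i)
        _ = 1 := hθ.2
    rw [integral_finset_sum _ (fun i _ => (hint i).const_mul (w i))]
    have : ∀ i ∈ Finset.univ, ∫ θ, w i * θ i ∂σ = w i * (1/d) := by
      intro i _
      rw [integral_const_mul, hmeans i]
    rw [Finset.sum_congr rfl this, ← Finset.sum_mul, hw1, one_mul]
end
end

section
/- Let (S, 𝒮) be a measurable space, let 𝒢 = {g_1, …, g_d} be bounded nonnegative measurable functions on S, let c > 0, and define ℳ_c(𝒢) := {finite positive measures φ on (S, 𝒮) : ∫_S g_i dφ = c for all i = 1, …, d}. Suppose there exist points x_1, …, x_d ∈ S such that the matrix G := (g_i(x_j))_{d×d} is nonsingular and the all-ones vector 𝟏 ∈ ℝ^d lies in the interior of the cone G(ℝ₊^d) = {Gz : z ∈ ℝ₊^d}. Then: (i) if h : S → ℝ₊ is a bounded nonnegative measurable function with ∫_S h dφ = c for all φ ∈ ℳ_c(𝒢), there exist λ_1, …, λ_d ∈ ℝ with Σ_{i=1}^d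 λ_i = 1 such that h(x) = Σ_{i=1}^d λ_i g_i(x) for all x ∈ S; and (ii) if moreover 𝒢 satisfies the anti-dominance condition, then λ_i ≥ 0 for all i. -/
open MeasureTheory Filter Topology

noncomputable section

/-- The anti-dominance condition for a finite family `g_1, …, g_d` of functions on `S`:
for every nonempty proper subset `ℐ ⊊ {1,…,d}` and all nonnegative coefficients `λ` with
`Σ_{i∈ℐ} λ_i > 0`, the pointwise domination `Σ_{i∈ℐ} λ_i g_i ≤ Σ_{j∈ℐᶜ} λ_j g_j` fails. -/
def AntiDominance {S : Type*} {d : ℕ} (g : Fin d → S → ℝ) : Prop :=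
  ∀ I : Finset (Fin d), I.Nonempty → I ≠ Finset.univ →
    ∀ lam : Fin d → ℝ, (∀ i, 0 ≤ lam i) → 0 < ∑ i ∈ I, lam i →
      ∃ x : S, ∑ j ∈ Iᶜ, lam j * g j x < ∑ i ∈ I, lam i * g i x

private lemma integrable_dirac'' {S : Type*} [MeasurableSpace S] {f : S → ℝ}
    (hf : Measurable f) (p : S) : Integrable f (Measure.dirac p) := by
  refine ⟨hf.stronglyMeasurable.aestronglyMeasurable, ?_⟩
  rw [HasFiniteIntegral, lintegral_dirac' _ hf.enorm]
  exact ENNReal.coe_lt_top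

/-- Theorem `t:characterization`: let `g_1,…,g_d` be bounded nonnegative
measurable functions on `S`, `c > 0`, and suppose there are points `x_1,…,x_d` making the
matrix `G = (g_i(x_j))` nonsingular with the all-ones vector in the interior of the cone
`G(ℝ₊^d)`.  (i) If a bounded nonnegative measurable `h` satisfies `∫ h dφ = c` for every
finite positive measure `φ` with `∫ g_i dφ = c` for all `i`, then `h = Σ λ_i g_i` with
`Σ λ_i = 1`; and (ii) if moreover `𝒢` satisfies the anti-dominance condition, then the
`λ_i` are nonnegative. -/
theorem stmt19 {S : Type*} [MeasurableSpace S] {d : ℕ} (g : Fin d → S → ℝ)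
    (hgmeas : ∀ i, Measurable (g i))
    (hgnonneg : ∀ i x, 0 ≤ g i x)
    (hgbdd : ∀ i, ∃ C : ℝ, ∀ x, g i x ≤ C)
    (c : ℝ) (hc : 0 < c)
    (pts : Fin d → S)
    (hGdet : (Matrix.of fun i j : Fin d => g i (pts j)).det ≠ 0)
    (hGcone : (fun _ : Fin d => (1 : ℝ)) ∈ interior
      {y : Fin d → ℝ | ∃ z : Fin d → ℝ, (∀ i, 0 ≤ z i) ∧
        y = (Matrix.of fun i j : Fin d => g i (pts j)).mulVec z})
    (h : S → ℝ) (hhmeas : Measurable h) (hhnonneg : ∀ x, 0 ≤ h x)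
    (hhbdd : ∃ C : ℝ, ∀ x, h x ≤ C)
    (hint : ∀ φ : Measure S, IsFiniteMeasure φ →
      (∀ i, ∫ x, g i x ∂φ = c) → ∫ x, h x ∂φ = c) :
    ∃ lam : Fin d → ℝ, ∑ i, lam i = 1 ∧
      (∀ x : S, h x = ∑ i, lam i * g i x) ∧
      (AntiDominance g → ∀ i, 0 ≤ lam i) := by
  classical
  rcases Nat.eq_zero_or_pos d with hd | hd
  · exfalso
    subst hd
    have h0 := hint 0 inferInstance (fun i => i.elim0)
    rw [integral_zero_measure] at h0
    exact hc.ne h0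
  -- the matrix
  set G : Matrix (Fin d) (Fin d) ℝ := Matrix.of fun i j : Fin d => g i (pts j) with hGdef
  have hdetT : IsUnit (G.transpose).det := by
    rw [Matrix.det_transpose]; exact isUnit_iff_ne_zero.mpr hGdet
  set lam : Fin d → ℝ := ((G.transpose)⁻¹).mulVec (fun j => h (pts j)) with hlamdef
  have hlam_eq : ∀ j, ∑ i, lam i * g i (pts j) = h (pts j) := by
    have hmv : (G.transpose).mulVec lam = fun j => h (pts j) := by
      rw [hlamdef, Matrix.mulVec_mulVec, Matrix.mul_nonsing_inv _ hdetT, Matrix.one_mulVec]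
    intro j
    have := congrFun hmv j
    simp only [Matrix.mulVec, dotProduct, Matrix.transpose_apply, hGdef,
      Matrix.of_apply] at this
    rw [← this]
    exact Finset.sum_congr rfl fun i _ => mul_comm _ _
  -- key consequence of the integral condition
  have keyA : ∀ (w : Fin d → ℝ), (∀ j, 0 ≤ w j) → ∀ (a : ℝ), 0 ≤ a → ∀ x : S,
      (∀ i, (∑ j, w j * g i (pts j)) + a * g i x = 1) →
      (∑ j, w j * h (pts j)) + a * h x = 1 := by
    intro w hw a ha x hwx
    set φ : Measure S := (∑ j, ENNReal.ofReal (c * w j) • Measure.dirac (pts j))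
        + ENNReal.ofReal (c * a) • Measure.dirac x with hφ
    haveI hφfin : IsFiniteMeasure φ := by
      constructor
      rw [hφ]
      simp only [Measure.add_apply, Measure.smul_apply, Measure.finset_sum_apply,
        Measure.dirac_apply_of_mem (Set.mem_univ _), smul_eq_mul, mul_one]
      exact ENNReal.add_lt_top.mpr ⟨ENNReal.sum_lt_top.mpr fun j _ => ENNReal.ofReal_lt_top,
        ENNReal.ofReal_lt_top⟩
    have heval : ∀ (f : S → ℝ), Measurable f →
        ∫ y, f y ∂φ = c * ((∑ j, w j * f (pts j)) + a * f x) := by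
      intro f hf
      have hint1 : ∀ (r : ℝ) (p : S), Integrable f (ENNReal.ofReal r • Measure.dirac p) :=
        fun r p => (integrable_dirac'' hf p).smul_measure ENNReal.ofReal_ne_top
      have hintsum : Integrable f (∑ j, ENNReal.ofReal (c * w j) • Measure.dirac (pts j)) :=
        integrable_finset_sum_measure.mpr fun j _ => hint1 _ _
      rw [hφ, integral_add_measure hintsum (hint1 _ _), integral_finset_sum_measure
        (fun j _ => hint1 _ _)]
      have hd1 : ∀ p : S, ∫ y, f y ∂(Measure.dirac p) = f p :=
        fun p => integral_dirac' f p hf.stronglyMeasurable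
      simp only [integral_smul_measure, hd1, smul_eq_mul]
      rw [ENNReal.toReal_ofReal (mul_nonneg hc.le ha)]
      have : ∀ j, (ENNReal.ofReal (c * w j)).toReal = c * w j :=
        fun j => ENNReal.toReal_ofReal (mul_nonneg hc.le (hw j))
      simp only [this]
      rw [mul_add, Finset.mul_sum]
      congr 1
      · exact Finset.sum_congr rfl fun j _ => by ring
      · ring
    have hgint : ∀ i, ∫ y, g i y ∂φ = c := by
      intro i; rw [heval _ (hgmeas i), hwx i, mul_one]
    have hhc := hint φ hφfin hgint
    rw [heval _ hhmeas] at hhc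
    exact mul_left_cancel₀ hc.ne' (hhc.trans (mul_one c).symm)
  -- a sum-swapping identity
  have swap : ∀ (z : Fin d → ℝ),
      (∑ j, z j * h (pts j)) = ∑ i, lam i * ∑ j, z j * g i (pts j) := by
    intro z
    calc ∑ j, z j * h (pts j) = ∑ j, ∑ i, lam i * (z j * g i (pts j)) := by
          refine Finset.sum_congr rfl fun j _ => ?_
          rw [← hlam_eq j, Finset.mul_sum]
          exact Finset.sum_congr rfl fun i _ => by ring
      _ = ∑ i, ∑ j, lam i * (z j * g i (pts j)) := Finset.sum_comm
      _ = ∑ i, lam i * ∑ j, z j * g i (pts j) := by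
          refine Finset.sum_congr rfl fun i _ => ?_
          rw [Finset.mul_sum]
  -- a point of S
  set x0 : S := pts ⟨0, hd⟩ with hx0
  -- extracting coefficients from cone membership
  have coneCoef : ∀ (y : Fin d → ℝ) (z : Fin d → ℝ), y = G.mulVec z →
      ∀ i, ∑ j, z j * g i (pts j) = y i := by
    intro y z hz i
    have := congrFun hz i
    simp only [Matrix.mulVec, dotProduct, hGdef, Matrix.of_apply] at this
    rw [this]
    exact Finset.sum_congr rfl fun j _ => mul_comm _ _
  -- sum of lam equals 1
  obtain ⟨z0, hz0nn, hz0⟩ := interior_subset hGcone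
  have hz0eq : ∀ i, ∑ j, z0 j * g i (pts j) = 1 := fun i => coneCoef _ _ hz0 i
  have H0 := keyA z0 hz0nn 0 le_rfl x0 (fun i => by rw [hz0eq i]; ring)
  rw [swap z0] at H0
  have hsum1 : ∑ i, lam i = 1 := by
    rw [← H0]
    simp only [hz0eq, mul_one, zero_mul, add_zero]
  -- pointwise identity
  have hpt : ∀ x : S, h x = ∑ i, lam i * g i x := by
    intro x
    have htend : Tendsto (fun t : ℝ => fun i => 1 - t * g i x) (𝓝[>] 0)
        (𝓝 (fun _ : Fin d => (1 : ℝ))) := by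
      apply Tendsto.mono_left _ nhdsWithin_le_nhds
      rw [tendsto_pi_nhds]
      intro i
      have hcont : Continuous fun t : ℝ => 1 - t * g i x := by continuity
      simpa using hcont.tendsto 0
    have hCmem := mem_interior_iff_mem_nhds.mp hGcone
    have hev : ∀ᶠ t in 𝓝[>] (0:ℝ), (fun i => 1 - t * g i x) ∈
        {y : Fin d → ℝ | ∃ z : Fin d → ℝ, (∀ i, 0 ≤ z i) ∧ y = G.mulVec z} := htend hCmem
    obtain ⟨t, htmem, ht0⟩ := (hev.and self_mem_nhdsWithin).exists
    obtain ⟨z, hznn, hzeq⟩ := htmem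
    have hzx : ∀ i, ∑ j, z j * g i (pts j) = 1 - t * g i x := fun i => coneCoef _ _ hzeq i
    have H := keyA z hznn t (le_of_lt ht0) x (fun i => by rw [hzx i]; ring)
    rw [swap z] at H
    simp only [hzx] at H
    have expand : ∑ i, lam i * (1 - t * g i x)
        = (∑ i, lam i) - t * ∑ i, lam i * g i x := by
      rw [Finset.mul_sum, ← Finset.sum_sub_distrib]
      exact Finset.sum_congr rfl fun i _ => by ring
    rw [expand, hsum1] at H
    have : t * h x = t * ∑ i, lam i * g i x := by linarith
    exact mul_left_cancel₀ (ne_of_gt ht0) this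
  refine ⟨lam, hsum1, hpt, ?_⟩
  -- part (ii)
  intro hAD i0
  by_contra hneg
  push_neg at hneg
  set I : Finset (Fin d) := Finset.univ.filter fun i => lam i < 0 with hIdef
  have hIne : I.Nonempty := ⟨i0, by simp [hIdef, hneg]⟩
  have hInu : I ≠ Finset.univ := by
    intro hI'
    have hall : ∀ i ∈ Finset.univ, lam i < 0 := fun i _ => by
      have hiI : i ∈ I := hI'.symm ▸ Finset.mem_univ i
      simpa [hIdef] using hiI
    have : ∑ i, lam i < 0 :=
      Finset.sum_neg hall ⟨⟨0, hd⟩, Finset.mem_univ _⟩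
    linarith [hsum1]
  have hpos : 0 < ∑ i ∈ I, |lam i| := by
    refine Finset.sum_pos (fun i hi => ?_) hIne
    have : lam i < 0 := by simpa [hIdef] using hi
    exact abs_pos.mpr this.ne
  obtain ⟨x, hx⟩ := hAD I hIne hInu (fun i => |lam i|) (fun i => abs_nonneg _) hpos
  have h0 : 0 ≤ ∑ i, lam i * g i x := (hpt x) ▸ hhnonneg x
  have e1 : ∑ i ∈ I, lam i * g i x = -∑ i ∈ I, |lam i| * g i x := by
    rw [← Finset.sum_neg_distrib]
    refine Finset.sum_congr rfl fun i hi => ?_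
    have : lam i < 0 := by simpa [hIdef] using hi
    rw [abs_of_neg this]; ring
  have e2 : ∑ i ∈ Iᶜ, lam i * g i x = ∑ i ∈ Iᶜ, |lam i| * g i x := by
    refine Finset.sum_congr rfl fun i hi => ?_
    have : ¬ lam i < 0 := by simpa [hIdef] using Finset.mem_compl.mp hi
    rw [abs_of_nonneg (not_lt.mp this)]
  have hsplit := Finset.sum_add_sum_compl I (fun i => lam i * g i x)
  rw [e1, e2] at hsplit
  rw [← hsplit] at h0
  linarith
end
end
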